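/- arXiv:math/0212244 — 9 statements merged into one kernel-verified Lean document; each statement's English description precedes it below -/
import Mathlib

section
/- Let n ≥ 2 and let f, g : Fin (n+1) → EuclideanSpace ℝ (Fin (n+1)) be two linearly independent families of unit vectors whose inner-product patterns are both a cycle: for all i ≠ j, ⟪f i, f j⟫ ≠ 0 if and only if j = i + 1 or i = j + 1 (mod n+1), and the same for g. Suppose moreover that |⟪f i, f j⟫| = |⟪g i, g j⟫| for all i, j, and that every nonzero value |⟪f i, f j⟫| (i ≠ j) lies in {1/2, √2/2}. Then there exists a sign function ε : Fin (n+1) → {−1, 1} such that ⟪g i, g j⟫ = ε i · ε j · ⟪f i, f j⟫ for all i, j; in particular the two families of simplices determined by the hyperplanes orthogonal to the f i and to the g i coincide up to a linear isometry. -/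
open scoped RealInnerProductSpace

lemma fin1ne' {n : ℕ} (hn : 2 ≤ n) : (1 : Fin (n+1)) ≠ 0 := by
  intro h
  have := congrArg Fin.val h
  rw [Fin.val_one', Nat.mod_eq_of_lt (by omega : 1 < n+1)] at this
  simp at this

lemma finsucc' {n : ℕ} (hn : 2 ≤ n) (i : Fin (n+1)) : i ≠ i + 1 := by
  intro h
  exact fin1ne' hn (left_eq_add.mp h)

lemma sign_pm' {e : ℝ} (he : e ≠ 0) : e / |e| = 1 ∨ e / |e| = -1 := by
  rcases he.lt_or_gt with h | h
  · right; rw [abs_of_neg h]; field_simp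
  · left; rw [abs_of_pos h]; field_simp

open Fin.NatCast Fin.CommRing in
lemma no_bad {n : ℕ} (hn : 2 ≤ n)
    (h : Fin (n + 1) → EuclideanSpace ℝ (Fin (n + 1)))
    (hli : LinearIndependent ℝ h)
    (hunit : ∀ i, ‖h i‖ = 1)
    (hcyc : ∀ i j, i ≠ j → (⟪h i, h j⟫ ≠ 0 ↔ (j = i + 1 ∨ i = j + 1)))
    (hbound : ∀ i, (1:ℝ)/2 ≤ |⟪h i, h (i+1)⟫|) :
    (∏ k : Fin (n+1), (⟪h k, h (k+1)⟫ / |⟪h k, h (k+1)⟫|)) ≠ (-1 : ℝ)^(n+1) := by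
  intro hbad
  set e : Fin (n+1) → ℝ := fun k => ⟪h k, h (k+1)⟫ with he_def
  set s : Fin (n+1) → ℝ := fun k => e k / |e k| with hs_def
  have he0 : ∀ k, e k ≠ 0 := fun k =>
    (hcyc k (k+1) (finsucc' hn k)).mpr (Or.inl rfl)
  have hs : ∀ k, s k = 1 ∨ s k = -1 := fun k => sign_pm' (he0 k)
  have hse : ∀ k, e k = s k * |e k| := fun k =>
    (div_mul_cancel₀ (e k) (abs_ne_zero.mpr (he0 k))).symm
  have hsemul : ∀ k, s k * e k = |e k| := by
    intro k
    show e k / |e k| * e k = |e k|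
    rw [div_mul_eq_mul_div, ← abs_mul_abs_self, mul_div_assoc,
      div_self (abs_ne_zero.mpr (he0 k)), mul_one]
  set x : Fin (n+1) → ℝ :=
    fun i => (-1:ℝ)^(i.val) * ∏ k ∈ Finset.range i.val, s (k : Fin (n+1)) with hx_def
  have hx : ∀ i, x i = 1 ∨ x i = -1 := by
    intro i
    have hp : (∏ k ∈ Finset.range i.val, s (k : Fin (n+1))) = 1 ∨
        (∏ k ∈ Finset.range i.val, s (k : Fin (n+1))) = -1 := by
      refine Finset.prod_induction _ (fun r => r = 1 ∨ r = -1) ?_ (Or.inl rfl) ?_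
      · rintro a b (ha | ha) (hb | hb) <;> rw [ha, hb] <;> norm_num
      · intro k _; exact hs _
    have hpow : ((-1:ℝ)^(i.val) = 1 ∨ (-1:ℝ)^(i.val) = -1) := by
      rcases Nat.even_or_odd i.val with hp | hp
      · exact Or.inl (Even.neg_one_pow hp)
      · exact Or.inr (Odd.neg_one_pow hp)
    have hxv : x i = (-1:ℝ)^(i.val) * ∏ k ∈ Finset.range i.val, s (k : Fin (n+1)) := rfl
    rcases hpow with h1 | h1 <;> rcases hp with h2 | h2 <;>
      rw [hxv, h1, h2] <;> norm_num
  have hxsq : ∀ i, x i * x i = 1 := by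
    intro i; rcases hx i with h1 | h1 <;> rw [h1] <;> norm_num
  have hx0 : x 0 = 1 := by
    have : x 0 = (-1:ℝ)^((0 : Fin (n+1)).val) * ∏ k ∈ Finset.range (0 : Fin (n+1)).val, s (k : Fin (n+1)) := rfl
    simp at this; exact this
  have hedge : ∀ i : Fin (n+1), x i * x (i+1) * e i = -|e i| := by
    intro i
    rcases lt_or_eq_of_le (Nat.lt_succ_iff.mp i.isLt) with hlt | heq
    · have hv : (i+1).val = i.val + 1 := Fin.val_add_one_of_lt hlt
      have hxstep : x (i+1) = -(x i * s i) := by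
        have h1 : x (i+1) = (-1:ℝ)^((i+1).val) * ∏ k ∈ Finset.range (i+1).val, s (k : Fin (n+1)) := rfl
        rw [h1, hv, Finset.prod_range_succ, pow_succ, Fin.cast_val_eq_self]
        show (-1:ℝ)^(i.val) * -1 * ((∏ k ∈ Finset.range i.val, s (k : Fin (n+1))) * s i) = -(x i * s i)
        rw [hx_def]; ring
      rw [hxstep]
      linear_combination (-(s i * e i)) * hxsq i - hsemul i
    · have hilast : i = Fin.last n := by ext; simpa using heq
      subst hilast
      have h10 : Fin.last n + 1 = 0 := Fin.last_add_one n
      have hcast : ((n : ℕ) : Fin (n+1)) = Fin.last n := by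
        ext; simp [Fin.val_cast_of_lt (Nat.lt_succ_self n)]
      have hprodconv : (∏ k ∈ Finset.range (n+1), s (k : Fin (n+1))) = (-1:ℝ)^(n+1) := by
        rw [← Fin.prod_univ_eq_prod_range (fun k => s (k : Fin (n+1)))]
        simpa [Fin.cast_val_eq_self] using hbad
      have hsplit : (∏ k ∈ Finset.range n, s (k : Fin (n+1))) * s (Fin.last n) = (-1:ℝ)^(n+1) := by
        rw [← hcast, ← Finset.prod_range_succ, hprodconv]
      have hkey : (-1:ℝ)^n * ((∏ k ∈ Finset.range n, s (k : Fin (n+1))) * s (Fin.last n)) = -1 := by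
        rw [hsplit, ← pow_add]
        exact Odd.neg_one_pow ⟨n, by ring⟩
      have hxl : x (Fin.last n) = (-1:ℝ)^n * ∏ k ∈ Finset.range n, s (k : Fin (n+1)) := by
        have : x (Fin.last n) = (-1:ℝ)^((Fin.last n).val) * ∏ k ∈ Finset.range (Fin.last n).val, s (k : Fin (n+1)) := rfl
        rwa [Fin.val_last] at this
      rw [h10, hx0, hxl]
      have hK : ((-1:ℝ)^n * ∏ k ∈ Finset.range n, s (k : Fin (n+1))) * s (Fin.last n) = -1 := by
        linear_combination hkey
      have hm := hsemul (Fin.last n)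
      rcases hs (Fin.last n) with hsl | hsl
      · rw [hsl] at hK hm; linear_combination e (Fin.last n) * hK - hm
      · rw [hsl] at hK hm; linear_combination (-(e (Fin.last n))) * hK - hm
  -- more Fin facts
  have fin2ne : (2 : Fin (n+1)) ≠ 0 := by
    intro h0
    have h2 : ((2 : ℕ) : Fin (n+1)) = (2 : Fin (n+1)) := by norm_cast
    have := congrArg Fin.val (h2.trans h0)
    rw [Fin.val_cast_of_lt (by omega : 2 < n+1)] at this
    simp at this
  have dsub : ∀ i : Fin (n+1), i - 1 ≠ i + 1 := by
    intro i hh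
    apply fin2ne
    have h2 : i + 1 - (i - 1) = 2 := by ring
    rw [← h2, ← hh]; ring
  have dsub' : ∀ i : Fin (n+1), i - 1 ≠ i := by
    intro i hh
    apply fin1ne' hn
    have h1 : i - (i - 1) = 1 := by ring
    rw [← h1, hh]; ring
  have hsub1 : ∀ i : Fin (n+1), i - 1 + 1 = i := fun i => by ring
  -- the vector
  set v := ∑ i, x i • h i with hv_def
  have hvne : v ≠ 0 := by
    intro h0
    have := Fintype.linearIndependent_iff.mp hli x (hv_def ▸ h0) 0
    rw [hx0] at this
    norm_num at this
  have hQpos : 0 < ⟪v, v⟫ := by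
    rw [real_inner_self_eq_norm_mul_norm]
    exact mul_pos (norm_pos_iff.mpr hvne) (norm_pos_iff.mpr hvne)
  have hQ : ⟪v, v⟫ = ∑ i, ∑ j, x i * x j * ⟪h i, h j⟫ := by
    rw [hv_def, sum_inner]
    refine Finset.sum_congr rfl fun i _ => ?_
    rw [inner_sum]
    refine Finset.sum_congr rfl fun j _ => ?_
    rw [real_inner_smul_left, real_inner_smul_right]; ring
  have hrow : ∀ i : Fin (n+1), (∑ j, x i * x j * ⟪h i, h j⟫)
      = x (i-1) * x (i-1+1) * e (i-1) + 1 + x i * x (i+1) * e i := by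
    intro i
    have hzero : ∀ j ∈ (Finset.univ : Finset (Fin (n+1))),
        j ∉ ({i-1, i, i+1} : Finset (Fin (n+1))) → x i * x j * ⟪h i, h j⟫ = 0 := by
      intro j _ hj
      simp only [Finset.mem_insert, Finset.mem_singleton, not_or] at hj
      have hz : ⟪h i, h j⟫ = 0 := by
        by_contra hne
        rcases (hcyc i j (Ne.symm hj.2.1)).mp hne with h' | h'
        · exact hj.2.2 h'
        · exact hj.1 (eq_sub_of_add_eq h'.symm)
      rw [hz]; ring
    rw [← Finset.sum_subset (Finset.subset_univ ({i-1, i, i+1} : Finset (Fin (n+1)))) hzero]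
    rw [Finset.sum_insert (by simp [dsub' i, dsub i]),
      Finset.sum_insert (by simp [finsucc' hn i]), Finset.sum_singleton]
    have hself : ⟪h i, h i⟫ = 1 := by
      rw [real_inner_self_eq_norm_mul_norm, hunit]; ring
    have he1 : e (i-1) = ⟪h i, h (i-1)⟫ := by
      show ⟪h (i-1), h (i-1+1)⟫ = _
      rw [hsub1 i, real_inner_comm]
    have he2 : e i = ⟪h i, h (i+1)⟫ := rfl
    rw [hself, he1, he2, hsub1 i]
    linear_combination hxsq i
  have hQ2 : ⟪v, v⟫ = ∑ i : Fin (n+1),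
      (x (i-1) * x (i-1+1) * e (i-1) + 1 + x i * x (i+1) * e i) := by
    rw [hQ]; exact Finset.sum_congr rfl fun i _ => hrow i
  have hshift : ∑ i : Fin (n+1), x (i-1) * x (i-1+1) * e (i-1)
      = ∑ i : Fin (n+1), x i * x (i+1) * e i :=
    Fintype.sum_equiv (Equiv.subRight (1 : Fin (n+1))) _ _ (fun i => rfl)
  have hbound' : ∀ i : Fin (n+1), x i * x (i+1) * e i ≤ -(1/2 : ℝ) := by
    intro i
    rw [hedge i]
    linarith [hbound i]
  have hsumle : ∑ i : Fin (n+1), x i * x (i+1) * e i ≤ (n+1 : ℝ) * (-(1/2)) := by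
    calc ∑ i : Fin (n+1), x i * x (i+1) * e i ≤ ∑ _i : Fin (n+1), (-(1/2 : ℝ)) :=
          Finset.sum_le_sum fun i _ => hbound' i
      _ = (n+1 : ℝ) * (-(1/2)) := by
          rw [Finset.sum_const, Finset.card_univ, Fintype.card_fin, nsmul_eq_mul]
          push_cast; ring
  have hone : ∑ _i : Fin (n+1), (1:ℝ) = (n+1 : ℝ) := by
    rw [Finset.sum_const, Finset.card_univ, Fintype.card_fin, nsmul_eq_mul]
    push_cast; ring
  have hle : ⟪v, v⟫ ≤ 0 := by
    rw [hQ2, Finset.sum_add_distrib, Finset.sum_add_distrib, hshift, hone]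
    linarith [hsumle]
  linarith [hQpos, hle]

open Fin.NatCast in
/-- A spherical family diagram which is a cycle determines at most one family of
spherical simplices: two cyclic systems of unit normals with the same unsigned
Gram matrix (entries `1/2` or `√2/2`) agree up to signs. -/
theorem cycle_diagram_unique_family {n : ℕ} (hn : 2 ≤ n)
    (f g : Fin (n + 1) → EuclideanSpace ℝ (Fin (n + 1)))
    (hf_li : LinearIndependent ℝ f) (hg_li : LinearIndependent ℝ g)
    (hf_unit : ∀ i, ‖f i‖ = 1) (hg_unit : ∀ i, ‖g i‖ = 1)
    (hf_cyc : ∀ i j, i ≠ j → (⟪f i, f j⟫ ≠ 0 ↔ (j = i + 1 ∨ i = j + 1)))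
    (hg_cyc : ∀ i j, i ≠ j → (⟪g i, g j⟫ ≠ 0 ↔ (j = i + 1 ∨ i = j + 1)))
    (habs : ∀ i j, |⟪f i, f j⟫| = |⟪g i, g j⟫|)
    (hval : ∀ i j, i ≠ j → ⟪f i, f j⟫ ≠ 0 →
      |⟪f i, f j⟫| ∈ ({1 / 2, Real.sqrt 2 / 2} : Set ℝ)) :
    ∃ ε : Fin (n + 1) → ℝ, (∀ i, ε i = 1 ∨ ε i = -1) ∧
      ∀ i j, ⟪g i, g j⟫ = ε i * ε j * ⟪f i, f j⟫ := by
  set c : Fin (n+1) → ℝ := fun i => ⟪f i, f (i+1)⟫ with hc_def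
  set d : Fin (n+1) → ℝ := fun i => ⟪g i, g (i+1)⟫ with hd_def
  have hc0 : ∀ i, c i ≠ 0 := fun i => (hf_cyc i (i+1) (finsucc' hn i)).mpr (Or.inl rfl)
  have habs' : ∀ i, |c i| = |d i| := fun i => habs i (i+1)
  have hd0 : ∀ i, d i ≠ 0 := fun i => by
    intro h0
    exact hc0 i (abs_eq_zero.mp (by rw [habs' i, h0, abs_zero]))
  -- edge bound 1/2 ≤ |c i|
  have hbf : ∀ i, (1:ℝ)/2 ≤ |c i| := by
    intro i
    rcases hval i (i+1) (finsucc' hn i) (hc0 i) with h | h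
    · rw [h]
    · rw [h]
      have h2 : (1:ℝ) ≤ Real.sqrt 2 := by
        rw [← Real.sqrt_one]
        exact Real.sqrt_le_sqrt (by norm_num)
      linarith
  have hbg : ∀ i, (1:ℝ)/2 ≤ |d i| := fun i => (habs' i) ▸ hbf i
  -- the per-edge sign ratio
  set t : Fin (n+1) → ℝ := fun i => d i / c i with ht_def
  have ht : ∀ i, t i = 1 ∨ t i = -1 := by
    intro i
    rcases abs_eq_abs.mp (habs' i) with h | h
    · left
      show d i / c i = 1
      rw [h, div_self (hd0 i)]
    · right
      show d i / c i = -1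
      rw [h, div_neg, div_self (hd0 i)]
  have htc : ∀ i, t i * c i = d i := fun i => div_mul_cancel₀ (d i) (hc0 i)
  -- the global sign coherence: ∏ t = 1
  have hBf := no_bad hn f hf_li hf_unit hf_cyc hbf
  have hBg := no_bad hn g hg_li hg_unit hg_cyc hbg
  have hprod : ∏ i : Fin (n+1), t i = 1 := by
    have hsplit : ∀ i : Fin (n+1), d i / |d i| = t i * (c i / |c i|) := by
      intro i
      rw [← habs' i]
      show d i / |c i| = d i / c i * (c i / |c i|)
      rw [div_mul_div_comm, div_eq_div_iff (abs_ne_zero.mpr (hc0 i))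
        (mul_ne_zero (hc0 i) (abs_ne_zero.mpr (hc0 i)))]
      ring
    have hgprod : (∏ i : Fin (n+1), d i / |d i|)
        = (∏ i : Fin (n+1), t i) * ∏ i : Fin (n+1), c i / |c i| := by
      rw [← Finset.prod_mul_distrib]
      exact Finset.prod_congr rfl fun i _ => hsplit i
    have hsf : (∏ i : Fin (n+1), c i / |c i|) = 1 ∨ (∏ i : Fin (n+1), c i / |c i|) = -1 := by
      refine Finset.prod_induction _ (fun r => r = 1 ∨ r = -1) ?_ (Or.inl rfl) ?_
      · rintro a b (ha | ha) (hb | hb) <;> rw [ha, hb] <;> norm_num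
      · intro k _; exact sign_pm' (hc0 k)
    have hB : ((-1:ℝ)^(n+1) = 1 ∨ (-1:ℝ)^(n+1) = -1) := by
      rcases Nat.even_or_odd (n+1) with hp | hp
      · exact Or.inl (Even.neg_one_pow hp)
      · exact Or.inr (Odd.neg_one_pow hp)
    have hT : (∏ i : Fin (n+1), t i) = 1 ∨ (∏ i : Fin (n+1), t i) = -1 := by
      refine Finset.prod_induction _ (fun r => r = 1 ∨ r = -1) ?_ (Or.inl rfl) ?_
      · rintro a b (ha | ha) (hb | hb) <;> rw [ha, hb] <;> norm_num
      · intro k _; exact ht k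
    rcases hT with hT1 | hT1
    · exact hT1
    · exfalso
      rw [hT1] at hgprod
      rcases hsf with hs1 | hs1 <;> rw [hs1] at hgprod hBf <;>
        rcases hB with hb1 | hb1 <;> rw [hb1] at hBf hBg <;>
        rw [hgprod] at hBg <;> norm_num at *
  -- define ε
  set ε : Fin (n+1) → ℝ := fun i => ∏ k ∈ Finset.range i.val, t (k : Fin (n+1)) with hε_def
  have hε : ∀ i, ε i = 1 ∨ ε i = -1 := by
    intro i
    refine Finset.prod_induction _ (fun r => r = 1 ∨ r = -1) ?_ (Or.inl rfl) ?_
    · rintro a b (ha | ha) (hb | hb) <;> rw [ha, hb] <;> norm_num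
    · intro k _; exact ht _
  have hεsq : ∀ i, ε i * ε i = 1 := by
    intro i; rcases hε i with h1 | h1 <;> rw [h1] <;> norm_num
  have hε0 : ε 0 = 1 := by
    show (∏ k ∈ Finset.range (0 : Fin (n+1)).val, t (k : Fin (n+1))) = 1
    simp
  -- the edge identity
  have hedge : ∀ i : Fin (n+1), d i = ε i * ε (i+1) * c i := by
    intro i
    rcases lt_or_eq_of_le (Nat.lt_succ_iff.mp i.isLt) with hlt | heq
    · have hv : (i+1).val = i.val + 1 := Fin.val_add_one_of_lt hlt
      have hstep : ε (i+1) = ε i * t i := by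
        show (∏ k ∈ Finset.range (i+1).val, t (k : Fin (n+1))) = _
        rw [hv, Finset.prod_range_succ, Fin.cast_val_eq_self]
      rw [hstep, ← htc i]
      rcases hε i with h1 | h1 <;> rw [h1] <;> ring
    · have hilast : i = Fin.last n := by ext; simpa using heq
      subst hilast
      rw [Fin.last_add_one, hε0]
      have hcast : ((n : ℕ) : Fin (n+1)) = Fin.last n := by
        ext; simp [Fin.val_cast_of_lt (Nat.lt_succ_self n)]
      have hprodconv : (∏ k ∈ Finset.range (n+1), t (k : Fin (n+1))) = 1 := by
        rw [← Fin.prod_univ_eq_prod_range (fun k => t (k : Fin (n+1)))]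
        simpa [Fin.cast_val_eq_self] using hprod
      have hεl : ε (Fin.last n) = ∏ k ∈ Finset.range n, t (k : Fin (n+1)) := by
        show (∏ k ∈ Finset.range (Fin.last n).val, t (k : Fin (n+1))) = _
        rw [Fin.val_last]
      have hsplit2 : ε (Fin.last n) * t (Fin.last n) = 1 := by
        rw [hεl, ← hcast, ← Finset.prod_range_succ, hprodconv]
      have htl : t (Fin.last n) = ε (Fin.last n) := by
        rcases hε (Fin.last n) with h1 | h1 <;> rcases ht (Fin.last n) with h2 | h2 <;>
          rw [h1, h2] at hsplit2 ⊢ <;> norm_num at hsplit2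
      rw [← htc (Fin.last n), htl]
      ring
  -- conclude
  refine ⟨ε, hε, ?_⟩
  intro i j
  by_cases hij : i = j
  · subst hij
    have hfs : ⟪f i, f i⟫ = 1 := by rw [real_inner_self_eq_norm_mul_norm, hf_unit]; ring
    have hgs : ⟪g i, g i⟫ = 1 := by rw [real_inner_self_eq_norm_mul_norm, hg_unit]; ring
    rw [hfs, hgs, mul_one, hεsq i]
  · by_cases hadj : j = i + 1 ∨ i = j + 1
    · rcases hadj with h1 | h1
      · subst h1
        exact hedge i
      · subst h1
        have h2 : ⟪g (j+1), g j⟫ = ⟪g j, g (j+1)⟫ := real_inner_comm _ _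
        have h3 : ⟪f (j+1), f j⟫ = ⟪f j, f (j+1)⟫ := real_inner_comm _ _
        rw [h2, h3]
        have := hedge j
        show d j = ε (j+1) * ε j * c j
        rw [this]; ring
    · push_neg at hadj
      have hfz : ⟪f i, f j⟫ = 0 := by
        by_contra hne
        rcases (hf_cyc i j hij).mp hne with h' | h'
        · exact hadj.1 h'
        · exact hadj.2 h'
      have hgz : ⟪g i, g j⟫ = 0 := by
        by_contra hne
        rcases (hg_cyc i j hij).mp hne with h' | h'
        · exact hadj.1 h'
        · exact hadj.2 h'
      rw [hfz, hgz, mul_zero]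
end

section
/- Let f, g, h : Fin 4 → EuclideanSpace ℝ (Fin 4) be three linearly independent families of unit vectors such that: (1) for all i ≠ j, |⟪f i, f j⟫| = |⟪g i, g j⟫| = |⟪h i, h j⟫| and |⟪f i, f j⟫| ∈ {0, 1/2, (1+√5)/4, (√5−1)/4}; (2) for each of the three families, the subgroup of linear isometries of EuclideanSpace ℝ (Fin 4) generated by the reflections in its four vectors is finite; (3) the graph on Fin 4 in which i and j are adjacent iff i ≠ j and ⟪f i, f j⟫ ≠ 0 is a cycle on 4 vertices. Then at least two of the three families are sign-equivalent: there exist two of them, say u and w, and a sign function ε : Fin 4 → {−1, 1} with ⟪w i, w j⟫ = ε i · ε j · ⟪u i, u j⟫ for all i, j. (Equivalently, a cyclic family diagram on 4 vertices corresponds to at most two families of spherical simplices generating a finite reflection group.) -/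
open scoped RealInnerProductSpace

/-- The graph whose vertices are the members of the family `f`, two of them being
adjacent iff they are not orthogonal. -/
def gramGraph {E : Type*} [NormedAddCommGroup E] [InnerProductSpace ℝ E]
    {ι : Type*} (f : ι → E) : SimpleGraph ι where
  Adj i j := i ≠ j ∧ ⟪f i, f j⟫ ≠ 0
  symm := by
    constructor
    intro i j h
    exact ⟨h.1.symm, by rw [real_inner_comm]; exact h.2⟩
  loopless := ⟨fun i h => h.1 rfl⟩

/-- The reflection in the hyperplane orthogonal to a vector `v`. -/
noncomputable def reflIn {m : ℕ} (v : EuclideanSpace ℝ (Fin m)) :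
    EuclideanSpace ℝ (Fin m) ≃ₗᵢ[ℝ] EuclideanSpace ℝ (Fin m) :=
  Submodule.reflection (ℝ ∙ v)ᗮ

/-- Two families of unit normals are sign-equivalent if their Gram matrices agree
after multiplying each vector by a sign. -/
def SignEquiv {d m : ℕ} (u w : Fin d → EuclideanSpace ℝ (Fin m)) : Prop :=
  ∃ ε : Fin d → ℝ, (∀ i, ε i = 1 ∨ ε i = -1) ∧
    ∀ i j, ⟪w i, w j⟫ = ε i * ε j * ⟪u i, u j⟫


lemma key_sign {u w : Fin 4 → EuclideanSpace ℝ (Fin 4)} (v : Fin 4 ≃ Fin 4)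
    (hu : ∀ i, ‖u i‖ = 1) (hw : ∀ i, ‖w i‖ = 1)
    (habs : ∀ i j, i ≠ j → |⟪u i, u j⟫| = |⟪w i, w j⟫|)
    (hzero : ∀ p q : Fin 4, p ≠ q → ¬(q = p + 1 ∨ p = q + 1) → ⟪u (v p), u (v q)⟫ = 0)
    (hne : ∀ k : Fin 4, ⟪u (v k), u (v (k + 1))⟫ ≠ 0)
    (hsign : 0 < (∏ k : Fin 4, ⟪u (v k), u (v (k + 1))⟫) *
        ∏ k : Fin 4, ⟪w (v k), w (v (k + 1))⟫) :
    ∃ ε : Fin 4 → ℝ, (∀ i, ε i = 1 ∨ ε i = -1) ∧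
      ∀ i j, ⟪w i, w j⟫ = ε i * ε j * ⟪u i, u j⟫ := by
  have hstep : ∀ k : Fin 4, ∃ s : ℝ, (s = 1 ∨ s = -1) ∧
      ⟪w (v k), w (v (k + 1))⟫ = s * ⟪u (v k), u (v (k + 1))⟫ := by
    intro k
    have hk : v k ≠ v (k + 1) := v.injective.ne (by fin_cases k <;> decide)
    rcases abs_eq_abs.mp (habs (v k) (v (k + 1)) hk) with h | h
    · exact ⟨1, Or.inl rfl, by rw [h.symm]; ring⟩
    · exact ⟨-1, Or.inr rfl, by rw [h]; ring⟩
  choose σ hσpm hσ using hstep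
  have hσsq : ∀ k, σ k * σ k = 1 := by
    intro k; rcases hσpm k with h | h <;> rw [h] <;> norm_num
  have hPw : (∏ k : Fin 4, ⟪w (v k), w (v (k + 1))⟫)
      = (σ 0 * σ 1 * σ 2 * σ 3) * ∏ k : Fin 4, ⟪u (v k), u (v (k + 1))⟫ := by
    rw [Fin.prod_univ_four, Fin.prod_univ_four, hσ 0, hσ 1, hσ 2, hσ 3]; ring
  rw [hPw] at hsign
  have hpos : 0 < σ 0 * σ 1 * σ 2 * σ 3 := by
    nlinarith [hsign, sq_nonneg (∏ k : Fin 4, ⟪u (v k), u (v (k + 1))⟫)]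
  have hprod : σ 0 * σ 1 * σ 2 * σ 3 = 1 := by
    rcases hσpm 0 with h0 | h0 <;> rcases hσpm 1 with h1 | h1 <;>
      rcases hσpm 2 with h2 | h2 <;> rcases hσpm 3 with h3 | h3 <;>
      rw [h0, h1, h2, h3] at hpos ⊢ <;> linarith
  set E : Fin 4 → ℝ := ![1, σ 0, σ 0 * σ 1, σ 0 * σ 1 * σ 2] with hE
  have hEpm : ∀ k : Fin 4, E k = 1 ∨ E k = -1 := by
    intro k
    fin_cases k <;> simp [hE] <;>
      rcases hσpm 0 with h0 | h0 <;> rcases hσpm 1 with h1 | h1 <;>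
      rcases hσpm 2 with h2 | h2 <;> rw [h0] <;> norm_num [h1, h2]
  have hEsq : ∀ k : Fin 4, E k * E k = 1 := by
    intro k; rcases hEpm k with h | h <;> rw [h] <;> norm_num
  have hedge : ∀ k : Fin 4, E k * E (k + 1) = σ k := by
    intro k
    fin_cases k
    · show E 0 * E (0 + 1) = σ 0; norm_num [hE]
    · show E 1 * E (1 + 1) = σ 1
      have : E 1 * E (1 + 1) = σ 0 * (σ 0 * σ 1) := by rfl
      rw [this]; linear_combination σ 1 * hσsq 0
    · show E 2 * E (2 + 1) = σ 2
      have : E 2 * E (2 + 1) = (σ 0 * σ 1) * (σ 0 * σ 1 * σ 2) := by rfl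
      rw [this]; linear_combination (σ 1 * σ 1 * σ 2) * hσsq 0 + σ 2 * hσsq 1
    · show E 3 * E (3 + 1) = σ 3
      have : E 3 * E (3 + 1) = (σ 0 * σ 1 * σ 2) * 1 := by
        rw [show (3 : Fin 4) + 1 = 0 by decide]; rfl
      rw [this]; linear_combination σ 3 * hprod - σ 0 * σ 1 * σ 2 * hσsq 3
  have key_edge : ∀ k : Fin 4,
      ⟪w (v k), w (v (k + 1))⟫ = E k * E (k + 1) * ⟪u (v k), u (v (k + 1))⟫ := by
    intro k; rw [hσ k, hedge k]
  have hzw : ∀ p q : Fin 4, p ≠ q → ¬(q = p + 1 ∨ p = q + 1) → ⟪w (v p), w (v q)⟫ = 0 := by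
    intro p q h1 h2
    have := habs (v p) (v q) (v.injective.ne h1)
    rw [hzero p q h1 h2, abs_zero] at this
    exact abs_eq_zero.mp this.symm
  have main : ∀ p q : Fin 4, ⟪w (v p), w (v q)⟫ = E p * E q * ⟪u (v p), u (v q)⟫ := by
    intro p q
    by_cases hpq : p = q
    · subst hpq
      rw [real_inner_self_eq_norm_mul_norm, real_inner_self_eq_norm_mul_norm,
        hu, hw]
      simp [hEsq p]
    · by_cases h1 : q = p + 1
      · subst h1; exact key_edge p
      · by_cases h2 : p = q + 1
        · subst h2
          rw [real_inner_comm (w _), real_inner_comm (u _), key_edge q]; ring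
        · rw [hzero p q hpq (by tauto), hzw p q hpq (by tauto)]; ring
  refine ⟨fun i => E (v.symm i), fun i => hEpm _, fun i j => ?_⟩
  have := main (v.symm i) (v.symm j)
  simpa [Equiv.apply_symm_apply] using this

/-- A cyclic family diagram on 4 vertices (with dihedral angles of type `π/2`, `kπ/3`
or `kπ/5` and finite generated reflection groups) corresponds to at most two families
of spherical simplices: among any three families with this diagram, two are
sign-equivalent. -/
theorem cycle4_at_most_two_families
    (f g h : Fin 4 → EuclideanSpace ℝ (Fin 4))
    (hf_li : LinearIndependent ℝ f) (hg_li : LinearIndependent ℝ g)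
    (hh_li : LinearIndependent ℝ h)
    (hf_unit : ∀ i, ‖f i‖ = 1) (hg_unit : ∀ i, ‖g i‖ = 1) (hh_unit : ∀ i, ‖h i‖ = 1)
    (habs_fg : ∀ i j, i ≠ j → |⟪f i, f j⟫| = |⟪g i, g j⟫|)
    (habs_fh : ∀ i j, i ≠ j → |⟪f i, f j⟫| = |⟪h i, h j⟫|)
    (hval : ∀ i j, i ≠ j → |⟪f i, f j⟫| ∈
      ({0, 1 / 2, (1 + Real.sqrt 5) / 4, (Real.sqrt 5 - 1) / 4} : Set ℝ))
    (hf_fin : Finite ↥(Subgroup.closure (Set.range fun i => reflIn (f i))))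
    (hg_fin : Finite ↥(Subgroup.closure (Set.range fun i => reflIn (g i))))
    (hh_fin : Finite ↥(Subgroup.closure (Set.range fun i => reflIn (h i))))
    (hcyc : Nonempty (gramGraph f ≃g SimpleGraph.cycleGraph 4)) :
    SignEquiv f g ∨ SignEquiv f h ∨ SignEquiv g h := by
  obtain ⟨e⟩ := hcyc
  set v : Fin 4 ≃ Fin 4 := e.symm.toEquiv with hv
  have hadj_iff : ∀ p q : Fin 4,
      (SimpleGraph.cycleGraph 4).Adj p q ↔ (q = p + 1 ∨ p = q + 1) := by decide
  have hmap : ∀ p q : Fin 4, (gramGraph f).Adj (v p) (v q) ↔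
      (SimpleGraph.cycleGraph 4).Adj p q := fun p q => e.symm.map_adj_iff
  have hzero_f : ∀ p q : Fin 4, p ≠ q → ¬(q = p + 1 ∨ p = q + 1) →
      ⟪f (v p), f (v q)⟫ = 0 := by
    intro p q h1 h2
    have hnadj : ¬ (gramGraph f).Adj (v p) (v q) := by
      rw [hmap p q, hadj_iff p q]; exact h2
    by_contra hc
    exact hnadj (show v p ≠ v q ∧ ⟪f (v p), f (v q)⟫ ≠ 0 from ⟨v.injective.ne h1, hc⟩)
  have hne_f : ∀ k : Fin 4, ⟪f (v k), f (v (k + 1))⟫ ≠ 0 := by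
    intro k
    have : (gramGraph f).Adj (v k) (v (k + 1)) := by
      rw [hmap, hadj_iff]
      left; rfl
    exact (show v k ≠ v (k + 1) ∧ ⟪f (v k), f (v (k + 1))⟫ ≠ 0 from this).2
  have habs_gh : ∀ i j, i ≠ j → |⟪g i, g j⟫| = |⟪h i, h j⟫| := fun i j hij =>
    (habs_fg i j hij).symm.trans (habs_fh i j hij)
  have hzero_g : ∀ p q : Fin 4, p ≠ q → ¬(q = p + 1 ∨ p = q + 1) →
      ⟪g (v p), g (v q)⟫ = 0 := by
    intro p q h1 h2
    have := habs_fg (v p) (v q) (v.injective.ne h1)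
    rw [hzero_f p q h1 h2, abs_zero] at this
    exact abs_eq_zero.mp this.symm
  have hne_g : ∀ k : Fin 4, ⟪g (v k), g (v (k + 1))⟫ ≠ 0 := by
    intro k hc
    have hk : v k ≠ v (k + 1) := v.injective.ne (by fin_cases k <;> decide)
    have := habs_fg (v k) (v (k + 1)) hk
    rw [hc, abs_zero] at this
    exact hne_f k (abs_eq_zero.mp this)
  have hne_h : ∀ k : Fin 4, ⟪h (v k), h (v (k + 1))⟫ ≠ 0 := by
    intro k hc
    have hk : v k ≠ v (k + 1) := v.injective.ne (by fin_cases k <;> decide)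
    have := habs_fh (v k) (v (k + 1)) hk
    rw [hc, abs_zero] at this
    exact hne_f k (abs_eq_zero.mp this)
  have hPf : (∏ k : Fin 4, ⟪f (v k), f (v (k + 1))⟫) ≠ 0 :=
    Finset.prod_ne_zero_iff.mpr fun k _ => hne_f k
  have hPg : (∏ k : Fin 4, ⟪g (v k), g (v (k + 1))⟫) ≠ 0 :=
    Finset.prod_ne_zero_iff.mpr fun k _ => hne_g k
  have hPh : (∏ k : Fin 4, ⟪h (v k), h (v (k + 1))⟫) ≠ 0 :=
    Finset.prod_ne_zero_iff.mpr fun k _ => hne_h k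
  have kfg := key_sign v hf_unit hg_unit habs_fg hzero_f hne_f
  have kfh := key_sign v hf_unit hh_unit habs_fh hzero_f hne_f
  have kgh := key_sign v hg_unit hh_unit habs_gh hzero_g hne_g
  rcases hPf.lt_or_gt with h1 | h1 <;> rcases hPg.lt_or_gt with h2 | h2 <;>
    rcases hPh.lt_or_gt with h3 | h3
  · exact Or.inl (kfg (mul_pos_of_neg_of_neg h1 h2))
  · exact Or.inl (kfg (mul_pos_of_neg_of_neg h1 h2))
  · exact Or.inr (Or.inl (kfh (mul_pos_of_neg_of_neg h1 h3)))
  · exact Or.inr (Or.inr (kgh (mul_pos h2 h3)))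
  · exact Or.inr (Or.inr (kgh (mul_pos_of_neg_of_neg h2 h3)))
  · exact Or.inr (Or.inl (kfh (mul_pos h1 h3)))
  · exact Or.inl (kfg (mul_pos h1 h2))
  · exact Or.inl (kfg (mul_pos h1 h2))
end

section
/- Let T₁ and T₂ be finite trees (connected acyclic simple graphs) with the same number of vertices. If the line graph of T₁ is isomorphic to the line graph of T₂, then T₁ is isomorphic to T₂. -/
open SimpleGraph
namespace TreeLG

variable {V : Type*}

/-- delete a vertex -/
abbrev delV (T : SimpleGraph V) (v : V) : SimpleGraph {x : V // x ≠ v} :=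
  T.comap (Subtype.val)

lemma delV_adj {T : SimpleGraph V} {v : V} {a b : {x : V // x ≠ v}} :
    (delV T v).Adj a b ↔ T.Adj a.1 b.1 := Iff.rfl

/-- In a graph where `v`'s unique neighbor is `u`, `v` is not in the interior of a path. -/
lemma not_mem_support {T : SimpleGraph V} {v u : V}
    (huniq : ∀ y, T.Adj v y → y = u) :
    ∀ {a b : V} (p : T.Walk a b), p.IsPath → a ≠ v → b ≠ v → v ∉ p.support := by
  intro a b p
  induction p with
  | nil => intro _ ha _ h; simp at h; exact ha h.symm
  | @cons a c b h q ih =>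
    intro hp ha hb hmem
    rw [SimpleGraph.Walk.support_cons, List.mem_cons] at hmem
    rcases hmem with h1 | h2
    · exact ha h1.symm
    · by_cases hc : c = v
      · subst hc
        have hau : a = u := huniq a h.symm
        cases q with
        | nil => exact hb rfl
        | @cons _ d _ h' q' =>
          have hdu : d = u := huniq d h'
          have hnodup := hp.support_nodup
          rw [SimpleGraph.Walk.support_cons, List.nodup_cons] at hnodup
          apply hnodup.1
          rw [SimpleGraph.Walk.support_cons]
          apply List.mem_cons_of_mem
          subst hdu; subst hau
          exact q'.start_mem_support
      · exact ih hp.of_cons hc hb h2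

/-- Lift a walk avoiding `v` to `delV T v`. -/
def liftWalk {T : SimpleGraph V} {v : V} :
    ∀ {a b : V} (p : T.Walk a b) (ha : a ≠ v) (hb : b ≠ v)
      (_ : ∀ x ∈ p.support, x ≠ v),
      (delV T v).Walk ⟨a, ha⟩ ⟨b, hb⟩
  | _, _, SimpleGraph.Walk.nil, _, _, _ => SimpleGraph.Walk.nil
  | a, b, SimpleGraph.Walk.cons (v := c) h q, ha, hb, hs => by
      refine SimpleGraph.Walk.cons (v := ⟨c, hs c (by simp)⟩) ?_
        (liftWalk q (hs c (by simp)) hb (fun x hx => hs x (by simp [hx])))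
      exact h

lemma delV_isTree {T : SimpleGraph V} (hT : T.IsTree) {v u : V}
    (hu : T.Adj v u) (huniq : ∀ y, T.Adj v y → y = u) :
    (delV T v).IsTree := by
  constructor
  · -- connected
    have : Nonempty {x : V // x ≠ v} := ⟨⟨u, hu.ne'⟩⟩
    refine SimpleGraph.Connected.mk ?_
    rintro ⟨a, ha⟩ ⟨b, hb⟩
    obtain ⟨p, hp⟩ := (hT.existsUnique_path a b).exists
    have hns := not_mem_support huniq p hp ha hb
    exact ⟨liftWalk p ha hb (fun x hx hxv => hns (hxv ▸ hx))⟩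
  · -- acyclic
    intro a c hc
    exact hT.IsAcyclic _ (hc.map (f := ⟨Subtype.val, fun h => h⟩)
      (fun x y hxy => Subtype.ext hxy))


variable {V : Type*}

lemma edge_eq {T : SimpleGraph V} (e : T.edgeSet) {x y : V} (hx : x ∈ e.1) (hy : y ∈ e.1)
    (hxy : x ≠ y) : e.1 = s(x, y) :=
  (Sym2.mem_and_mem_iff hxy).1 ⟨hx, hy⟩

/-- the leaf edge -/
def leafEdge {T : SimpleGraph V} {v u : V} (hu : T.Adj v u) : T.edgeSet := ⟨s(v, u), hu⟩

lemma leaf_edge_char {T : SimpleGraph V} {v u : V} (hu : T.Adj v u)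
    (huniq : ∀ y, T.Adj v y → y = u) (f : T.edgeSet) (hvf : v ∈ f.1) : f = leafEdge hu := by
  obtain ⟨z, hz⟩ := f
  induction z with
  | _ a b =>
    apply Subtype.ext
    simp only [Sym2.mem_iff] at hvf
    rcases hvf with rfl | rfl
    · rw [SimpleGraph.mem_edgeSet] at hz
      show s(v, b) = s(v, u)
      rw [huniq b hz]
    · rw [SimpleGraph.mem_edgeSet] at hz
      show s(a, v) = s(v, u)
      rw [huniq a hz.symm]
      exact Sym2.eq_swap

lemma mem_of_leafEdge {T : SimpleGraph V} {v u : V} (hu : T.Adj v u) :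
    v ∈ (leafEdge hu).1 := by simp [leafEdge]

lemma adj_of_ne_of_pair {T : SimpleGraph V} {a b : V} (hconn : T.Connected)
    (hall : ∀ x : V, x = a ∨ x = b) {x y : V} (hxy : x ≠ y) : T.Adj x y := by
  obtain ⟨w⟩ := hconn x y
  cases w with
  | nil => exact absurd rfl hxy
  | @cons _ c _ h q =>
    have hcx : c ≠ x := h.ne'
    have : c = y := by
      rcases hall x with rfl | rfl <;> rcases hall c with rfl | rfl <;>
        rcases hall y with rfl | rfl <;>
        first
          | rfl
          | (exact absurd rfl hcx)
          | (exact absurd rfl hxy)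
          | (exact absurd rfl (Ne.symm hxy))
    exact this ▸ h

lemma pair_of_uniq {T : SimpleGraph V} {a b : V} (hconn : T.Connected) (hab : T.Adj a b)
    (ha : ∀ y, T.Adj a y → y = b) (hb : ∀ y, T.Adj b y → y = a) (x : V) : x = a ∨ x = b := by
  obtain ⟨w⟩ := hconn a x
  have key : ∀ {s t : V} (w : T.Walk s t), (s = a ∨ s = b) → (t = a ∨ t = b) := by
    intro s t w
    induction w with
    | nil => exact id
    | @cons s c t h q ih =>
      rintro (rfl | rfl)
      · exact ih (Or.inr (ha c h))
      · exact ih (Or.inl (hb c h))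
  exact key w (Or.inl rfl)

lemma exists_leaf [Fintype V] {T : SimpleGraph V} (hT : T.IsTree)
    (hcard : 2 ≤ Fintype.card V) : ∃ v u, T.Adj v u ∧ ∀ y, T.Adj v y → y = u := by
  classical
  by_contra hno
  push_neg at hno
  have hdeg : ∀ v : V, 2 ≤ T.degree v := by
    intro v
    obtain ⟨w, hw⟩ := Fintype.exists_ne_of_one_lt_card hcard v
    obtain ⟨p⟩ := hT.isConnected v w
    have hadj : ∃ c, T.Adj v c := by
      cases p with
      | nil => exact absurd rfl hw
      | cons h q => exact ⟨_, h⟩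
    obtain ⟨c, hc⟩ := hadj
    obtain ⟨y, hy, hyc⟩ := hno v c hc
    rw [SimpleGraph.degree]
    rw [show (2:ℕ) = 1 + 1 from rfl, Nat.add_one_le_iff, Finset.one_lt_card_iff_nontrivial]
    exact ⟨y, by simpa using hy, c, by simpa using hc, hyc⟩
  have h1 := T.sum_degrees_eq_twice_card_edges
  have h2 := hT.card_edgeFinset
  have h3 : 2 * Fintype.card V ≤ ∑ v, T.degree v := by
    calc 2 * Fintype.card V = ∑ _v : V, 2 := by simp [mul_comm]
    _ ≤ ∑ v, T.degree v := Finset.sum_le_sum (fun v _ => hdeg v)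
  omega


variable {V : Type*} {T : SimpleGraph V} {v : V}

lemma map_val_mem {e : Sym2 {x : V // x ≠ v}} (he : e ∈ (delV T v).edgeSet) :
    Sym2.map Subtype.val e ∈ T.edgeSet := by
  induction e with
  | _ a b => simpa using he

/-- push an edge of `delV T v` down to an edge of `T` -/
def edown (e : (delV T v).edgeSet) : T.edgeSet :=
  ⟨Sym2.map Subtype.val e.1, map_val_mem e.2⟩

lemma edown_val (e : (delV T v).edgeSet) : (edown e).1 = Sym2.map Subtype.val e.1 := rfl

lemma edown_inj : Function.Injective (edown (T := T) (v := v)) := by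
  intro e f h
  exact Subtype.ext (Sym2.map.injective Subtype.val_injective (congrArg Subtype.val h))

lemma not_mem_edown (e : (delV T v).edgeSet) : v ∉ (edown e).1 := by
  rw [edown_val, Sym2.mem_map]
  rintro ⟨⟨x, hx⟩, _, h⟩
  exact hx h

lemma edown_surj (f : T.edgeSet) (hf : v ∉ f.1) :
    ∃ e : (delV T v).edgeSet, edown e = f := by
  obtain ⟨z, hz⟩ := f
  induction z with
  | _ a b =>
    simp only [Sym2.mem_iff, not_or] at hf
    refine ⟨⟨s(⟨a, Ne.symm hf.1⟩, ⟨b, Ne.symm hf.2⟩), ?_⟩, ?_⟩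
    · simpa using hz
    · apply Subtype.ext
      simp [edown_val]

lemma edown_lineAdj {e f : (delV T v).edgeSet} :
    T.lineGraph.Adj (edown e) (edown f) ↔ (delV T v).lineGraph.Adj e f := by
  rw [SimpleGraph.lineGraph_adj_iff_exists, SimpleGraph.lineGraph_adj_iff_exists]
  constructor
  · rintro ⟨hne, t, ht1, ht2⟩
    refine ⟨fun hh => hne (congrArg edown hh), ?_⟩
    rw [edown_val, Sym2.mem_map] at ht1 ht2
    obtain ⟨x, hx, rfl⟩ := ht1
    obtain ⟨y, hy, hxy⟩ := ht2
    cases Subtype.val_injective hxy.symm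
    exact ⟨x, hx, hy⟩
  · rintro ⟨hne, x, hx1, hx2⟩
    refine ⟨fun hh => hne (edown_inj hh), x.1, ?_, ?_⟩ <;>
      · rw [edown_val, Sym2.mem_map]; exact ⟨x, by assumption, rfl⟩

/-- The line-graph isomorphism restricts to the vertex-deleted trees. -/
lemma exists_restrict {V₁ V₂ : Type*} {T₁ : SimpleGraph V₁} {T₂ : SimpleGraph V₂}
    {v u : V₁} {v' u' : V₂} (hu₁ : T₁.Adj v u) (huniq₁ : ∀ y, T₁.Adj v y → y = u)
    (hu₂ : T₂.Adj v' u') (huniq₂ : ∀ y, T₂.Adj v' y → y = u')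
    (φ : T₁.lineGraph ≃g T₂.lineGraph) (hφ : φ (leafEdge hu₁) = leafEdge hu₂) :
    ∃ φ' : (delV T₁ v).lineGraph ≃g (delV T₂ v').lineGraph,
      ∀ e, edown (φ' e) = φ (edown e) := by
  have hiff : ∀ f : T₁.edgeSet, v ∉ f.1 ↔ v' ∉ (φ f).1 := by
    intro f
    constructor
    · intro hf hmem
      have := leaf_edge_char hu₂ huniq₂ (φ f) hmem
      have : f = leafEdge hu₁ := φ.injective (by rw [this, hφ])
      exact hf (this ▸ mem_of_leafEdge hu₁)
    · intro hf hmem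
      have : f = leafEdge hu₁ := leaf_edge_char hu₁ huniq₁ f hmem
      exact hf (by rw [this, hφ]; exact mem_of_leafEdge hu₂)
  have bij₁ : Function.Bijective
      (fun e : (delV T₁ v).edgeSet => (⟨edown e, not_mem_edown e⟩ :
        {f : T₁.edgeSet // v ∉ f.1})) := by
    constructor
    · intro e f h
      exact edown_inj (congrArg Subtype.val h)
    · rintro ⟨f, hf⟩
      obtain ⟨e, he⟩ := edown_surj f hf
      exact ⟨e, Subtype.ext he⟩
  have bij₂ : Function.Bijective
      (fun e : (delV T₂ v').edgeSet => (⟨edown e, not_mem_edown e⟩ :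
        {f : T₂.edgeSet // v' ∉ f.1})) := by
    constructor
    · intro e f h
      exact edown_inj (congrArg Subtype.val h)
    · rintro ⟨f, hf⟩
      obtain ⟨e, he⟩ := edown_surj f hf
      exact ⟨e, Subtype.ext he⟩
  let A := Equiv.ofBijective _ bij₁
  let B := Equiv.ofBijective _ bij₂
  let E : (delV T₁ v).edgeSet ≃ (delV T₂ v').edgeSet :=
    A.trans ((φ.toEquiv.subtypeEquiv hiff).trans B.symm)
  have hE : ∀ e, edown (E e) = φ (edown e) := by
    intro e
    have : B (E e) = ⟨φ (edown e), (hiff (edown e)).1 (not_mem_edown e)⟩ := by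
      simp only [E, Equiv.trans_apply, Equiv.apply_symm_apply]
      rfl
    exact congrArg Subtype.val this
  refine ⟨⟨E, ?_⟩, hE⟩
  intro e f
  show (delV T₂ v').lineGraph.Adj (E e) (E f) ↔ (delV T₁ v).lineGraph.Adj e f
  rw [← edown_lineAdj, hE, hE, φ.map_rel_iff]
  exact edown_lineAdj

section MainStep
universe u₁ u₂
variable {V₁ : Type u₁} {V₂ : Type u₂} [Fintype V₁] [Fintype V₂] [DecidableEq V₁] [DecidableEq V₂]

lemma mem_leafEdge_right {T : SimpleGraph V₁} {v u : V₁} (hu : T.Adj v u) :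
    u ∈ (leafEdge hu).1 := by simp [leafEdge]

/-- u has a second neighbor if the tree has ≥ 3 vertices -/
lemma second_nbr {T : SimpleGraph V₁} (hT : T.IsTree) {v u : V₁} (hu : T.Adj v u)
    (huniq : ∀ y, T.Adj v y → y = u) (hcard : 3 ≤ Fintype.card V₁) :
    ∃ w, T.Adj u w ∧ w ≠ v := by
  by_contra hno
  push_neg at hno
  have hall := pair_of_uniq hT.isConnected hu huniq
    (fun y hy => hno y hy)
  have : Finset.univ (α := V₁) ⊆ {v, u} := fun x _ => by
    rcases hall x with rfl | rfl <;> simp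
  have := Finset.card_le_card this
  simp only [Finset.card_univ] at this
  have h2 : ({v, u} : Finset V₁).card ≤ 2 := Finset.card_insert_le _ _ |>.trans (by simp)
  omega

lemma main_step {T₁ : SimpleGraph V₁} {T₂ : SimpleGraph V₂}
    (h₁ : T₁.IsTree) (h₂ : T₂.IsTree) {v u : V₁} {v' u' : V₂}
    (hu₁ : T₁.Adj v u) (huniq₁ : ∀ y, T₁.Adj v y → y = u)
    (hu₂ : T₂.Adj v' u') (huniq₂ : ∀ y, T₂.Adj v' y → y = u')
    (hcard : 3 ≤ Fintype.card V₁)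
    (φ : T₁.lineGraph ≃g T₂.lineGraph) (hφ : φ (leafEdge hu₁) = leafEdge hu₂)
    (IH : ∀ φ' : (delV T₁ v).lineGraph ≃g (delV T₂ v').lineGraph,
      ∃ ψ' : delV T₁ v ≃g delV T₂ v',
        ∀ e : (delV T₁ v).edgeSet, Sym2.map ψ' e.1 = (φ' e).1) :
    ∃ ψ : T₁ ≃g T₂, ∀ e : T₁.edgeSet, Sym2.map ψ e.1 = (φ e).1 := by
  obtain ⟨φ', hφ'⟩ := exists_restrict hu₁ huniq₁ hu₂ huniq₂ φ hφ
  obtain ⟨ψ', Hind⟩ := IH φ'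
  -- useful combined form
  have Hval : ∀ ψ'' : delV T₁ v ≃g delV T₂ v',
      (∀ e : (delV T₁ v).edgeSet, Sym2.map ψ'' e.1 = (φ' e).1) →
      ∀ e : (delV T₁ v).edgeSet,
        Sym2.map (fun z => (ψ'' z).1) e.1 = ((φ (edown e)) : Sym2 V₂) := by
    intro ψ'' h e
    have h1 : Sym2.map Subtype.val (Sym2.map ψ'' e.1) = Sym2.map Subtype.val ((φ' e).1) :=
      congrArg _ (h e)
    rw [Sym2.map_map] at h1
    rw [← hφ' e]
    exact h1
  -- the leaf edge and the second edge at u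
  have huv : u ≠ v := hu₁.ne'
  have hu'v' : u' ≠ v' := hu₂.ne'
  obtain ⟨w₀, hw₀adj, hw₀v⟩ := second_nbr h₁ hu₁ huniq₁ hcard
  have hw₀u : w₀ ≠ u := hw₀adj.ne'
  set uu : {x : V₁ // x ≠ v} := ⟨u, huv⟩ with huu
  set ww₀ : {x : V₁ // x ≠ v} := ⟨w₀, hw₀v⟩ with hww₀
  have hadj' : (delV T₁ v).Adj uu ww₀ := hw₀adj
  set f₀' : (delV T₁ v).edgeSet := ⟨s(uu, ww₀), hadj'⟩ with hf₀'
  -- u' belongs to φ f whenever u ∈ f and f ≠ leaf edge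
  have mem_u' : ∀ f : T₁.edgeSet, u ∈ f.1 → f ≠ leafEdge hu₁ → u' ∈ ((φ f) : Sym2 V₂) := by
    intro f hf hne
    have hadj : T₁.lineGraph.Adj (leafEdge hu₁) f := by
      rw [SimpleGraph.lineGraph_adj_iff_exists]
      exact ⟨fun hh => hne hh.symm, u, mem_leafEdge_right hu₁, hf⟩
    have hadj2 : T₂.lineGraph.Adj (leafEdge hu₂) (φ f) := by
      rw [← hφ]
      exact φ.map_rel_iff.mpr hadj
    rw [SimpleGraph.lineGraph_adj_iff_exists] at hadj2
    obtain ⟨hne2, t, ht1, ht2⟩ := hadj2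
    simp only [leafEdge, Sym2.mem_iff] at ht1
    rcases ht1 with rfl | rfl
    · exfalso
      exact hne2 (leaf_edge_char hu₂ huniq₂ (φ f) ht2).symm
    · exact ht2
  have hvalf₀ : ((edown f₀') : Sym2 V₁) = s(u, w₀) := by
    simp [edown_val, f₀']
    exact Or.inl ⟨rfl, rfl⟩
  have hf₀ne : edown f₀' ≠ leafEdge hu₁ := by
    intro hh
    exact not_mem_edown f₀' (hh ▸ mem_of_leafEdge hu₁)
  have hu'f₀ : u' ∈ ((φ (edown f₀')) : Sym2 V₂) :=
    mem_u' _ (by rw [hvalf₀]; simp) hf₀ne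
  -- Step: find ψ'' with ψ'' uu = u' (still induced)
  obtain ⟨ψ'', Hind'', hψu⟩ : ∃ ψ'' : delV T₁ v ≃g delV T₂ v',
      (∀ e : (delV T₁ v).edgeSet, Sym2.map (fun z => (ψ'' z).1) e.1 = ((φ (edown e)) : Sym2 V₂))
      ∧ (ψ'' uu).1 = u' := by
    have H0 := Hval ψ' Hind
    by_cases hA : (ψ' uu).1 = u'
    · exact ⟨ψ', H0, hA⟩
    -- so u' = (ψ' ww₀).1
    have hf₀val : ((φ (edown f₀')) : Sym2 V₂) = s((ψ' uu).1, (ψ' ww₀).1) := by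
      rw [← H0 f₀']
      rfl
    have hB : (ψ' ww₀).1 = u' := by
      rw [hf₀val, Sym2.mem_iff] at hu'f₀
      rcases hu'f₀ with h | h
      · exact absurd h.symm hA
      · exact h.symm
    by_cases hf₂ : ∃ w₂, T₁.Adj u w₂ ∧ w₂ ≠ v ∧ w₂ ≠ w₀
    · exfalso
      obtain ⟨w₂, hw₂adj, hw₂v, hw₂w₀⟩ := hf₂
      set ww₂ : {x : V₁ // x ≠ v} := ⟨w₂, hw₂v⟩ with hww₂
      have hadj₂ : (delV T₁ v).Adj uu ww₂ := hw₂adj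
      set f₂' : (delV T₁ v).edgeSet := ⟨s(uu, ww₂), hadj₂⟩ with hf₂'
      have hvalf₂ : ((edown f₂') : Sym2 V₁) = s(u, w₂) := by simp [edown_val, f₂']; exact Or.inl ⟨rfl, rfl⟩
      have hf₂ne : edown f₂' ≠ leafEdge hu₁ := by
        intro hh
        exact not_mem_edown f₂' (hh ▸ mem_of_leafEdge hu₁)
      have hu'f₂ : u' ∈ ((φ (edown f₂')) : Sym2 V₂) :=
        mem_u' _ (by rw [hvalf₂]; simp) hf₂ne
      have hf₂val : ((φ (edown f₂')) : Sym2 V₂) = s((ψ' uu).1, (ψ' ww₂).1) := by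
        rw [← H0 f₂']
        rfl
      have hC : (ψ' ww₂).1 = u' := by
        rw [hf₂val, Sym2.mem_iff] at hu'f₂
        rcases hu'f₂ with h | h
        · exact absurd h.symm hA
        · exact h.symm
      -- then φ(f₂) = φ(f₀) as Sym2, so f₂ = f₀, contradiction
      have : φ (edown f₂') = φ (edown f₀') := by
        apply Subtype.ext
        rw [hf₂val, hf₀val, hB, hC]
      have h5 := edown_inj (φ.injective this)
      have h6 : s(uu, ww₂) = s(uu, ww₀) := congrArg Subtype.val h5
      rw [Sym2.congr_right] at h6
      exact hw₂w₀ (congrArg Subtype.val h6)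
    · -- u's only neighbors are v and w₀
      push_neg at hf₂
      have hOnly : ∀ w, T₁.Adj u w → w = v ∨ w = w₀ := by
        intro w hw
        by_contra hcon
        push_neg at hcon
        exact hcon.2 (hf₂ w hw hcon.1)
      by_cases hg : ∃ z, T₁.Adj w₀ z ∧ z ≠ u
      · exfalso
        obtain ⟨z, hzadj, hzu⟩ := hg
        have hzv : z ≠ v := by
          intro hh
          subst hh
          exact hw₀u (huniq₁ w₀ hzadj.symm)
        set zz : {x : V₁ // x ≠ v} := ⟨z, hzv⟩ with hzz
        have hadjg : (delV T₁ v).Adj ww₀ zz := hzadj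
        set g' : (delV T₁ v).edgeSet := ⟨s(ww₀, zz), hadjg⟩ with hg'
        have hvalg : ((edown g') : Sym2 V₁) = s(w₀, z) := by simp [edown_val, g']; exact Or.inl ⟨rfl, rfl⟩
        have hgval : ((φ (edown g')) : Sym2 V₂) = s((ψ' ww₀).1, (ψ' zz).1) := by
          rw [← H0 g']
          rfl
        have hu'g : u' ∈ ((φ (edown g')) : Sym2 V₂) := by
          rw [hgval, hB]
          simp
        -- but edown g' is not adjacent to the leaf edge, contradiction
        have hgne : edown g' ≠ leafEdge hu₁ := by
          intro hh
          exact not_mem_edown g' (hh ▸ mem_of_leafEdge hu₁)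
        have hnadj : ¬ T₁.lineGraph.Adj (leafEdge hu₁) (edown g') := by
          rw [SimpleGraph.lineGraph_adj_iff_exists]
          rintro ⟨-, t, ht1, ht2⟩
          simp only [leafEdge, Sym2.mem_iff] at ht1
          rw [hvalg, Sym2.mem_iff] at ht2
          rcases ht1 with rfl | rfl
          · rcases ht2 with rfl | rfl
            · exact hw₀v rfl
            · exact hzv rfl
          · rcases ht2 with rfl | rfl
            · exact hw₀u rfl
            · exact hzu rfl
        apply hnadj
        rw [← φ.map_rel_iff, hφ, SimpleGraph.lineGraph_adj_iff_exists]
        refine ⟨?_, u', mem_leafEdge_right hu₂, hu'g⟩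
        intro hh
        exact hgne (φ.injective (hh.symm.trans hφ.symm))
      · -- T₁ minus v is just the edge u w₀: swap
        push_neg at hg
        have t1 : (delV T₁ v).IsTree := delV_isTree h₁ hu₁ huniq₁
        have huniq_uu : ∀ y, (delV T₁ v).Adj uu y → y = ww₀ := by
          rintro ⟨y, hy⟩ hadj
          rcases hOnly y hadj with rfl | rfl
          · exact absurd rfl hy
          · rfl
        have huniq_ww : ∀ y, (delV T₁ v).Adj ww₀ y → y = uu := by
          rintro ⟨y, hy⟩ hadj
          exact Subtype.ext (hg y hadj)
        have hall := pair_of_uniq t1.isConnected hadj' huniq_uu huniq_ww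
        have hAdjIff : ∀ x y, (delV T₁ v).Adj x y ↔ x ≠ y := by
          intro x y
          exact ⟨fun h => h.ne, fun h => adj_of_ne_of_pair t1.isConnected hall h⟩
        have hswap_ne : Function.Injective (Equiv.swap uu ww₀) := (Equiv.swap uu ww₀).injective
        let σ : delV T₁ v ≃g delV T₁ v :=
          ⟨Equiv.swap uu ww₀, by
            intro a b
            rw [hAdjIff, hAdjIff]
            exact hswap_ne.ne_iff⟩
        refine ⟨σ.trans ψ', ?_, ?_⟩
        · intro e
          have hfix : Sym2.map (Equiv.swap uu ww₀) e.1 = e.1 := by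
            obtain ⟨ze, hze⟩ := e
            induction ze with
            | _ a b =>
              have hab : a ≠ b := ((SimpleGraph.mem_edgeSet (delV T₁ v)).mp hze).ne
              rcases hall a with rfl | rfl <;> rcases hall b with rfl | rfl
              · exact absurd rfl hab
              · simp [Sym2.map_pair_eq, Equiv.swap_apply_left, Equiv.swap_apply_right]
              · simp [Sym2.map_pair_eq, Equiv.swap_apply_left, Equiv.swap_apply_right,
                  Sym2.eq_swap]
              · exact absurd rfl hab
          rw [← H0 e]
          show Sym2.map (fun z => (ψ' ((Equiv.swap uu ww₀) z)).1) e.1 = _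
          conv_rhs => rw [← hfix]
          rw [Sym2.map_map]
          rfl
        · show (ψ' (Equiv.swap uu ww₀ uu)).1 = u'
          rw [Equiv.swap_apply_left]
          exact hB
  -- extend ψ'' to an isomorphism T₁ ≃g T₂ sending v to v'
  have hAdj₁v : ∀ y, T₁.Adj v y ↔ y = u := fun y => ⟨huniq₁ y, fun h => h ▸ hu₁⟩
  have hAdj₂v : ∀ y, T₂.Adj v' y ↔ y = u' := fun y => ⟨huniq₂ y, fun h => h ▸ hu₂⟩
  let F : V₁ → V₂ := fun x => if hx : x = v then v' else (ψ'' ⟨x, hx⟩).1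
  let G : V₂ → V₁ := fun y => if hy : y = v' then v else (ψ''.symm ⟨y, hy⟩).1
  have hFv : F v = v' := dif_pos rfl
  have hFne : ∀ (x : V₁) (hx : x ≠ v), F x = (ψ'' ⟨x, hx⟩).1 := fun x hx => dif_neg hx
  have hGv : G v' = v := dif_pos rfl
  have hGne : ∀ (y : V₂) (hy : y ≠ v'), G y = (ψ''.symm ⟨y, hy⟩).1 := fun y hy => dif_neg hy
  have hlr : ∀ x, G (F x) = x := by
    intro x
    by_cases hx : x = v
    · subst hx; rw [hFv, hGv]
    · rw [hFne x hx, hGne _ (ψ'' ⟨x, hx⟩).2]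
      have h9 : (⟨(ψ'' ⟨x, hx⟩).1, (ψ'' ⟨x, hx⟩).2⟩ : {y : V₂ // y ≠ v'}) = ψ'' ⟨x, hx⟩ := rfl
      rw [h9, RelIso.symm_apply_apply]
  have hrl : ∀ y, F (G y) = y := by
    intro y
    by_cases hy : y = v'
    · subst hy; rw [hGv, hFv]
    · rw [hGne y hy, hFne _ (ψ''.symm ⟨y, hy⟩).2]
      have h9 : (⟨(ψ''.symm ⟨y, hy⟩).1, (ψ''.symm ⟨y, hy⟩).2⟩ : {x : V₁ // x ≠ v}) =
          ψ''.symm ⟨y, hy⟩ := rfl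
      rw [h9, RelIso.apply_symm_apply]
  let ψE : V₁ ≃ V₂ := ⟨F, G, hlr, hrl⟩
  have keyiff : ∀ (b : V₁) (hb : b ≠ v), (T₂.Adj v' ((ψ'' ⟨b, hb⟩).1) ↔ T₁.Adj v b) := by
    intro b hb
    rw [hAdj₂v, hAdj₁v]
    constructor
    · intro h
      have h1 : ψ'' ⟨b, hb⟩ = ψ'' uu := Subtype.ext (h.trans hψu.symm)
      exact congrArg Subtype.val (ψ''.injective h1)
    · rintro rfl
      exact hψu
  have hmap : ∀ a b, T₂.Adj (F a) (F b) ↔ T₁.Adj a b := by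
    intro a b
    by_cases ha : a = v <;> by_cases hb : b = v
    · subst ha; subst hb
      rw [hFv]
      simp
    · subst ha
      rw [hFv, hFne b hb]
      exact keyiff b hb
    · subst hb
      rw [hFv, hFne a ha, SimpleGraph.adj_comm, T₁.adj_comm]
      exact keyiff a ha
    · rw [hFne a ha, hFne b hb]
      exact ψ''.map_rel_iff (a := ⟨a, ha⟩) (b := ⟨b, hb⟩)
  refine ⟨⟨ψE, fun {a b} => hmap a b⟩, ?_⟩
  intro e
  by_cases hve : v ∈ e.1
  · have he : e = leafEdge hu₁ := leaf_edge_char hu₁ huniq₁ e hve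
    rw [he, hφ]
    show Sym2.map ψE s(v, u) = s(v', u')
    rw [Sym2.map_pair_eq]
    have h1 : ψE v = v' := hFv
    have h2 : ψE u = u' := by
      show F u = u'
      rw [hFne u huv]
      exact hψu
    rw [h1, h2]
  · obtain ⟨e', rfl⟩ := edown_surj e hve
    show Sym2.map ψE (Sym2.map Subtype.val e'.1) = _
    rw [Sym2.map_map]
    have hcong : Sym2.map (⇑ψE ∘ Subtype.val) e'.1 = Sym2.map (fun z => (ψ'' z).1) e'.1 :=
      Sym2.map_congr (fun x _ => hFne x.1 x.2)
    rw [hcong, Hind'' e']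

end MainStep

section Key
universe u₁ u₂

lemma tree_two_adj {W : Type*} [Fintype W] {T : SimpleGraph W} (hW : Fintype.card W = 2)
    (hT : T.IsTree) (x y : W) : T.Adj x y ↔ x ≠ y := by
  obtain ⟨a, b, hab, huniv⟩ := Nat.card_eq_two_iff.mp
    (show Nat.card W = 2 by rw [Nat.card_eq_fintype_card, hW])
  have hall : ∀ z : W, z = a ∨ z = b := by
    intro z
    have : z ∈ ({a, b} : Set W) := huniv ▸ Set.mem_univ z
    simpa using this
  exact ⟨fun h => h.ne, fun h => adj_of_ne_of_pair hT.isConnected hall h⟩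

lemma key (n : ℕ) : ∀ {V₁ : Type u₁} {V₂ : Type u₂} [Fintype V₁] [Fintype V₂]
    (T₁ : SimpleGraph V₁) (T₂ : SimpleGraph V₂), Fintype.card V₁ = n →
    T₁.IsTree → T₂.IsTree → ∀ φ : T₁.lineGraph ≃g T₂.lineGraph,
    ∃ ψ : T₁ ≃g T₂, ∀ e : T₁.edgeSet, Sym2.map ψ e.1 = ((φ e) : Sym2 V₂) := by
  induction n using Nat.strong_induction_on with
  | _ n ih =>
  intro V₁ V₂ _ _ T₁ T₂ hn h₁ h₂ φ
  classical
  have hE₁ : T₁.edgeFinset.card + 1 = Fintype.card V₁ := h₁.card_edgeFinset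
  have hE₂ : T₂.edgeFinset.card + 1 = Fintype.card V₂ := h₂.card_edgeFinset
  have hEeq : T₁.edgeFinset.card = T₂.edgeFinset.card := by
    rw [SimpleGraph.edgeFinset_card, SimpleGraph.edgeFinset_card]
    exact Fintype.card_congr φ.toEquiv
  have hV₂ : Fintype.card V₂ = Fintype.card V₁ := by omega
  have hpos : 1 ≤ Fintype.card V₁ := by
    have := h₁.isConnected.nonempty
    exact Fintype.card_pos
  rcases lt_or_ge (Fintype.card V₁) 3 with hsmall | hbig
  · -- small cases
    have h12 : Fintype.card V₁ = 1 ∨ Fintype.card V₁ = 2 := by omega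
    rcases h12 with hc | hc
    · -- one vertex
      have hs₁ : Subsingleton V₁ := Fintype.card_le_one_iff_subsingleton.mp (by omega)
      have hs₂ : Subsingleton V₂ := Fintype.card_le_one_iff_subsingleton.mp (by omega)
      refine ⟨⟨Fintype.equivOfCardEq (by omega), ?_⟩, ?_⟩
      · intro a b
        exact iff_of_false (fun h => h.ne (Subsingleton.elim _ _))
          (fun h => h.ne (Subsingleton.elim _ _))
      · intro e
        exfalso
        have hm : e.1 ∈ T₁.edgeFinset := SimpleGraph.mem_edgeFinset.mpr e.2
        have h0 : T₁.edgeFinset.card = 0 := by omega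
        rw [Finset.card_eq_zero] at h0
        rw [h0] at hm
        exact absurd hm (Finset.notMem_empty _)
    · -- two vertices
      have hAdj1 := tree_two_adj (T := T₁) (by omega) h₁
      have hAdj2 := tree_two_adj (T := T₂) (by omega) h₂
      have hss : Subsingleton T₂.edgeSet := by
        rw [← Fintype.card_le_one_iff_subsingleton, ← SimpleGraph.edgeFinset_card]
        omega
      set ψE : V₁ ≃ V₂ := Fintype.equivOfCardEq (by omega) with hψE
      refine ⟨⟨ψE, ?_⟩, ?_⟩
      · intro a b
        rw [hAdj2, hAdj1]
        exact ψE.injective.ne_iff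
      · intro e
        have hmem : Sym2.map ψE e.1 ∈ T₂.edgeSet := by
          obtain ⟨z, hz⟩ := e
          induction z with
          | _ a b =>
            rw [Sym2.map_pair_eq, SimpleGraph.mem_edgeSet, hAdj2]
            exact ψE.injective.ne_iff.mpr ((SimpleGraph.mem_edgeSet T₁).mp hz).ne
        exact congrArg Subtype.val (Subsingleton.elim (⟨Sym2.map ψE e.1, hmem⟩ : T₂.edgeSet) (φ e))
  · -- main case
    obtain ⟨v, u, hu₁, huniq₁⟩ := exists_leaf h₁ (by omega)
    have huv : u ≠ v := hu₁.ne'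
    obtain ⟨w₀, hw₀, hw₀v⟩ := second_nbr h₁ hu₁ huniq₁ hbig
    set e₀ : T₁.edgeSet := leafEdge hu₁ with he₀
    have hf₀adj : T₁.lineGraph.Adj e₀ ⟨s(u, w₀), hw₀⟩ := by
      rw [SimpleGraph.lineGraph_adj_iff_exists]
      refine ⟨?_, u, mem_leafEdge_right hu₁, by simp⟩
      intro hh
      have h8 : v ∈ e₀.1 := mem_of_leafEdge hu₁
      rw [hh] at h8
      simp only [Sym2.mem_iff] at h8
      rcases h8 with rfl | rfl
      · exact huv rfl
      · exact hw₀v rfl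
    have hmemu : ∀ g : T₁.edgeSet, T₁.lineGraph.Adj e₀ g → u ∈ g.1 := by
      intro g hg
      rw [SimpleGraph.lineGraph_adj_iff_exists] at hg
      obtain ⟨hgne, t, ht1, ht2⟩ := hg
      simp only [he₀, leafEdge, Sym2.mem_iff] at ht1
      rcases ht1 with rfl | rfl
      · exact absurd (leaf_edge_char hu₁ huniq₁ g ht2).symm hgne
      · exact ht2
    have hsimp₁ : ∀ f f' : T₁.edgeSet, T₁.lineGraph.Adj e₀ f → T₁.lineGraph.Adj e₀ f' →
        f ≠ f' → T₁.lineGraph.Adj f f' := by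
      intro f f' hf hf' hne
      rw [SimpleGraph.lineGraph_adj_iff_exists]
      exact ⟨hne, u, hmemu f hf, hmemu f' hf'⟩
    have hsimp₂ : ∀ g g' : T₂.edgeSet, T₂.lineGraph.Adj (φ e₀) g →
        T₂.lineGraph.Adj (φ e₀) g' → g ≠ g' → T₂.lineGraph.Adj g g' := by
      intro g g' hg hg' hne
      have hg1 : T₁.lineGraph.Adj (φ.symm (φ e₀)) (φ.symm g) := φ.symm.map_rel_iff.mpr hg
      have hg2 : T₁.lineGraph.Adj (φ.symm (φ e₀)) (φ.symm g') := φ.symm.map_rel_iff.mpr hg'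
      rw [RelIso.symm_apply_apply] at hg1 hg2
      have hres := hsimp₁ _ _ hg1 hg2 (fun hh => hne (φ.symm.injective hh))
      exact φ.symm.map_rel_iff.mp hres
    obtain ⟨x, y, hxy⟩ : ∃ x y, ((φ e₀) : Sym2 V₂) = s(x, y) := by
      induction ((φ e₀) : Sym2 V₂) using Sym2.ind with
      | _ x y => exact ⟨x, y, rfl⟩
    have hadjxy : T₂.Adj x y := by
      have h9 := (φ e₀).2
      rw [hxy] at h9
      exact h9
    have hxyne : x ≠ y := hadjxy.ne
    have hdich : (∀ g : T₂.edgeSet, y ∈ g.1 → g = φ e₀) ∨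
        (∀ g : T₂.edgeSet, x ∈ g.1 → g = φ e₀) := by
      by_contra hcon
      push_neg at hcon
      obtain ⟨⟨gy, hygy, hgy⟩, ⟨gx, hxgx, hgx⟩⟩ := hcon
      have hadjx : T₂.lineGraph.Adj (φ e₀) gx := by
        rw [SimpleGraph.lineGraph_adj_iff_exists]
        exact ⟨Ne.symm hgx, x, by rw [hxy]; simp, hxgx⟩
      have hadjy : T₂.lineGraph.Adj (φ e₀) gy := by
        rw [SimpleGraph.lineGraph_adj_iff_exists]
        exact ⟨Ne.symm hgy, y, by rw [hxy]; simp, hygy⟩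
      have hgxgy : gx ≠ gy := by
        intro hh
        exact hgx (Subtype.ext ((edge_eq gx hxgx (hh ▸ hygy) hxyne).trans hxy.symm))
      have hadj := hsimp₂ gx gy hadjx hadjy hgxgy
      rw [SimpleGraph.lineGraph_adj_iff_exists] at hadj
      obtain ⟨-, z, hzx, hzy⟩ := hadj
      have hznx : z ≠ x := fun hh =>
        hgy (Subtype.ext ((edge_eq gy (hh ▸ hzy) hygy hxyne).trans hxy.symm))
      have hzny : z ≠ y := fun hh =>
        hgx (Subtype.ext ((edge_eq gx hxgx (hh ▸ hzx) hxyne).trans hxy.symm))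
      have hxz : T₂.Adj x z := by
        have h9 := gx.2
        rw [edge_eq gx hxgx hzx (Ne.symm hznx)] at h9
        exact h9
      have hyz : T₂.Adj y z := by
        have h9 := gy.2
        rw [edge_eq gy hygy hzy (Ne.symm hzny)] at h9
        exact h9
      have hp1 : (SimpleGraph.Walk.cons hadjxy SimpleGraph.Walk.nil : T₂.Walk x y).IsPath := by
        simp [hxyne]
      have hp2 : (SimpleGraph.Walk.cons hxz (SimpleGraph.Walk.cons hyz.symm
          SimpleGraph.Walk.nil) : T₂.Walk x y).IsPath := by
        rw [SimpleGraph.Walk.cons_isPath_iff, SimpleGraph.Walk.cons_isPath_iff]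
        refine ⟨⟨SimpleGraph.Walk.IsPath.nil, ?_⟩, ?_⟩
        · simp only [SimpleGraph.Walk.support_nil, List.mem_singleton]
          exact hzny
        · simp only [SimpleGraph.Walk.support_cons, SimpleGraph.Walk.support_nil,
            List.mem_cons, List.mem_singleton, not_or]
          exact ⟨fun h => hznx h.symm, hxyne, List.not_mem_nil⟩
      have huniq := (h₂.existsUnique_path x y).unique hp1 hp2
      have := congrArg SimpleGraph.Walk.length huniq
      simp at this
    rcases hdich with hy | hx
    · -- y is the leaf
      have hu₂ : T₂.Adj y x := hadjxy.symm
      have huniq₂ : ∀ z, T₂.Adj y z → z = x := by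
        intro z hz
        have h9 := hy ⟨s(y, z), hz⟩ (by simp)
        have hval : s(y, z) = s(x, y) := (congrArg Subtype.val h9).trans hxy
        rw [Sym2.eq_iff] at hval
        rcases hval with ⟨h1, -⟩ | ⟨-, h2⟩
        · exact absurd h1.symm hxyne
        · exact h2
      have hφ2 : φ (leafEdge hu₁) = leafEdge hu₂ :=
        Subtype.ext (hxy.trans Sym2.eq_swap)
      apply main_step h₁ h₂ hu₁ huniq₁ hu₂ huniq₂ hbig φ hφ2
      intro φ'
      exact ih (Fintype.card {a : V₁ // a ≠ v})
        (by rw [← hn]; exact Fintype.card_subtype_lt (x := v) (by simp)) _ _ rfl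
        (delV_isTree h₁ hu₁ huniq₁) (delV_isTree h₂ hu₂ huniq₂) φ'
    · -- x is the leaf
      have hu₂ : T₂.Adj x y := hadjxy
      have huniq₂ : ∀ z, T₂.Adj x z → z = y := by
        intro z hz
        have h9 := hx ⟨s(x, z), hz⟩ (by simp)
        have hval : s(x, z) = s(x, y) := (congrArg Subtype.val h9).trans hxy
        rw [Sym2.eq_iff] at hval
        rcases hval with ⟨-, h2⟩ | ⟨h1, -⟩
        · exact h2
        · exact absurd h1 hxyne
      have hφ2 : φ (leafEdge hu₁) = leafEdge hu₂ := Subtype.ext hxy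
      apply main_step h₁ h₂ hu₁ huniq₁ hu₂ huniq₂ hbig φ hφ2
      intro φ'
      exact ih (Fintype.card {a : V₁ // a ≠ v})
        (by rw [← hn]; exact Fintype.card_subtype_lt (x := v) (by simp)) _ _ rfl
        (delV_isTree h₁ hu₁ huniq₁) (delV_isTree h₂ hu₂ huniq₂) φ'

end Key

end TreeLG


/-- Two finite trees with the same number of vertices and isomorphic line graphs are
isomorphic. -/
theorem tree_of_lineGraph {V₁ V₂ : Type*} [Fintype V₁] [Fintype V₂]
    (T₁ : SimpleGraph V₁) (T₂ : SimpleGraph V₂)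
    (hcard : Fintype.card V₁ = Fintype.card V₂)
    (h₁ : T₁.IsTree) (h₂ : T₂.IsTree)
    (hline : Nonempty (T₁.lineGraph ≃g T₂.lineGraph)) :
    Nonempty (T₁ ≃g T₂) := by
  obtain ⟨φ⟩ := hline
  obtain ⟨ψ, -⟩ := TreeLG.key (Fintype.card V₁) T₁ T₂ rfl h₁ h₂ φ
  exact ⟨ψ⟩
end

section
/- Let G be a simple graph on the vertex set Fin (n+1), and for each edge of G choose one vector of the form e_i − e_j in EuclideanSpace ℝ (Fin (n+1)), where {i, j} is that edge and e_0, …, e_n is the standard orthonormal basis. Then this family of vectors (indexed by the edge set of G) is linearly independent if and only if G is acyclic. -/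
open SimpleGraph


lemma myExists_leaf {V : Type*} [Fintype V] {H : SimpleGraph V} (hH : H.IsAcyclic)
    {a b : V} (hab : H.Adj a b) :
    ∃ u w, H.Adj u w ∧ ∀ x, H.Adj u x → x = w := by
  classical
  set P : ℕ → Prop := fun L => ∃ (u v : V) (p : H.Walk u v), p.IsPath ∧ p.length = L with hP
  have h1 : P 1 := ⟨a, b, Walk.cons hab Walk.nil, by simp [hab.ne], by simp⟩
  have hcard : 1 ≤ Fintype.card V := Fintype.card_pos_iff.mpr ⟨a⟩
  have hL : P (Nat.findGreatest P (Fintype.card V)) := Nat.findGreatest_spec hcard h1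
  have hL1 : 1 ≤ Nat.findGreatest P (Fintype.card V) := Nat.le_findGreatest hcard h1
  obtain ⟨u, v, p, hp, hlen⟩ := hL
  cases p with
  | nil => simp at hlen; omega
  | @cons _ w _ h q =>
    refine ⟨u, w, h, ?_⟩
    intro x hx
    by_contra hxw
    have hq : q.IsPath := hp.of_cons
    have hu : u ∉ q.support := (Walk.cons_isPath_iff h q).mp hp |>.2
    by_cases hxs : x ∈ (Walk.cons h q).support
    · have hxu : x ≠ u := hx.ne'
      have hxq : x ∈ q.support := by
        have : x = u ∨ x ∈ q.support := by
          simpa [Walk.support_cons] using hxs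
        exact this.resolve_left hxu
      set r := q.takeUntil x hxq with hr
      have hrp : r.IsPath := hq.takeUntil hxq
      have hur : u ∉ r.support := fun h' => hu (Walk.support_takeUntil_subset _ _ h')
      have htp : (Walk.cons h r).IsPath := (Walk.cons_isPath_iff h r).mpr ⟨hrp, hur⟩
      have hcyc : (Walk.cons hx ((Walk.cons h r).reverse)).IsCycle := by
        rw [Walk.cons_isCycle_iff]
        refine ⟨htp.reverse, ?_⟩
        rw [Walk.edges_reverse, List.mem_reverse]
        intro hmem
        rcases (by simpa using hmem : s(u, x) = s(u, w) ∨ s(u, x) ∈ r.edges) with h' | h'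
        · rcases Sym2.eq_iff.mp h' with ⟨_, h2⟩ | ⟨h2, h3⟩
          · exact hxw h2
          · exact hx.ne (h3.symm)
        · exact hur (r.fst_mem_support_of_mem_edges h')
      exact hH _ hcyc
    · have hp' : (Walk.cons hx.symm (Walk.cons h q)).IsPath :=
        (Walk.cons_isPath_iff _ _).mpr ⟨hp, hxs⟩
      have hlt : (Walk.cons hx.symm (Walk.cons h q)).length < Fintype.card V :=
        hp'.length_lt
      have : ¬ P ((Walk.cons h q).length + 1) := by
        apply Nat.findGreatest_is_greatest (n := Fintype.card V)
        · omega
        · have : (Walk.cons hx.symm (Walk.cons h q)).length = (Walk.cons h q).length + 1 := by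
            simp
          omega
      exact this ⟨x, v, _, hp', by simp⟩

lemma myExists_pendant {V : Type*} [Fintype V] {G : SimpleGraph V} (hG : G.IsAcyclic)
    (S : Finset (Sym2 V)) (hS : S.Nonempty) (hSG : ∀ e ∈ S, e ∈ G.edgeSet) :
    ∃ e ∈ S, ∃ u, u ∈ e ∧ ∀ e' ∈ S, e' ≠ e → u ∉ e' := by
  classical
  set H : SimpleGraph V := SimpleGraph.fromEdgeSet (S : Set (Sym2 V)) with hH
  have hle : H ≤ G := by
    intro v w hvw
    rw [hH, fromEdgeSet_adj _] at hvw
    exact (G.mem_edgeSet).mp (hSG _ (by exact_mod_cast hvw.1))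
  have hHa : H.IsAcyclic := by
    intro v c hc
    exact hG (c.mapLe hle) ((Walk.mapLe_isCycle hle).mpr hc)
  obtain ⟨e, he⟩ := hS
  obtain ⟨a, b, rfl⟩ : ∃ a b, e = s(a, b) := ⟨e.out.1, e.out.2, (Quot.out_eq e).symm⟩
  have hne : a ≠ b := by
    have := (G.not_isDiag_of_mem_edgeSet (hSG _ he))
    simpa [Sym2.mk_isDiag_iff] using this
  have hab : H.Adj a b := by
    rw [hH, fromEdgeSet_adj _]
    exact ⟨by exact_mod_cast he, hne⟩
  obtain ⟨u, w, huw, huniq⟩ := myExists_leaf hHa hab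
  have heS : s(u, w) ∈ S := by
    have := ((fromEdgeSet_adj _).mp (hH ▸ huw)).1
    exact_mod_cast this
  refine ⟨s(u, w), heS, u, Sym2.mem_mk_left u w, ?_⟩
  intro e' he' hne' hmem
  obtain ⟨x, rfl⟩ := Sym2.mem_iff_exists.mp hmem
  have hux : u ≠ x := by
    have := G.not_isDiag_of_mem_edgeSet (hSG _ he')
    simpa [Sym2.mk_isDiag_iff] using this
  have : H.Adj u x := by
    rw [hH, fromEdgeSet_adj _]
    exact ⟨by exact_mod_cast he', hux⟩
  exact hne' (by rw [huniq x this])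

lemma myLI {n : ℕ} (G : SimpleGraph (Fin (n + 1)))
    (vec : G.edgeSet → EuclideanSpace ℝ (Fin (n + 1)))
    (hvec : ∀ e : G.edgeSet, ∃ i j : Fin (n + 1),
      (e : Sym2 (Fin (n + 1))) = s(i, j) ∧
      vec e = EuclideanSpace.single i 1 - EuclideanSpace.single j 1)
    (hG : G.IsAcyclic) : LinearIndependent ℝ vec := by
  classical
  rw [linearIndependent_iff']
  intro s g hsum i hi
  by_contra hgi
  set t : Finset G.edgeSet := s.filter (fun j => g j ≠ 0) with ht
  set S : Finset (Sym2 (Fin (n + 1))) := t.image Subtype.val with hSdef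
  have hSne : S.Nonempty := ⟨i, Finset.mem_image_of_mem _ (Finset.mem_filter.mpr ⟨hi, hgi⟩)⟩
  have hSG : ∀ e ∈ S, e ∈ G.edgeSet := by
    intro e he
    obtain ⟨j, _, rfl⟩ := Finset.mem_image.mp he
    exact j.2
  obtain ⟨e, heS, u, hue, huniq⟩ := myExists_pendant hG S hSne hSG
  obtain ⟨j₀, hj₀t, hj₀e⟩ := Finset.mem_image.mp heS
  have hj₀s : j₀ ∈ s := (Finset.mem_filter.mp hj₀t).1
  have hgj₀ : g j₀ ≠ 0 := (Finset.mem_filter.mp hj₀t).2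
  have happ : ∑ j ∈ s, g j * (vec j) u = 0 := by
    have h0 := congrArg (fun z => (EuclideanSpace.proj u : EuclideanSpace ℝ (Fin (n+1)) →L[ℝ] ℝ) z) hsum
    simpa [map_sum, smul_eq_mul] using h0
  have hmain : ∑ j ∈ s, g j * (vec j) u = g j₀ * (vec j₀) u := by
    apply Finset.sum_eq_single j₀
    · intro j hjs hjne
      by_cases hgj : g j = 0
      · simp [hgj]
      · have hjS : (j : Sym2 (Fin (n + 1))) ∈ S :=
          Finset.mem_image_of_mem _ (Finset.mem_filter.mpr ⟨hjs, hgj⟩)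
        have hjne' : (j : Sym2 (Fin (n + 1))) ≠ e := by
          intro h'
          exact hjne (Subtype.ext (h'.trans hj₀e.symm))
        have hnu : u ∉ (j : Sym2 (Fin (n + 1))) := huniq _ hjS hjne'
        obtain ⟨a, b, hab, hv⟩ := hvec j
        have hua : u ≠ a := fun h => hnu (hab ▸ (h ▸ Sym2.mem_mk_left a b))
        have hub : u ≠ b := fun h => hnu (hab ▸ (h ▸ Sym2.mem_mk_right a b))
        have : (vec j) u = 0 := by
          rw [hv]
          simp [EuclideanSpace.single_apply, hua, hub]
        simp [this]
    · intro h; exact absurd hj₀s h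
  obtain ⟨a, b, hab, hv⟩ := hvec j₀
  have hane : a ≠ b := by
    have := G.not_isDiag_of_mem_edgeSet j₀.2
    rw [hab] at this
    simpa [Sym2.mk_isDiag_iff] using this
  have hu' : u = a ∨ u = b := by
    have : u ∈ (j₀ : Sym2 (Fin (n + 1))) := hj₀e ▸ hue
    rw [hab] at this
    simpa [Sym2.mem_iff] using this
  have hval : (vec j₀) u = 1 ∨ (vec j₀) u = -1 := by
    rw [hv]
    rcases hu' with rfl | rfl
    · left; simp [EuclideanSpace.single_apply, hane]
    · right; simp [EuclideanSpace.single_apply, hane.symm]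
  rw [hmain] at happ
  rcases hval with h | h <;> rw [h] at happ <;> simp at happ <;> exact hgj₀ happ


lemma myWalk_dart_sum {V : Type*} [Fintype V] [DecidableEq V] {G : SimpleGraph V} {u v : V}
    (p : G.Walk u v) :
    (p.darts.map fun d => (EuclideanSpace.single d.fst (1:ℝ) - EuclideanSpace.single d.snd 1)).sum
      = EuclideanSpace.single u 1 - EuclideanSpace.single v 1 := by
  induction p with
  | nil => simp
  | cons h q ih =>
    rw [Walk.darts_cons, List.map_cons, List.sum_cons, ih]
    abel

lemma myNotLI {n : ℕ} (G : SimpleGraph (Fin (n + 1)))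
    (vec : G.edgeSet → EuclideanSpace ℝ (Fin (n + 1)))
    (hvec : ∀ e : G.edgeSet, ∃ i j : Fin (n + 1),
      (e : Sym2 (Fin (n + 1))) = s(i, j) ∧
      vec e = EuclideanSpace.single i 1 - EuclideanSpace.single j 1)
    {v : Fin (n + 1)} (c : G.Walk v v) (hc : c.IsCycle) : ¬ LinearIndependent ℝ vec := by
  classical
  intro hli
  letI : Fintype G.edgeSet := Fintype.ofFinite _
  rw [Fintype.linearIndependent_iff] at hli
  set D : Finset G.Dart := c.darts.toFinset with hD
  set coef : G.edgeSet → ℝ := fun e => ∑ d ∈ D,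
    if d.edge = (e : Sym2 (Fin (n + 1))) then
      (if vec e = EuclideanSpace.single d.fst 1 - EuclideanSpace.single d.snd 1
        then (1 : ℝ) else -1)
    else 0 with hcoef
  -- the signed term of a dart equals its edge-vector contribution
  have key : ∀ d : G.Dart, ∀ hd : d.edge ∈ G.edgeSet,
      (if vec ⟨d.edge, hd⟩ = EuclideanSpace.single d.fst 1 - EuclideanSpace.single d.snd 1
        then (1 : ℝ) else -1) • vec ⟨d.edge, hd⟩
      = EuclideanSpace.single d.fst 1 - EuclideanSpace.single d.snd 1 := by
    intro d hd
    obtain ⟨i, j, hij, hv⟩ := hvec ⟨d.edge, hd⟩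
    have hedge : d.edge = s(d.fst, d.snd) := rfl
    have hfs : d.fst ≠ d.snd := d.adj.ne
    have : s(d.fst, d.snd) = s(i, j) := by rw [← hedge]; exact_mod_cast hij
    rcases Sym2.eq_iff.mp this with ⟨h1, h2⟩ | ⟨h1, h2⟩
    · rw [hv, h1, h2, if_pos rfl, one_smul]
    · have hneg : vec ⟨d.edge, hd⟩ =
          -(EuclideanSpace.single d.fst 1 - EuclideanSpace.single d.snd 1) := by
        rw [hv, ← h1, ← h2]; abel
      have hnz : (EuclideanSpace.single d.fst (1:ℝ) - EuclideanSpace.single d.snd 1) ≠ 0 := by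
        intro h0
        have := congrArg (fun x => x d.fst) h0
        simp [EuclideanSpace.single_apply, hfs] at this
      have hne' : vec ⟨d.edge, hd⟩ ≠
          EuclideanSpace.single d.fst 1 - EuclideanSpace.single d.snd 1 := by
        intro h'
        apply hnz
        have h2 : (EuclideanSpace.single d.fst (1:ℝ) - EuclideanSpace.single d.snd 1)
            + (EuclideanSpace.single d.fst (1:ℝ) - EuclideanSpace.single d.snd 1) = 0 :=
          add_eq_zero_iff_eq_neg.mpr (h'.symm.trans hneg)
        have h3 : (2:ℝ) • (EuclideanSpace.single d.fst (1:ℝ) - EuclideanSpace.single d.snd 1) = 0 := by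
          rw [two_smul]; exact h2
        rcases smul_eq_zero.mp h3 with h4 | h4
        · norm_num at h4
        · exact h4
      rw [if_neg hne', hneg, neg_smul, one_smul, neg_neg]
  have hdartsnd : c.darts.Nodup := by
    have hen : c.edges.Nodup := hc.edges_nodup
    rw [Walk.edges] at hen
    exact hen.of_map _
  have hmemD : ∀ d ∈ D, d.edge ∈ G.edgeSet := by
    intro d hd
    exact c.edges_subset_edgeSet (List.mem_map_of_mem (List.mem_toFinset.mp hd))
  have h0 : ∑ e : G.edgeSet, coef e • vec e = 0 := by
    have step1 : ∑ e : G.edgeSet, coef e • vec e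
        = ∑ d ∈ D, ∑ e : G.edgeSet,
          (if d.edge = (e : Sym2 (Fin (n + 1))) then
            (if vec e = EuclideanSpace.single d.fst 1 - EuclideanSpace.single d.snd 1
              then (1 : ℝ) else -1) else 0) • vec e := by
      rw [Finset.sum_comm]
      refine Finset.sum_congr rfl fun e _ => ?_
      rw [hcoef, Finset.sum_smul]
    have step2 : ∀ d ∈ D, ∑ e : G.edgeSet,
          (if d.edge = (e : Sym2 (Fin (n + 1))) then
            (if vec e = EuclideanSpace.single d.fst 1 - EuclideanSpace.single d.snd 1
              then (1 : ℝ) else -1) else 0) • vec e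
        = EuclideanSpace.single d.fst 1 - EuclideanSpace.single d.snd 1 := by
      intro d hd
      have he : d.edge ∈ G.edgeSet := hmemD d hd
      rw [Finset.sum_eq_single (⟨d.edge, he⟩ : G.edgeSet)]
      · rw [if_pos rfl]
        exact key d he
      · intro e _ hne
        rw [if_neg, zero_smul]
        intro h'
        exact hne (Subtype.ext h'.symm)
      · intro h'
        exact absurd (Finset.mem_univ _) h'
    rw [step1, Finset.sum_congr rfl step2]
    have := List.sum_toFinset
      (fun d : G.Dart => EuclideanSpace.single d.fst (1:ℝ) - EuclideanSpace.single d.snd 1)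
      hdartsnd
    rw [hD, this, myWalk_dart_sum c, sub_self]
  have hall := hli coef h0
  cases c with
  | nil => exact hc.ne_nil rfl
  | @cons _ w _ hadj q =>
    set d₀ : G.Dart := ⟨(v, w), hadj⟩ with hd₀
    have hd₀mem : d₀ ∈ (Walk.cons hadj q).darts := by
      rw [Walk.darts_cons]; exact List.mem_cons_self
    have he₀ : d₀.edge ∈ G.edgeSet := by
      exact (Walk.cons hadj q).edges_subset_edgeSet (List.mem_map_of_mem hd₀mem)
    have hinj := List.inj_on_of_nodup_map
      (f := SimpleGraph.Dart.edge) (l := (Walk.cons hadj q).darts)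
      (by rw [← Walk.edges]; exact hc.edges_nodup)
    have hval : coef ⟨d₀.edge, he₀⟩ =
        (if vec ⟨d₀.edge, he₀⟩ =
            EuclideanSpace.single d₀.fst 1 - EuclideanSpace.single d₀.snd 1
          then (1 : ℝ) else -1) := by
      simp only [hcoef]
      rw [Finset.sum_eq_single d₀]
      · rw [if_pos rfl]
      · intro d hd hne
        rw [if_neg]
        intro h'
        exact hne (hinj (List.mem_toFinset.mp hd) hd₀mem h')
      · intro h'
        exact absurd (List.mem_toFinset.mpr hd₀mem) h'
    rw [hall ⟨d₀.edge, he₀⟩] at hval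
    split at hval <;> norm_num at hval

/-- For a simple graph `G` on `Fin (n+1)` and a choice of a vector `eᵢ - eⱼ` for each
edge `{i, j}` of `G`, the resulting family of vectors is linearly independent if and
only if `G` is acyclic. -/
theorem linearIndependent_edge_vectors_iff_acyclic {n : ℕ}
    (G : SimpleGraph (Fin (n + 1)))
    (vec : G.edgeSet → EuclideanSpace ℝ (Fin (n + 1)))
    (hvec : ∀ e : G.edgeSet, ∃ i j : Fin (n + 1),
      (e : Sym2 (Fin (n + 1))) = s(i, j) ∧
      vec e = EuclideanSpace.single i 1 - EuclideanSpace.single j 1) :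
    LinearIndependent ℝ vec ↔ G.IsAcyclic := by
  constructor
  · intro hli v c hc
    exact myNotLI G vec hvec c hc hli
  · exact myLI G vec hvec
end

section
/- Let f_1, …, f_n be linearly independent vectors in EuclideanSpace ℝ (Fin (n+1)), each of the form e_i − e_j for some i ≠ j (where e_0, …, e_n is the standard orthonormal basis). Then the subgroup of linear isometries of EuclideanSpace ℝ (Fin (n+1)) generated by the reflections in f_1, …, f_n equals the subgroup generated by all reflections in the vectors e_i − e_j, 0 ≤ i < j ≤ n, namely the group of all linear isometries permuting the coordinates. (The reflection group A_n has no proper reflection subgroups of maximal rank: any n linearly independent roots of A_n generate the full Weyl group of A_n.) -/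
noncomputable def permIsoHom (m : ℕ) :
    Equiv.Perm (Fin m) →* (EuclideanSpace ℝ (Fin m) ≃ₗᵢ[ℝ] EuclideanSpace ℝ (Fin m)) where
  toFun σ := LinearIsometryEquiv.piLpCongrLeft 2 ℝ ℝ σ
  map_one' := by
    refine LinearIsometryEquiv.ext fun x => PiLp.ext fun t => ?_
    simp [LinearIsometryEquiv.piLpCongrLeft_apply]
    rfl
  map_mul' σ τ := by
    refine LinearIsometryEquiv.ext fun x => PiLp.ext fun t => ?_
    simp [LinearIsometryEquiv.piLpCongrLeft_apply]
    rfl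

theorem permIsoHom_apply {m : ℕ} (σ : Equiv.Perm (Fin m)) (x : EuclideanSpace ℝ (Fin m))
    (t : Fin m) : permIsoHom m σ x t = x (σ.symm t) := by
  simp [permIsoHom, LinearIsometryEquiv.piLpCongrLeft_apply]

theorem reflIn_eq_swap {m : ℕ} {i j : Fin m} (hij : i ≠ j) :
    reflIn (EuclideanSpace.single i (1:ℝ) - EuclideanSpace.single j 1) =
      permIsoHom m (Equiv.swap i j) := by
  set v : EuclideanSpace ℝ (Fin m) := EuclideanSpace.single i (1:ℝ) - EuclideanSpace.single j 1
    with hvdef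
  have hnorm : (‖v‖ : ℝ) ^ 2 = 2 := by
    rw [← real_inner_self_eq_norm_sq]
    simp [hvdef, inner_sub_left, inner_sub_right, EuclideanSpace.inner_single_left,
      EuclideanSpace.single_apply, hij, hij.symm, -inner_self_eq_norm_sq_to_K, -real_inner_self_eq_norm_sq]
    norm_num
  refine LinearIsometryEquiv.ext fun x => PiLp.ext fun t => ?_
  have hLHS : reflIn v x = x - (inner ℝ v x : ℝ) • v := by
    rw [reflIn, Submodule.reflection_orthogonal_apply, Submodule.reflection_singleton_apply]
    simp only [RCLike.ofReal_real_eq_id, id_eq, hnorm]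
    module
  have hinner : (inner ℝ v x : ℝ) = x i - x j := by
    simp [hvdef, inner_sub_left, EuclideanSpace.inner_single_left]
  have hcoord : reflIn v x t = x t - (x i - x j) * v t := by
    rw [hLHS, hinner]; simp [PiLp.sub_apply, PiLp.smul_apply]
  have hv : ∀ s, v s = (if s = i then (1:ℝ) else 0) - (if s = j then 1 else 0) := by
    intro s; simp [hvdef, EuclideanSpace.single_apply]
  rw [hcoord, permIsoHom_apply, Equiv.symm_swap, hv]
  rcases eq_or_ne t i with rfl | hti
  · rw [Equiv.swap_apply_left]; simp [hij]
  · rcases eq_or_ne t j with rfl | htj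
    · rw [Equiv.swap_apply_right]; simp [hij.symm]
    · rw [Equiv.swap_apply_of_ne_of_ne hti htj]; simp [hti, htj]

theorem closure_swaps_eq_top {n : ℕ} (f : Fin n → EuclideanSpace ℝ (Fin (n + 1)))
    (hli : LinearIndependent ℝ f) (a b : Fin n → Fin (n + 1)) (hab : ∀ k, a k ≠ b k)
    (hf : ∀ k, f k = EuclideanSpace.single (a k) 1 - EuclideanSpace.single (b k) 1) :
    Subgroup.closure (Set.range fun k => Equiv.swap (a k) (b k)) = ⊤ := by
  classical
  set H := Subgroup.closure (Set.range fun k => Equiv.swap (a k) (b k)) with hH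
  let rel : Fin (n + 1) → Fin (n + 1) → Prop := fun x y => x = y ∨ Equiv.swap x y ∈ H
  have hrefl : ∀ x, rel x x := fun x => Or.inl rfl
  have hsymm : ∀ x y, rel x y → rel y x := by
    rintro x y (rfl | h)
    · exact Or.inl rfl
    · exact Or.inr (by rwa [Equiv.swap_comm])
  have htrans : ∀ x y z, rel x y → rel y z → rel x z := by
    rintro x y z (rfl | h1) hyz
    · exact hyz
    rcases hyz with rfl | h2
    · exact Or.inr h1
    rcases eq_or_ne x z with rfl | hxz
    · exact Or.inl rfl
    rcases eq_or_ne x y with rfl | hxy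
    · exact Or.inr h2
    have h3 := H.mul_mem (H.mul_mem h2 h1) h2
    rw [Equiv.swap_mul_swap_mul_swap hxy hxz] at h3
    exact Or.inr (by rwa [Equiv.swap_comm])
  have hrelk : ∀ k, rel (a k) (b k) := fun k => Or.inr (Subgroup.subset_closure ⟨k, rfl⟩)
  have hall : ∀ x y, rel x y := by
    by_contra hc
    push_neg at hc
    obtain ⟨p, q, hpq⟩ := hc
    let χ : EuclideanSpace ℝ (Fin (n + 1)) := WithLp.toLp 2 fun t => if rel t p then (1 : ℝ) else 0
    let o : EuclideanSpace ℝ (Fin (n + 1)) := WithLp.toLp 2 fun _ => 1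
    set K := Submodule.span ℝ (Set.range f) with hK
    have hχk : ∀ k, (inner ℝ (f k) χ : ℝ) = 0 := by
      intro k
      rw [hf k]
      simp only [inner_sub_left, EuclideanSpace.inner_single_left, map_one, one_mul]
      have heq : rel (a k) p ↔ rel (b k) p :=
        ⟨fun h => htrans _ _ _ (hsymm _ _ (hrelk k)) h, fun h => htrans _ _ _ (hrelk k) h⟩
      show (if rel (a k) p then (1:ℝ) else 0) - (if rel (b k) p then (1:ℝ) else 0) = 0
      rw [if_congr heq rfl rfl, sub_self]
    have hok : ∀ k, (inner ℝ (f k) o : ℝ) = 0 := by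
      intro k
      rw [hf k]
      simp only [inner_sub_left, EuclideanSpace.inner_single_left, map_one, one_mul]
      show (1 : ℝ) - 1 = 0
      ring
    have hmemKo : ∀ (w : EuclideanSpace ℝ (Fin (n + 1))),
        (∀ k, (inner ℝ (f k) w : ℝ) = 0) → w ∈ Kᗮ := by
      intro w hw
      have hle : K ≤ (ℝ ∙ w)ᗮ := by
        rw [hK, Submodule.span_le]
        rintro u ⟨k, rfl⟩
        rw [SetLike.mem_coe, Submodule.mem_orthogonal_singleton_iff_inner_left]
        exact hw k
      have := Submodule.orthogonal_le hle
      exact this (by rw [Submodule.orthogonal_orthogonal]; exact Submodule.mem_span_singleton_self w)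
    have hχK : χ ∈ Kᗮ := hmemKo χ hχk
    have hoK : o ∈ Kᗮ := hmemKo o hok
    have hKrank : Module.finrank ℝ K = n := by
      rw [hK, finrank_span_eq_card hli, Fintype.card_fin]
    have horth : Module.finrank ℝ Kᗮ = 1 := by
      have h := Submodule.finrank_add_finrank_orthogonal K
      rw [hKrank, finrank_euclideanSpace_fin] at h
      omega
    have hχ0 : χ ≠ 0 := by
      intro h
      have h' : χ p = 0 := by rw [h]; rfl
      simp only [χ, hrefl p, if_pos] at h'
      exact one_ne_zero h'
    have hspan : (ℝ ∙ χ) = Kᗮ :=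
      Submodule.eq_of_le_of_finrank_eq ((Submodule.span_singleton_le_iff_mem _ _).2 hχK)
        (by rw [horth, finrank_span_singleton hχ0])
    obtain ⟨c, hc⟩ := Submodule.mem_span_singleton.1 (hspan ▸ hoK)
    have h1 : (c • χ) p = o p := by rw [hc]
    have h2 : (c • χ) q = o q := by rw [hc]
    have hqp : ¬ rel q p := fun h => hpq (hsymm _ _ h)
    simp only [χ, o, PiLp.smul_apply, smul_eq_mul, hrefl p, if_pos, if_neg hqp,
      mul_one, mul_zero] at h1 h2
    exact zero_ne_one h2
  refine eq_top_iff.2 ?_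
  rw [← Equiv.Perm.closure_isSwap, Subgroup.closure_le]
  rintro σ ⟨x, y, hxy, rfl⟩
  rcases hall x y with h | h
  · exact absurd h hxy
  · exact h

/-- `Aₙ` has no proper reflection subgroup of maximal rank: `n` linearly independent
roots of the form `eᵢ - eⱼ` generate, via the reflections in them, the same group as
all the reflections in the roots `eᵢ - eⱼ`, namely the group of coordinate
permutations. -/
theorem An_no_maximal_rank_subgroup {n : ℕ}
    (f : Fin n → EuclideanSpace ℝ (Fin (n + 1)))
    (hli : LinearIndependent ℝ f)
    (hform : ∀ k, ∃ i j : Fin (n + 1), i ≠ j ∧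
      f k = EuclideanSpace.single i 1 - EuclideanSpace.single j 1) :
    Subgroup.closure (Set.range fun k => reflIn (f k)) =
      Subgroup.closure {r | ∃ i j : Fin (n + 1), i ≠ j ∧
        r = reflIn (EuclideanSpace.single i (1 : ℝ) - EuclideanSpace.single j 1)} := by
  classical
  choose a b hab hf using hform
  have h1 : (Set.range fun k => reflIn (f k)) =
      (permIsoHom (n + 1)) '' (Set.range fun k => Equiv.swap (a k) (b k)) := by
    rw [show (fun k => reflIn (f k)) = fun k => permIsoHom (n + 1) (Equiv.swap (a k) (b k))
      from funext fun k => by rw [hf k]; exact reflIn_eq_swap (hab k)]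
    rw [← Set.range_comp]
    rfl
  have h2 : {r | ∃ i j : Fin (n + 1), i ≠ j ∧
        r = reflIn (EuclideanSpace.single i (1 : ℝ) - EuclideanSpace.single j 1)} =
      (permIsoHom (n + 1)) '' {σ : Equiv.Perm (Fin (n + 1)) | σ.IsSwap} := by
    ext r
    simp only [Set.mem_setOf_eq, Set.mem_image]
    constructor
    · rintro ⟨i, j, hij, rfl⟩
      exact ⟨Equiv.swap i j, ⟨i, j, hij, rfl⟩, (reflIn_eq_swap hij).symm⟩
    · rintro ⟨σ, ⟨i, j, hij, rfl⟩, rfl⟩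
      exact ⟨i, j, hij, (reflIn_eq_swap hij).symm⟩
  rw [h1, h2, ← MonoidHom.map_closure, ← MonoidHom.map_closure,
    closure_swaps_eq_top f hli a b hab hf, Equiv.Perm.closure_isSwap]
end

section
/- Let f, g : Fin n → EuclideanSpace ℝ (Fin (n+1)) be two linearly independent families of vectors, each vector of the form e_i − e_j for some i ≠ j (where e_0, …, e_n is the standard orthonormal basis). If |⟪f k, f l⟫| = |⟪g k, g l⟫| for all k, l, then there exist a permutation σ of Fin (n+1) and a sign function ε : Fin n → {−1, 1} such that g k = ε k · (σ applied coordinatewise to f k) for every k. (Every family of simplices generating A_n has a unique embedding into the root system of A_n up to the action of the Weyl group of A_n.) -/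
open scoped RealInnerProductSpace

noncomputable def Ev {m : ℕ} (i j : Fin m) : EuclideanSpace ℝ (Fin m) :=
  EuclideanSpace.single i 1 - EuclideanSpace.single j 1

lemma single_inner {m : ℕ} (i j : Fin m) :
    ⟪(EuclideanSpace.single i (1:ℝ) : EuclideanSpace ℝ (Fin m)), EuclideanSpace.single j 1⟫ =
      if i = j then 1 else 0 := by
  rw [EuclideanSpace.inner_single_left]
  simp [EuclideanSpace.single_apply, eq_comm]

lemma inner_Ev {m : ℕ} (i j k l : Fin m) :
    ⟪(Ev i j : EuclideanSpace ℝ (Fin m)), Ev k l⟫ =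
      (if i = k then (1:ℝ) else 0) + (if j = l then 1 else 0)
        - (if i = l then 1 else 0) - (if j = k then 1 else 0) := by
  simp only [Ev, inner_sub_left, inner_sub_right, single_inner]
  ring

lemma fpair_eq_fpair_iff {α : Type*} [DecidableEq α] {a b c d : α} :
    ({a, b} : Finset α) = {c, d} ↔ a = c ∧ b = d ∨ a = d ∧ b = c := by
  rw [← Finset.coe_inj]; push_cast; exact Set.pair_eq_pair_iff

lemma inner_Ev_ne_zero_iff {m : ℕ} {i j p q : Fin m} (hij : i ≠ j) (hpq : p ≠ q)
    (hne : ({i, j} : Finset (Fin m)) ≠ {p, q}) :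
    ⟪(Ev i j : EuclideanSpace ℝ (Fin m)), Ev p q⟫ ≠ 0 ↔
      (({i, j} : Finset (Fin m)) ∩ {p, q}).Nonempty := by
  rw [Ne, fpair_eq_fpair_iff] at hne
  push_neg at hne
  rw [inner_Ev]
  constructor
  · intro h
    by_contra hdisj
    rw [Finset.not_nonempty_iff_eq_empty, Finset.eq_empty_iff_forall_notMem] at hdisj
    have h1 : i ≠ p := fun hc => hdisj i (by simp [hc])
    have h2 : i ≠ q := fun hc => hdisj i (by simp [hc])
    have h3 : j ≠ p := fun hc => hdisj j (by simp [hc])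
    have h4 : j ≠ q := fun hc => hdisj j (by simp [hc])
    simp [h1, h2, h3, h4] at h
  · rintro ⟨x, hx⟩
    simp only [Finset.mem_inter, Finset.mem_insert, Finset.mem_singleton] at hx
    obtain ⟨hx1 | hx1, hx2 | hx2⟩ := hx
    · have hip : i = p := hx1.symm.trans hx2
      have h2 : i ≠ q := fun hc => hpq (hip.symm.trans hc)
      have h3 : j ≠ q := hne.1 hip
      have h4 : j ≠ p := fun hc => hij (hip.trans hc.symm)
      simp [hip, h2, h3, h4, hpq, Ne.symm hpq]
    · have hiq : i = q := hx1.symm.trans hx2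
      have h1 : i ≠ p := fun hc => hpq (hc.symm.trans hiq)
      have h3 : j ≠ p := hne.2 hiq
      have h4 : j ≠ q := fun hc => hij (hiq.trans hc.symm)
      simp [hiq, h1, h3, h4, hpq, Ne.symm hpq]
    · have hjp : j = p := hx1.symm.trans hx2
      have h1 : i ≠ p := fun hc => hij (hc.trans hjp.symm)
      have h2 : i ≠ q := fun hc => hne.2 hc hjp
      have h4 : j ≠ q := fun hc => hpq (hjp.symm.trans hc)
      simp [hjp, h1, h2, h4, hpq, Ne.symm hpq]
    · have hjq : j = q := hx1.symm.trans hx2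
      have h1 : i ≠ q := fun hc => hij (hc.trans hjq.symm)
      have h2 : i ≠ p := fun hc => hne.1 hc hjq
      have h3 : j ≠ p := fun hc => hpq (hc.symm.trans hjq)
      simp [hjq, h1, h2, h3, hpq, Ne.symm hpq]

lemma Ev_neg {m : ℕ} (i j : Fin m) : Ev i j = - Ev j i := by
  simp only [Ev]; abel

lemma sign_rep {m : ℕ} {i j p q : Fin m} (h : ({i, j} : Finset (Fin m)) = {p, q}) :
    Ev p q = Ev i j ∨ Ev p q = - Ev i j := by
  rcases fpair_eq_fpair_iff.mp h with ⟨h1, h2⟩ | ⟨h1, h2⟩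
  · left; rw [h1, h2]
  · right; rw [h1, h2, ← Ev_neg]

lemma Ev_triangle {m : ℕ} (p q r : Fin m) : Ev p q - Ev p r + Ev q r = 0 := by
  simp only [Ev]; abel


section
variable {ι V : Type*} [Fintype ι] [DecidableEq ι] [AddCommGroup V] [Module ℝ V] {g : ι → V}

lemma li_two (h : LinearIndependent ℝ g) {k l : ι} (hkl : k ≠ l) {x y : ℝ} (hx : x ≠ 0)
    (hrel : x • g k + y • g l = 0) : False := by
  have := Fintype.linearIndependent_iff.mp h
    (fun m => if m = k then x else if m = l then y else 0) ?_ k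
  · simp at this; exact hx this
  · rw [← Finset.sum_subset (Finset.subset_univ {k, l})]
    · rw [Finset.sum_pair hkl]; simp [hkl, Ne.symm hkl, hrel]
    · intro m _ hm
      simp only [Finset.mem_insert, Finset.mem_singleton, not_or] at hm
      simp [hm.1, hm.2]

lemma li_three (h : LinearIndependent ℝ g) {a b c : ι} (hab : a ≠ b) (hac : a ≠ c)
    (hbc : b ≠ c) {x y z : ℝ} (hx : x ≠ 0)
    (hrel : x • g a + y • g b + z • g c = 0) : False := by
  have := Fintype.linearIndependent_iff.mp h
    (fun m => if m = a then x else if m = b then y else if m = c then z else 0) ?_ a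
  · simp at this; exact hx this
  · rw [← Finset.sum_subset (Finset.subset_univ {a, b, c})]
    · rw [Finset.sum_insert (by simp [hab, hac]), Finset.sum_pair hbc]
      simp [hab, hac, hbc, Ne.symm hab, Ne.symm hac, Ne.symm hbc, hrel]
      rw [← add_assoc]; exact hrel
    · intro m _ hm
      simp only [Finset.mem_insert, Finset.mem_singleton, not_or] at hm
      simp [hm.1, hm.2.1, hm.2.2]

end

noncomputable def sumL (m : ℕ) : EuclideanSpace ℝ (Fin m) →ₗ[ℝ] ℝ where
  toFun x := ∑ i, x i
  map_add' x y := by simp [PiLp.add_apply, Finset.sum_add_distrib]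
  map_smul' c x := by simp [PiLp.smul_apply, Finset.mul_sum]

lemma sumL_single {m : ℕ} (i : Fin m) : sumL m (EuclideanSpace.single i 1) = 1 := by
  simp [sumL, EuclideanSpace.single_apply]

lemma sumL_Ev {m : ℕ} (i j : Fin m) : sumL m (Ev i j) = 0 := by
  rw [Ev, map_sub, sumL_single, sumL_single, sub_self]

lemma exists_leaf {n m : ℕ} (af bf : Fin n → Fin m)
    (hli : LinearIndependent ℝ (fun k => Ev (af k) (bf k)))
    (s : Finset (Fin n)) (hs : s.Nonempty) :
    ∃ k₀ ∈ s, ∃ v ∈ ({af k₀, bf k₀} : Finset (Fin m)),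
      ∀ k ∈ s, k ≠ k₀ → v ∉ ({af k, bf k} : Finset (Fin m)) := by
  by_contra hcon
  push_neg at hcon
  classical
  set E : Fin n → Finset (Fin m) := fun k => {af k, bf k} with hE
  set S : Finset (Fin m) := s.biUnion E with hS
  have hsub : ∀ k ∈ s, E k ⊆ S := fun k hk => Finset.subset_biUnion_of_mem E hk
  -- degree bound
  have hdeg : ∀ x ∈ S, 2 ≤ (s.filter (fun k => x ∈ E k)).card := by
    intro x hx
    obtain ⟨k₀, hk₀s, hk₀x⟩ := Finset.mem_biUnion.mp hx
    obtain ⟨k, hks, hkne, hkx⟩ := hcon k₀ hk₀s x hk₀x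
    refine Finset.one_lt_card.mpr ⟨k₀, ?_, k, ?_, Ne.symm hkne⟩ <;>
      simp [Finset.mem_filter, hk₀s, hk₀x, hks, show x ∈ E k from hkx]
  -- edge cardinality bound
  have hEcard : ∀ k, (E k).card ≤ 2 := fun k => Finset.card_insert_le _ _ |>.trans (by simp)
  -- double counting
  have hsum : ∑ x ∈ S, (s.filter (fun k => x ∈ E k)).card = ∑ k ∈ s, (E k).card := by
    simp_rw [Finset.card_filter]
    rw [Finset.sum_comm]
    refine Finset.sum_congr rfl fun k hk => ?_
    rw [← Finset.card_filter]
    congr 1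
    ext x
    simp only [Finset.mem_filter]
    exact ⟨fun h => h.2, fun h => ⟨hsub k hk h, h⟩⟩
  have hScard : S.card ≤ s.card := by
    have h1 : 2 * S.card ≤ ∑ x ∈ S, (s.filter (fun k => x ∈ E k)).card := by
      have := Finset.sum_le_sum hdeg
      simpa [Finset.sum_const, mul_comm] using this
    have h2 : ∑ k ∈ s, (E k).card ≤ 2 * s.card := by
      have := Finset.sum_le_sum (fun k (_ : k ∈ s) => hEcard k)
      simpa [Finset.sum_const, mul_comm] using this
    omega
  -- dimension argument
  set T : Finset (EuclideanSpace ℝ (Fin m)) :=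
    S.image (fun i => EuclideanSpace.single i 1) with hT
  have hsingle_inj : Function.Injective (fun i : Fin m => (EuclideanSpace.single i 1 : EuclideanSpace ℝ (Fin m))) := by
    intro i j hij
    have h2 := congrArg (fun v : EuclideanSpace ℝ (Fin m) => v i) hij
    by_contra hne
    simp [EuclideanSpace.single_apply, hne] at h2
  have hTcard : T.card = S.card := Finset.card_image_of_injective _ hsingle_inj
  have hTli : LinearIndependent ℝ ((↑) : ↥(T : Set (EuclideanSpace ℝ (Fin m))) → EuclideanSpace ℝ (Fin m)) := by
    have hb := (EuclideanSpace.basisFun (Fin m) ℝ).toBasis.linearIndependent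
    have hr : (T : Set (EuclideanSpace ℝ (Fin m))) ⊆
        Set.range (fun i : Fin m => (EuclideanSpace.single i 1 : EuclideanSpace ℝ (Fin m))) := by
      intro x hx
      simp only [hT, Finset.coe_image, Set.mem_image] at hx
      obtain ⟨i, _, rfl⟩ := hx
      exact Set.mem_range_self i
    refine LinearIndepOn.mono (v := id) ?_ hr
    have hfun : ⇑(EuclideanSpace.basisFun (Fin m) ℝ).toBasis
        = fun i : Fin m => (EuclideanSpace.single i 1 : EuclideanSpace ℝ (Fin m)) := by
      funext i
      rw [OrthonormalBasis.coe_toBasis]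
      exact EuclideanSpace.basisFun_apply (Fin m) ℝ i
    rw [hfun] at hb
    exact (linearIndepOn_id_range_iff hb.injective).mpr hb
  set spanT := Submodule.span ℝ (T : Set (EuclideanSpace ℝ (Fin m))) with hspanT
  set W := spanT ⊓ LinearMap.ker (sumL m) with hW
  have hSne : S.Nonempty := by
    obtain ⟨k, hk⟩ := hs
    exact ⟨af k, hsub k hk (by simp [hE])⟩
  have hWlt : W < spanT := by
    obtain ⟨x₀, hx₀⟩ := hSne
    refine lt_of_le_of_ne inf_le_left (fun heq => ?_)
    have hmem : (EuclideanSpace.single x₀ 1 : EuclideanSpace ℝ (Fin m)) ∈ spanT :=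
      Submodule.subset_span (by simp [hT]; exact ⟨x₀, hx₀, rfl⟩)
    rw [← heq] at hmem
    have h3 := (Submodule.mem_inf.mp hmem).2
    rw [LinearMap.mem_ker, sumL_single] at h3
    norm_num at h3
  have hrankW : Module.finrank ℝ W < S.card := by
    have := Submodule.finrank_lt_finrank_of_lt hWlt
    rwa [hspanT, finrank_span_finset_eq_card hTli, hTcard] at this
  have hmemW : ∀ k ∈ s, Ev (af k) (bf k) ∈ W := by
    intro k hk
    rw [hW, Submodule.mem_inf]
    constructor
    · have h1 : (EuclideanSpace.single (af k) 1 : EuclideanSpace ℝ (Fin m)) ∈ spanT :=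
        Submodule.subset_span (by simp [hT]; exact ⟨af k, hsub k hk (by simp [hE]), rfl⟩)
      have h2 : (EuclideanSpace.single (bf k) 1 : EuclideanSpace ℝ (Fin m)) ∈ spanT :=
        Submodule.subset_span (by simp [hT]; exact ⟨bf k, hsub k hk (by simp [hE]), rfl⟩)
      exact Submodule.sub_mem _ h1 h2
    · rw [LinearMap.mem_ker, sumL_Ev]
  have hcard2 : s.card ≤ Module.finrank ℝ W := by
    set f' : ↥s → W := fun k => ⟨Ev (af k.1) (bf k.1), hmemW k.1 k.2⟩ with hf'
    have h1 : LinearIndependent ℝ (fun k : ↥s => Ev (af k.1) (bf k.1)) :=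
      hli.comp _ Subtype.val_injective
    have h2 : LinearIndependent ℝ f' := by
      apply LinearIndependent.of_comp W.subtype
      convert h1
      rfl
    simpa [Fintype.card_coe] using h2.fintype_card_le_finrank
  omega

lemma mem_pair_cases {α : Type*} [DecidableEq α] {a b c d : α}
    (ha : a ∈ ({c, d} : Finset α)) (hb : b ∈ ({c, d} : Finset α))
    (hab : a ≠ b) : (a = c ∧ b = d) ∨ (a = d ∧ b = c) := by
  simp only [Finset.mem_insert, Finset.mem_singleton] at ha hb
  rcases ha with rfl | rfl <;> rcases hb with h | h <;> tauto

lemma pair_eq_of_mem {α : Type*} [DecidableEq α] {a b c d : α}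
    (ha : a ∈ ({c, d} : Finset α)) (hb : b ∈ ({c, d} : Finset α))
    (hab : a ≠ b) : ({c, d} : Finset α) = {a, b} := by
  rcases mem_pair_cases ha hb hab with ⟨rfl, rfl⟩ | ⟨rfl, rfl⟩
  · rfl
  · exact Finset.pair_comm _ _

lemma pair_repr {α : Type*} [DecidableEq α] {a b x : α}
    (hx : x ∈ ({a, b} : Finset α)) (hab : a ≠ b) :
    ∃ y, ({a, b} : Finset α) = {x, y} ∧ x ≠ y := by
  simp only [Finset.mem_insert, Finset.mem_singleton] at hx
  rcases hx with rfl | rfl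
  · exact ⟨b, rfl, hab⟩
  · exact ⟨a, Finset.pair_comm a x, hab.symm⟩

lemma pm_rep {V : Type*} [AddCommGroup V] [Module ℝ V] {X Y : V} (h : X = Y ∨ X = -Y) :
    ∃ s : ℝ, (s = 1 ∨ s = -1) ∧ X = s • Y := by
  rcases h with h | h
  · exact ⟨1, Or.inl rfl, by simp [h]⟩
  · exact ⟨-1, Or.inr rfl, by simp [h]⟩
lemma edge_dist {n m : ℕ} {af bf : Fin n → Fin m}
    (hli : LinearIndependent ℝ (fun k => Ev (af k) (bf k))) {k l : Fin n} (hkl : k ≠ l) :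
    ({af k, bf k} : Finset (Fin m)) ≠ {af l, bf l} := by
  intro hc
  rcases sign_rep hc.symm with h | h
  · exact li_two hli hkl (x := (1:ℝ)) (y := -1) one_ne_zero (by rw [h]; simp)
  · exact li_two hli hkl (x := (1:ℝ)) (y := 1) one_ne_zero (by rw [h]; simp)

lemma aux_main {n m : ℕ} (af bf ag bg : Fin n → Fin m)
    (haf : ∀ k, af k ≠ bf k) (hag : ∀ k, ag k ≠ bg k)
    (hfli : LinearIndependent ℝ (fun k => Ev (af k) (bf k)))
    (hgli : LinearIndependent ℝ (fun k => Ev (ag k) (bg k)))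
    (hadj : ∀ k l, k ≠ l →
      ((({af k, bf k} : Finset (Fin m)) ∩ {af l, bf l}).Nonempty ↔
       (({ag k, bg k} : Finset (Fin m)) ∩ {ag l, bg l}).Nonempty)) :
    ∀ (N : ℕ) (s : Finset (Fin n)), s.card ≤ N → ∃ σ : Equiv.Perm (Fin m),
      ∀ k ∈ s, (σ (af k) = ag k ∧ σ (bf k) = bg k) ∨ (σ (af k) = bg k ∧ σ (bf k) = ag k) := by
  intro N
  induction N with
  | zero =>
    intro s hs
    rw [Nat.le_zero, Finset.card_eq_zero] at hs
    subst hs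
    exact ⟨1, by simp⟩
  | succ N ihN =>
    intro s hcard
    rcases s.eq_empty_or_nonempty with rfl | hs
    · exact ⟨1, by simp⟩
    obtain ⟨k₀, hk₀s, v, hv, hleaf⟩ := exists_leaf af bf hfli s hs
    obtain ⟨u, hpair, hvu⟩ := pair_repr hv (haf k₀)
    -- hpair : {af k₀, bf k₀} = {v, u},  hvu : v ≠ u
    have huv : u ≠ v := hvu.symm
    set small := s.erase k₀ with hsmall
    have hsmallcard : small.card ≤ N := by
      rw [hsmall, Finset.card_erase_of_mem hk₀s]
      omega
    have hksmall : ∀ k ∈ small, k ≠ k₀ := fun k hk => Finset.ne_of_mem_erase hk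
    have hsmem : ∀ k ∈ small, k ∈ s := fun k hk => Finset.mem_of_mem_erase hk
    obtain ⟨σ', hσ'⟩ := ihN small hsmallcard
    -- membership transfer along σ'
    have htrans : ∀ (x : Fin m), ∀ k ∈ small,
        (x ∈ ({af k, bf k} : Finset (Fin m)) ↔ σ' x ∈ ({ag k, bg k} : Finset (Fin m))) := by
      intro x k hk
      have inj := σ'.injective
      rcases hσ' k hk with ⟨h1, h2⟩ | ⟨h1, h2⟩ <;>
        simp only [Finset.mem_insert, Finset.mem_singleton] <;> constructor
      · rintro (rfl | rfl)
        · exact Or.inl h1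
        · exact Or.inr h2
      · rintro (h | h)
        · exact Or.inl (inj (h.trans h1.symm))
        · exact Or.inr (inj (h.trans h2.symm))
      · rintro (rfl | rfl)
        · exact Or.inr h1
        · exact Or.inl h2
      · rintro (h | h)
        · exact Or.inr (inj (h.trans h2.symm))
        · exact Or.inl (inj (h.trans h1.symm))
    -- f-adjacency with k₀ means containing u
    have hadjf_u : ∀ k ∈ small,
        ((({af k, bf k} : Finset (Fin m)) ∩ {af k₀, bf k₀}).Nonempty ↔
          u ∈ ({af k, bf k} : Finset (Fin m))) := by
      intro k hk
      constructor
      · rintro ⟨x, hx⟩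
        rw [Finset.mem_inter] at hx
        have hx2 := hx.2
        rw [hpair] at hx2
        simp only [Finset.mem_insert, Finset.mem_singleton] at hx2
        rcases hx2 with rfl | rfl
        · exact absurd hx.1 (hleaf k (hsmem k hk) (hksmall k hk))
        · exact hx.1
      · intro hu
        exact ⟨u, Finset.mem_inter.mpr ⟨hu, by rw [hpair]; simp⟩⟩
    -- construct u'
    have hu'ex : ∃ u', u' ∈ ({ag k₀, bg k₀} : Finset (Fin m)) ∧
        ∀ k ∈ small, u ∈ ({af k, bf k} : Finset (Fin m)) →
          u' ∈ ({ag k, bg k} : Finset (Fin m)) := by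
      by_cases hex : ∃ l ∈ small, u ∈ ({af l, bf l} : Finset (Fin m))
      · obtain ⟨l, hl, hul⟩ := hex
        have hlk₀ : k₀ ≠ l := (hksmall l hl).symm
        have hfadj : (({af k₀, bf k₀} : Finset (Fin m)) ∩ {af l, bf l}).Nonempty :=
          ⟨u, Finset.mem_inter.mpr ⟨by rw [hpair]; simp, hul⟩⟩
        obtain ⟨u', hu'⟩ := (hadj k₀ l hlk₀).mp hfadj
        rw [Finset.mem_inter] at hu'
        refine ⟨u', hu'.1, ?_⟩
        intro k hk huk
        rcases eq_or_ne k l with rfl | hkl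
        · exact hu'.2
        have hk₀k : k₀ ≠ k := (hksmall k hk).symm
        have hgadj : (({ag k₀, bg k₀} : Finset (Fin m)) ∩ {ag k, bg k}).Nonempty :=
          (hadj k₀ k hk₀k).mp ⟨u, Finset.mem_inter.mpr ⟨by rw [hpair]; simp, huk⟩⟩
        obtain ⟨x, hx⟩ := hgadj
        rw [Finset.mem_inter] at hx
        rcases eq_or_ne x u' with rfl | hxu'
        · exact hx.2
        have hk₀pair : ({ag k₀, bg k₀} : Finset (Fin m)) = {u', x} :=
          pair_eq_of_mem hu'.1 hx.1 (Ne.symm hxu')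
        have hlkg : (({ag l, bg l} : Finset (Fin m)) ∩ {ag k, bg k}).Nonempty :=
          (hadj l k (Ne.symm hkl)).mp ⟨u, Finset.mem_inter.mpr ⟨hul, huk⟩⟩
        obtain ⟨y, hy⟩ := hlkg
        rw [Finset.mem_inter] at hy
        rcases eq_or_ne y u' with rfl | hyu'
        · exact hy.2
        rcases eq_or_ne y x with rfl | hyx
        · have hlp : ({ag l, bg l} : Finset (Fin m)) = {u', y} :=
            pair_eq_of_mem hu'.2 hy.1 (Ne.symm hyu')
          exact absurd (hlp.trans hk₀pair.symm) (edge_dist hgli (hksmall l hl))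
        · have hel : ({ag l, bg l} : Finset (Fin m)) = {u', y} :=
            pair_eq_of_mem hu'.2 hy.1 (Ne.symm hyu')
          have hek : ({ag k, bg k} : Finset (Fin m)) = {x, y} :=
            pair_eq_of_mem hx.2 hy.2 hyx.symm
          obtain ⟨s₁, hs₁, hr₁⟩ := pm_rep (sign_rep hk₀pair)
          obtain ⟨s₂, hs₂, hr₂⟩ := pm_rep (sign_rep hel)
          obtain ⟨s₃, hs₃, hr₃⟩ := pm_rep (sign_rep hek)
          have hrel := Ev_triangle u' x y
          rw [hr₁, hr₂, hr₃] at hrel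
          have hs₁ne : s₁ ≠ 0 := by rcases hs₁ with rfl | rfl <;> norm_num
          have hrel' : s₁ • Ev (ag k₀) (bg k₀) + (-s₂) • Ev (ag l) (bg l)
              + s₃ • Ev (ag k) (bg k) = 0 := by
            rw [neg_smul, ← sub_eq_add_neg]
            exact hrel
          exact absurd hrel' (fun hc => li_three hgli hlk₀ hk₀k (Ne.symm hkl) hs₁ne hc)
      · refine ⟨ag k₀, by simp, ?_⟩
        intro k hk huk
        exact absurd ⟨k, hk, huk⟩ hex
    obtain ⟨u', hu'mem, hu'⟩ := hu'ex
    obtain ⟨v', hpair', hu'v'⟩ := pair_repr hu'mem (hag k₀)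
    -- hpair' : {ag k₀, bg k₀} = {u', v'}
    have hv'leaf : ∀ k ∈ small, v' ∉ ({ag k, bg k} : Finset (Fin m)) := by
      intro k hk hv'k
      have hk₀k : k₀ ≠ k := (hksmall k hk).symm
      have hgadj : (({ag k₀, bg k₀} : Finset (Fin m)) ∩ {ag k, bg k}).Nonempty :=
        ⟨v', Finset.mem_inter.mpr ⟨by rw [hpair']; simp, hv'k⟩⟩
      have hfadj := (hadj k₀ k hk₀k).mpr hgadj
      have huk : u ∈ ({af k, bf k} : Finset (Fin m)) := by
        apply (hadjf_u k hk).mp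
        obtain ⟨x, hx⟩ := hfadj
        rw [Finset.mem_inter] at hx
        exact ⟨x, Finset.mem_inter.mpr ⟨hx.2, hx.1⟩⟩
      have hu'k := hu' k hk huk
      have hpk : ({ag k, bg k} : Finset (Fin m)) = {u', v'} :=
        pair_eq_of_mem hu'k hv'k hu'v'
      exact edge_dist hgli (hksmall k hk) (hpk.trans hpair'.symm)
    set τ₁ := Equiv.swap u' (σ' u) with hτ₁
    set σ₁ : Equiv.Perm (Fin m) := τ₁ * σ' with hσ₁
    have hσ₁u : σ₁ u = u' := by
      simp [hσ₁, hτ₁, Equiv.Perm.mul_apply, Equiv.swap_apply_right]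
    have hstab : ∀ k ∈ small, ∀ y, y ∈ ({ag k, bg k} : Finset (Fin m)) →
        τ₁ y ∈ ({ag k, bg k} : Finset (Fin m)) := by
      intro k hk y hy
      rcases eq_or_ne y (σ' u) with rfl | h1
      · rw [hτ₁, Equiv.swap_apply_right]
        exact hu' k hk ((htrans u k hk).mpr hy)
      rcases eq_or_ne y u' with hy2 | h2
      · rw [hy2] at hy ⊢
        rw [hτ₁, Equiv.swap_apply_left]
        have hk₀k : k₀ ≠ k := (hksmall k hk).symm
        have hgadj : (({ag k₀, bg k₀} : Finset (Fin m)) ∩ {ag k, bg k}).Nonempty :=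
          ⟨u', Finset.mem_inter.mpr ⟨hu'mem, hy⟩⟩
        have hfadj := (hadj k₀ k hk₀k).mpr hgadj
        have huk : u ∈ ({af k, bf k} : Finset (Fin m)) := by
          apply (hadjf_u k hk).mp
          obtain ⟨x, hx⟩ := hfadj
          rw [Finset.mem_inter] at hx
          exact ⟨x, Finset.mem_inter.mpr ⟨hx.2, hx.1⟩⟩
        exact (htrans u k hk).mp huk
      · rw [hτ₁, Equiv.swap_apply_of_ne_of_ne h2 h1]
        exact hy
    have hσ₁edges : ∀ (x : Fin m), ∀ k ∈ small,
        (x ∈ ({af k, bf k} : Finset (Fin m)) ↔ σ₁ x ∈ ({ag k, bg k} : Finset (Fin m))) := by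
      intro x k hk
      rw [htrans x k hk, hσ₁, Equiv.Perm.mul_apply]
      constructor
      · exact hstab k hk (σ' x)
      · intro h
        have h2 := hstab k hk _ h
        rwa [hτ₁, Equiv.swap_apply_self] at h2
    set τ₂ := Equiv.swap v' (σ₁ v) with hτ₂
    set σ : Equiv.Perm (Fin m) := τ₂ * σ₁ with hσdef
    have hfix : ∀ k ∈ small, ∀ y, y ∈ ({ag k, bg k} : Finset (Fin m)) → τ₂ y = y := by
      intro k hk y hy
      refine Equiv.swap_apply_of_ne_of_ne (fun hc => hv'leaf k hk (hc ▸ hy)) (fun hc => ?_)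
      rw [hc] at hy
      have := (hσ₁edges v k hk).mpr hy
      exact hleaf k (hsmem k hk) (hksmall k hk) this
    have hσv : σ v = v' := by
      simp [hσdef, hτ₂, Equiv.Perm.mul_apply, Equiv.swap_apply_right]
    have hσu : σ u = u' := by
      rw [hσdef, Equiv.Perm.mul_apply, hσ₁u, hτ₂]
      refine Equiv.swap_apply_of_ne_of_ne hu'v' (fun hc => ?_)
      exact huv (σ₁.injective (hσ₁u.trans hc))
    refine ⟨σ, fun k hk => ?_⟩
    rcases eq_or_ne k k₀ with rfl | hne
    · -- the k₀ edge
      have hmem : ∀ x ∈ ({af k, bf k} : Finset (Fin m)), σ x ∈ ({ag k, bg k} : Finset (Fin m)) := by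
        intro x hx
        rw [hpair] at hx
        rw [hpair']
        simp only [Finset.mem_insert, Finset.mem_singleton] at hx ⊢
        rcases hx with rfl | rfl
        · exact Or.inr hσv
        · exact Or.inl hσu
      exact mem_pair_cases (hmem _ (by simp)) (hmem _ (by simp [Finset.mem_insert]))
        (fun hc => haf k (σ.injective hc))
    · have hk' : k ∈ small := Finset.mem_erase.mpr ⟨hne, hk⟩
      have hmem : ∀ x ∈ ({af k, bf k} : Finset (Fin m)), σ x ∈ ({ag k, bg k} : Finset (Fin m)) := by
        intro x hx
        have h1 := (hσ₁edges x k hk').mp hx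
        rw [hσdef, Equiv.Perm.mul_apply, hfix k hk' _ h1]
        exact h1
      exact mem_pair_cases (hmem _ (by simp)) (hmem _ (by simp [Finset.mem_insert]))
        (fun hc => haf k (σ.injective hc))

/-- A family of simplices generating `Aₙ` has a unique embedding into the root system
of `Aₙ` up to the Weyl group: two linearly independent systems of roots `eᵢ - eⱼ` with
the same unsigned Gram matrix differ by a coordinate permutation and signs. -/
theorem An_embedding_unique {n : ℕ}
    (f g : Fin n → EuclideanSpace ℝ (Fin (n + 1)))
    (hf_li : LinearIndependent ℝ f) (hg_li : LinearIndependent ℝ g)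
    (hf_form : ∀ k, ∃ i j : Fin (n + 1), i ≠ j ∧
      f k = EuclideanSpace.single i 1 - EuclideanSpace.single j 1)
    (hg_form : ∀ k, ∃ i j : Fin (n + 1), i ≠ j ∧
      g k = EuclideanSpace.single i 1 - EuclideanSpace.single j 1)
    (habs : ∀ k l, |⟪f k, f l⟫| = |⟪g k, g l⟫|) :
    ∃ (σ : Equiv.Perm (Fin (n + 1))) (ε : Fin n → ℝ),
      (∀ k, ε k = 1 ∨ ε k = -1) ∧
      ∀ k i, g k i = ε k * f k (σ⁻¹ i) := by
  classical
  choose af bf hab hfv using hf_form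
  choose ag bg hab' hgv using hg_form
  have hfE : f = fun k => Ev (af k) (bf k) := funext fun k => hfv k
  have hgE : g = fun k => Ev (ag k) (bg k) := funext fun k => hgv k
  have hfli : LinearIndependent ℝ (fun k => Ev (af k) (bf k)) := hfE ▸ hf_li
  have hgli : LinearIndependent ℝ (fun k => Ev (ag k) (bg k)) := hgE ▸ hg_li
  have hadj : ∀ k l, k ≠ l →
      ((({af k, bf k} : Finset (Fin (n+1))) ∩ {af l, bf l}).Nonempty ↔
       (({ag k, bg k} : Finset (Fin (n+1))) ∩ {ag l, bg l}).Nonempty) := by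
    intro k l hkl
    have h1 := inner_Ev_ne_zero_iff (hab k) (hab l) (edge_dist hfli hkl)
    have h2 := inner_Ev_ne_zero_iff (hab' k) (hab' l) (edge_dist hgli hkl)
    rw [← h1, ← h2]
    have habs' : |⟪(Ev (af k) (bf k) : EuclideanSpace ℝ (Fin (n+1))), Ev (af l) (bf l)⟫| =
        |⟪(Ev (ag k) (bg k) : EuclideanSpace ℝ (Fin (n+1))), Ev (ag l) (bg l)⟫| := by
      have h := habs k l
      rw [hfE, hgE] at h
      exact h
    constructor
    · intro h hc
      exact h (abs_eq_zero.mp (by rw [habs', hc, abs_zero]))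
    · intro h hc
      exact h (abs_eq_zero.mp (by rw [← habs', hc, abs_zero]))
  obtain ⟨σ, hσ⟩ := aux_main af bf ag bg hab hab' hfli hgli hadj
    (Finset.univ.card) Finset.univ le_rfl
  refine ⟨σ, fun k => if σ (af k) = ag k then 1 else -1, fun k => ?_, fun k i => ?_⟩
  · by_cases h : σ (af k) = ag k <;> simp [h]
  · have e1 : (σ⁻¹ i = af k) = (i = σ (af k)) :=
      propext ⟨fun h => by rw [← h]; simp, fun h => by rw [h]; simp⟩
    have e2 : (σ⁻¹ i = bf k) = (i = σ (bf k)) :=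
      propext ⟨fun h => by rw [← h]; simp, fun h => by rw [h]; simp⟩
    have hga : g k i = (if i = ag k then (1:ℝ) else 0) - (if i = bg k then 1 else 0) := by
      rw [hgv k]
      simp [EuclideanSpace.single_apply]
    have hfa : f k (σ⁻¹ i) = (if σ⁻¹ i = af k then (1:ℝ) else 0)
        - (if σ⁻¹ i = bf k then 1 else 0) := by
      rw [hfv k]
      simp [EuclideanSpace.single_apply]
    rw [hga, hfa]
    simp only [e1, e2]
    rcases hσ k (Finset.mem_univ k) with ⟨h1, h2⟩ | ⟨h1, h2⟩
    · have hε : (if σ (af k) = ag k then (1:ℝ) else -1) = 1 := if_pos h1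
      rw [hε, h1, h2, one_mul]
    · have hε : (if σ (af k) = ag k then (1:ℝ) else -1) = -1 :=
        if_neg (fun hc => hab' k (h1.symm.trans hc).symm)
      rw [hε, h1, h2]
      ring
end

section
/- Let T₁ and T₂ be trees on the vertex set Fin (n+1), and associate to each tree the family of vectors in EuclideanSpace ℝ (Fin (n+1)) consisting of one vector e_i − e_j for each edge {i, j} (where e_0, …, e_n is the standard orthonormal basis). Then the following are equivalent: (1) T₁ and T₂ are isomorphic as graphs; (2) there exist a linear isometry T of EuclideanSpace ℝ (Fin (n+1)), a bijection φ from the edge set of T₁ to the edge set of T₂, and signs ε_e ∈ {−1, 1} such that the vector associated to φ(e) equals ε_e · T(vector associated to e) for every edge e of T₁. (The families of simplices generating A_n are in one-to-one correspondence with the trees with n+1 vertices.) -/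
open SimpleGraph

lemma AnAux.no_triangle {V : Type*} {G : SimpleGraph V} (h : G.IsAcyclic) {a b c : V}
    (hab : G.Adj a b) (hbc : G.Adj b c) (hac : G.Adj a c) : False := by
  have hp : (Walk.cons hac Walk.nil : G.Walk a c).IsPath := by
    simp [Walk.cons_isPath_iff, hac.ne]
  have hq : (Walk.cons hab (Walk.cons hbc Walk.nil) : G.Walk a c).IsPath := by
    simp [Walk.cons_isPath_iff, hab.ne, hbc.ne, hac.ne]
  have := h.path_unique ⟨_, hp⟩ ⟨_, hq⟩
  simpa using congrArg (fun p => p.1.length) this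

lemma AnAux.eq_of_mem_mem {V : Type*} {e f : Sym2 V} (hne : e ≠ f) {a b : V}
    (ha : a ∈ e) (ha' : a ∈ f) (hb : b ∈ e) (hb' : b ∈ f) : a = b := by
  by_contra hab
  exact hne (((Sym2.mem_and_mem_iff hab).mp ⟨ha, hb⟩).trans
    ((Sym2.mem_and_mem_iff hab).mp ⟨ha', hb'⟩).symm)

lemma AnAux.triple {V : Type*} {G : SimpleGraph V} (h : G.IsAcyclic)
    (e f g : G.edgeSet)
    {x y z : V} (hxe : x ∈ (e : Sym2 V)) (hxf : x ∈ (f : Sym2 V))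
    (hye : y ∈ (e : Sym2 V)) (hyg : y ∈ (g : Sym2 V))
    (hzf : z ∈ (f : Sym2 V)) (hzg : z ∈ (g : Sym2 V)) :
    ∃ v, v ∈ (e : Sym2 V) ∧ v ∈ (f : Sym2 V) ∧ v ∈ (g : Sym2 V) := by
  by_cases hxy : x = y
  · exact ⟨x, hxe, hxf, hxy ▸ hyg⟩
  by_cases hxz : x = z
  · exact ⟨x, hxe, hxf, hxz ▸ hzg⟩
  by_cases hyz : y = z
  · exact ⟨y, hye, hyz ▸ hzf, hyg⟩
  · exfalso
    have he : (e : Sym2 V) = s(x, y) := (Sym2.mem_and_mem_iff hxy).mp ⟨hxe, hye⟩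
    have hf : (f : Sym2 V) = s(x, z) := (Sym2.mem_and_mem_iff hxz).mp ⟨hxf, hzf⟩
    have hg : (g : Sym2 V) = s(y, z) := (Sym2.mem_and_mem_iff hyz).mp ⟨hyg, hzg⟩
    have h1 : G.Adj x y := G.mem_edgeSet.mp (he ▸ e.2)
    have h2 : G.Adj x z := G.mem_edgeSet.mp (hf ▸ f.2)
    have h3 : G.Adj y z := G.mem_edgeSet.mp (hg ▸ g.2)
    exact AnAux.no_triangle h h1 h3 h2

lemma AnAux.exists_edge {V : Type*} {G : SimpleGraph V} (hc : G.Connected)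
    {v w : V} (hvw : v ≠ w) : ∃ e : G.edgeSet, v ∈ (e : Sym2 V) := by
  obtain ⟨p⟩ := hc.preconnected v w
  cases p with
  | nil => exact absurd rfl hvw
  | cons h _ => exact ⟨⟨s(v, _), G.mem_edgeSet.mpr h⟩, Sym2.mem_mk_left _ _⟩

lemma AnAux.closure {V : Type*} {G : SimpleGraph V} (hc : G.Connected)
    {v u : V} (e : G.edgeSet) (he : (e : Sym2 V) = s(v, u))
    (hv : ∀ g : G.edgeSet, v ∈ (g : Sym2 V) → g = e)
    (hu : ∀ g : G.edgeSet, u ∈ (g : Sym2 V) → g = e) :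
    ∀ x, x = v ∨ x = u := by
  intro x
  suffices H : ∀ (a c : V) (p : G.Walk a c), (c = v ∨ c = u) → (a = v ∨ a = u) by
    obtain ⟨p⟩ := hc.preconnected x v
    exact H x v p (Or.inl rfl)
  intro a c p
  induction p with
  | nil => exact id
  | @cons a b _ h p ih =>
    intro hend
    rcases ih hend with hb | hb
    · have h1 := hv ⟨s(a, b), G.mem_edgeSet.mpr h⟩ (hb ▸ Sym2.mem_mk_right a b)
      have h2 : s(a, b) = s(v, u) := by rw [← he, ← h1]
      rcases Sym2.eq_iff.mp h2 with ⟨rfl, rfl⟩ | ⟨rfl, h3⟩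
      · exact Or.inl rfl
      · exact Or.inr rfl
    · have h1 := hu ⟨s(a, b), G.mem_edgeSet.mpr h⟩ (hb ▸ Sym2.mem_mk_right a b)
      have h2 : s(a, b) = s(v, u) := by rw [← he, ← h1]
      rcases Sym2.eq_iff.mp h2 with ⟨rfl, h3⟩ | ⟨rfl, rfl⟩
      · exact Or.inl rfl
      · exact Or.inr rfl

lemma AnAux.exists_vertex_map {n : ℕ} (hn : 2 ≤ n) (T₁ T₂ : SimpleGraph (Fin (n+1)))
    (h₁ : T₁.IsTree) (h₂ : T₂.IsTree) (φ : T₁.edgeSet ≃ T₂.edgeSet)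
    (hφ : ∀ e f : T₁.edgeSet,
      (∃ v, v ∈ (e : Sym2 (Fin (n+1))) ∧ v ∈ (f : Sym2 (Fin (n+1)))) ↔
      (∃ v, v ∈ ((φ e : T₂.edgeSet) : Sym2 (Fin (n+1))) ∧
            v ∈ ((φ f : T₂.edgeSet) : Sym2 (Fin (n+1))))) :
    ∃ Ψ : Fin (n+1) → Fin (n+1),
      ∀ (f : T₁.edgeSet) (v w : Fin (n+1)), (f : Sym2 (Fin (n+1))) = s(v, w) →
        ((φ f : T₂.edgeSet) : Sym2 (Fin (n+1))) = s(Ψ v, Ψ w) := by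
  classical
  have hconn := h₁.isConnected
  have hφne : ∀ {e f : T₁.edgeSet}, e ≠ f →
      ((φ e : T₂.edgeSet) : Sym2 (Fin (n+1))) ≠ ((φ f : T₂.edgeSet) : Sym2 (Fin (n+1))) :=
    fun h hh => h (φ.injective (Subtype.coe_injective hh))
  set P : Fin (n+1) → Prop := fun v => ∃ f g : T₁.edgeSet, f ≠ g ∧
    v ∈ (f : Sym2 (Fin (n+1))) ∧ v ∈ (g : Sym2 (Fin (n+1))) with hP
  -- the image vertex for degree-≥2 vertices
  have H1 : ∀ v, P v → ∃ w, ∀ f : T₁.edgeSet, v ∈ (f : Sym2 (Fin (n+1))) →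
      w ∈ ((φ f : T₂.edgeSet) : Sym2 (Fin (n+1))) := by
    rintro v ⟨f₀, g₀, hne, hv0, hv1⟩
    obtain ⟨w, hwf, hwg⟩ := (hφ f₀ g₀).mp ⟨v, hv0, hv1⟩
    refine ⟨w, fun f hf => ?_⟩
    by_cases hf0 : f = f₀
    · exact hf0 ▸ hwf
    by_cases hg0 : f = g₀
    · exact hg0 ▸ hwg
    obtain ⟨x, hx1, hx2⟩ := (hφ f f₀).mp ⟨v, hf, hv0⟩
    obtain ⟨y, hy1, hy2⟩ := (hφ f g₀).mp ⟨v, hf, hv1⟩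
    obtain ⟨c, hc1, hc2, hc3⟩ :=
      AnAux.triple h₂.IsAcyclic (φ f) (φ f₀) (φ g₀) hx1 hx2 hy1 hy2 hwf hwg
    exact (AnAux.eq_of_mem_mem (hφne hne) hc2 hc3 hwf hwg) ▸ hc1
  choose Ψp hΨp using H1
  -- injectivity on degree-≥2 vertices
  have INJ : ∀ v w (hv : P v) (hw : P w), v ≠ w → Ψp v hv ≠ Ψp w hw := by
    intro v w hv hw hvw heq
    obtain ⟨f₁, g₁, hne1, hwf₁, hwg₁⟩ := id hw
    have hCw : ∀ f : T₁.edgeSet, v ∈ (f : Sym2 (Fin (n+1))) → w ∈ (f : Sym2 (Fin (n+1))) := by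
      intro f hf
      by_cases h1 : f = f₁
      · exact h1 ▸ hwf₁
      by_cases h2 : f = g₁
      · exact h2 ▸ hwg₁
      have hx1 : Ψp v hv ∈ ((φ f : T₂.edgeSet) : Sym2 (Fin (n+1))) := hΨp v hv f hf
      have hx2 : Ψp v hv ∈ ((φ f₁ : T₂.edgeSet) : Sym2 (Fin (n+1))) := heq ▸ hΨp w hw f₁ hwf₁
      have hx3 : Ψp v hv ∈ ((φ g₁ : T₂.edgeSet) : Sym2 (Fin (n+1))) := heq ▸ hΨp w hw g₁ hwg₁
      obtain ⟨a, ha1, ha2⟩ := (hφ f f₁).mpr ⟨_, hx1, hx2⟩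
      obtain ⟨b, hb1, hb2⟩ := (hφ f g₁).mpr ⟨_, hx1, hx3⟩
      obtain ⟨c, hc1, hc2, hc3⟩ :=
        AnAux.triple h₁.IsAcyclic f f₁ g₁ ha1 ha2 hb1 hb2 hwf₁ hwg₁
      have hcw : c = w := AnAux.eq_of_mem_mem
        (fun hh => hne1 (Subtype.coe_injective hh)) hc2 hc3 hwf₁ hwg₁
      exact hcw ▸ hc1
    obtain ⟨f₀, g₀, hne0, h0, h1⟩ := hv
    have e0 : (f₀ : Sym2 (Fin (n+1))) = s(v, w) := (Sym2.mem_and_mem_iff hvw).mp ⟨h0, hCw f₀ h0⟩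
    have e1 : (g₀ : Sym2 (Fin (n+1))) = s(v, w) := (Sym2.mem_and_mem_iff hvw).mp ⟨h1, hCw g₀ h1⟩
    exact hne0 (Subtype.coe_injective (e0.trans e1.symm))
  -- leaves: unique edge, other endpoint has degree ≥ 2
  have H2 : ∀ v, ¬ P v → ∃ (f : T₁.edgeSet) (u : Fin (n+1)),
      (f : Sym2 (Fin (n+1))) = s(v, u) ∧ v ≠ u ∧ P u ∧
      ∀ g : T₁.edgeSet, v ∈ (g : Sym2 (Fin (n+1))) → g = f := by
    intro v hv
    obtain ⟨w, hw⟩ := Fintype.exists_ne_of_one_lt_card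
      (by simp [Fintype.card_fin]; omega : 1 < Fintype.card (Fin (n+1))) v
    obtain ⟨e, hve⟩ := AnAux.exists_edge hconn hw.symm
    have hdiag : ¬ (e : Sym2 (Fin (n+1))).IsDiag := T₁.not_isDiag_of_mem_edgeSet e.2
    have hspec : s(v, Sym2.Mem.other hve) = (e : Sym2 (Fin (n+1))) := Sym2.other_spec hve
    have hne : v ≠ Sym2.Mem.other hve := (Sym2.other_ne hdiag hve).symm
    have huniq : ∀ g : T₁.edgeSet, v ∈ (g : Sym2 (Fin (n+1))) → g = e := by
      intro g hg
      by_contra hge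
      exact hv ⟨g, e, hge, hg, hve⟩
    refine ⟨e, Sym2.Mem.other hve, hspec.symm, hne, ?_, huniq⟩
    by_contra hPu
    have humem : Sym2.Mem.other hve ∈ (e : Sym2 (Fin (n+1))) := Sym2.other_mem hve
    have huniq' : ∀ g : T₁.edgeSet, Sym2.Mem.other hve ∈ (g : Sym2 (Fin (n+1))) → g = e := by
      intro g hg
      by_contra hge
      exact hPu ⟨g, e, hge, hg, humem⟩
    have hcl := AnAux.closure hconn e hspec.symm huniq huniq'
    have hsub : (Finset.univ : Finset (Fin (n+1))) ⊆ {v, Sym2.Mem.other hve} := by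
      intro x _
      rcases hcl x with rfl | rfl <;> simp
    have hcard := Finset.card_le_card hsub
    have h2 : ({v, Sym2.Mem.other hve} : Finset (Fin (n+1))).card ≤ 2 :=
      (Finset.card_insert_le _ _).trans (by simp)
    rw [Finset.card_univ, Fintype.card_fin] at hcard
    omega
  choose eOf uOf heOf hneOf hPOf huniqOf using H2
  have hmem2 : ∀ v (h : ¬ P v),
      Ψp (uOf v h) (hPOf v h) ∈ ((φ (eOf v h) : T₂.edgeSet) : Sym2 (Fin (n+1))) :=
    fun v h => hΨp _ _ _ (by rw [heOf v h]; exact Sym2.mem_mk_right _ _)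
  set Ψ : Fin (n+1) → Fin (n+1) :=
    fun v => if h : P v then Ψp v h else Sym2.Mem.other (hmem2 v h) with hΨdef
  have hΨP : ∀ v (h : P v), Ψ v = Ψp v h := by
    intro v h
    simp only [hΨdef]
    exact dif_pos h
  have hΨL : ∀ v (h : ¬ P v),
      s(Ψp (uOf v h) (hPOf v h), Ψ v) = ((φ (eOf v h) : T₂.edgeSet) : Sym2 (Fin (n+1))) := by
    intro v h
    have h9 : Ψ v = Sym2.Mem.other (hmem2 v h) := by
      simp only [hΨdef]; exact dif_neg h
    rw [h9]
    exact Sym2.other_spec (hmem2 v h)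
  have S1 : ∀ (v : Fin (n+1)) (f : T₁.edgeSet), v ∈ (f : Sym2 (Fin (n+1))) →
      Ψ v ∈ ((φ f : T₂.edgeSet) : Sym2 (Fin (n+1))) := by
    intro v f hf
    by_cases h : P v
    · rw [hΨP v h]; exact hΨp v h f hf
    · rw [huniqOf v h f hf, ← hΨL v h]
      exact Sym2.mem_mk_right _ _
  -- the key case: v of degree ≥ 2, w a leaf
  have KEY2 : ∀ (f : T₁.edgeSet) (v w : Fin (n+1)), P v → ¬ P w →
      (f : Sym2 (Fin (n+1))) = s(v, w) →
      ((φ f : T₂.edgeSet) : Sym2 (Fin (n+1))) = s(Ψ v, Ψ w) := by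
    intro f v w hv hw hf
    have hvw : v ≠ w := by
      intro h
      exact T₁.not_isDiag_of_mem_edgeSet f.2 (by rw [hf, Sym2.mk_isDiag_iff]; exact h)
    have hwf : w ∈ (f : Sym2 (Fin (n+1))) := by rw [hf]; exact Sym2.mem_mk_right _ _
    have hfe : f = eOf w hw := huniqOf w hw f hwf
    have hu : uOf w hw = v := by
      have h5 : s(v, w) = s(w, uOf w hw) := by rw [← hf, hfe]; exact heOf w hw
      rcases Sym2.eq_iff.mp h5 with ⟨h6, h7⟩ | ⟨h6, _⟩
      · exact absurd h6 hvw
      · exact h6.symm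
    subst hu
    rw [hfe, ← hΨL w hw, hΨP _ (hPOf w hw)]
  have KEY : ∀ (f : T₁.edgeSet) (v w : Fin (n+1)), (f : Sym2 (Fin (n+1))) = s(v, w) →
      ((φ f : T₂.edgeSet) : Sym2 (Fin (n+1))) = s(Ψ v, Ψ w) := by
    intro f v w hf
    have hvw : v ≠ w := by
      intro h
      exact T₁.not_isDiag_of_mem_edgeSet f.2 (by rw [hf, Sym2.mk_isDiag_iff]; exact h)
    have hvf : v ∈ (f : Sym2 (Fin (n+1))) := by rw [hf]; exact Sym2.mem_mk_left _ _
    have hwf : w ∈ (f : Sym2 (Fin (n+1))) := by rw [hf]; exact Sym2.mem_mk_right _ _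
    by_cases hv : P v <;> by_cases hw : P w
    · have hne : Ψ v ≠ Ψ w := by
        rw [hΨP v hv, hΨP w hw]; exact INJ v w hv hw hvw
      exact ((Sym2.mem_and_mem_iff hne).mp ⟨S1 v f hvf, S1 w f hwf⟩)
    · exact KEY2 f v w hv hw hf
    · rw [Sym2.eq_swap]
      exact KEY2 f w v hw hv (by rw [hf, Sym2.eq_swap])
    · exfalso
      have hfe : f = eOf v hv := huniqOf v hv f hvf
      have hu : uOf v hv = w := by
        have h5 : s(v, w) = s(v, uOf v hv) := by rw [← hf, hfe]; exact heOf v hv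
        rcases Sym2.eq_iff.mp h5 with ⟨_, h7⟩ | ⟨h6, h7⟩
        · exact h7.symm
        · exact absurd h7.symm hvw
      exact hw (hu ▸ hPOf v hv)
  exact ⟨Ψ, KEY⟩


lemma AnAux.fixpt {n : ℕ} (hn : 2 ≤ n) (T : SimpleGraph (Fin (n+1))) (hT : T.IsTree)
    (F : Fin (n+1) → Fin (n+1))
    (hF : ∀ (f : T.edgeSet) (v w : Fin (n+1)), (f : Sym2 (Fin (n+1))) = s(v, w) →
      (f : Sym2 (Fin (n+1))) = s(F v, F w)) :
    ∀ v, F v = v := by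
  intro v
  obtain ⟨w, hw⟩ := Fintype.exists_ne_of_one_lt_card
    (by simp [Fintype.card_fin]; omega : 1 < Fintype.card (Fin (n+1))) v
  obtain ⟨e, hve⟩ := AnAux.exists_edge hT.isConnected hw.symm
  have hdiag : ¬ (e : Sym2 (Fin (n+1))).IsDiag := T.not_isDiag_of_mem_edgeSet e.2
  have hsp : s(v, Sym2.Mem.other hve) = (e : Sym2 (Fin (n+1))) := Sym2.other_spec hve
  set u := Sym2.Mem.other hve with hu
  have hvu : v ≠ u := (Sym2.other_ne hdiag hve).symm
  have h3 := hF e v u hsp.symm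
  have h4 : s(v, u) = s(F v, F u) := hsp.trans h3
  rcases Sym2.eq_iff.mp h4 with ⟨h5, _⟩ | ⟨hA, hB⟩
  · exact h5.symm
  -- swap case : v = F u, u = F v
  exfalso
  by_cases hgv : ∃ g : T.edgeSet, v ∈ (g : Sym2 (Fin (n+1))) ∧ g ≠ e
  · obtain ⟨g, hvg, hge⟩ := hgv
    have hspg : s(v, Sym2.Mem.other hvg) = (g : Sym2 (Fin (n+1))) := Sym2.other_spec hvg
    have h6 := hF g v _ hspg.symm
    have hFvg : F v ∈ (g : Sym2 (Fin (n+1))) := by rw [h6]; exact Sym2.mem_mk_left _ _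
    have hug : u ∈ (g : Sym2 (Fin (n+1))) := hB ▸ hFvg
    have : (g : Sym2 (Fin (n+1))) = s(v, u) := (Sym2.mem_and_mem_iff hvu).mp ⟨hvg, hug⟩
    exact hge (Subtype.coe_injective (this.trans hsp))
  by_cases hgu : ∃ g : T.edgeSet, u ∈ (g : Sym2 (Fin (n+1))) ∧ g ≠ e
  · obtain ⟨g, hug, hge⟩ := hgu
    have hspg : s(u, Sym2.Mem.other hug) = (g : Sym2 (Fin (n+1))) := Sym2.other_spec hug
    have h6 := hF g u _ hspg.symm
    have hFug : F u ∈ (g : Sym2 (Fin (n+1))) := by rw [h6]; exact Sym2.mem_mk_left _ _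
    have hvg : v ∈ (g : Sym2 (Fin (n+1))) := hA ▸ hFug
    have : (g : Sym2 (Fin (n+1))) = s(v, u) := (Sym2.mem_and_mem_iff hvu).mp ⟨hvg, hug⟩
    exact hge (Subtype.coe_injective (this.trans hsp))
  · push_neg at hgv hgu
    have hcl := AnAux.closure hT.isConnected e hsp.symm
      hgv hgu
    have hsub : (Finset.univ : Finset (Fin (n+1))) ⊆ {v, u} := by
      intro x _
      rcases hcl x with rfl | rfl <;> simp
    have hcard := Finset.card_le_card hsub
    have h2 : ({v, u} : Finset (Fin (n+1))).card ≤ 2 :=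
      (Finset.card_insert_le _ _).trans (by simp)
    rw [Finset.card_univ, Fintype.card_fin] at hcard
    omega

lemma AnAux.two_vertex_adj {T : SimpleGraph (Fin 2)} (hc : T.Connected)
    {x y : Fin 2} (hxy : x ≠ y) : T.Adj x y := by
  obtain ⟨p⟩ := hc.preconnected x y
  cases p with
  | nil => exact absurd rfl hxy
  | @cons _ b _ h p =>
    have hbx : b ≠ x := h.ne'
    have : b = y := by omega
    exact this ▸ h

lemma AnAux.tree_iso {n : ℕ} (T₁ T₂ : SimpleGraph (Fin (n+1)))
    (h₁ : T₁.IsTree) (h₂ : T₂.IsTree) (φ : T₁.edgeSet ≃ T₂.edgeSet)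
    (hφ : ∀ e f : T₁.edgeSet,
      (∃ v, v ∈ (e : Sym2 (Fin (n+1))) ∧ v ∈ (f : Sym2 (Fin (n+1)))) ↔
      (∃ v, v ∈ ((φ e : T₂.edgeSet) : Sym2 (Fin (n+1))) ∧
            v ∈ ((φ f : T₂.edgeSet) : Sym2 (Fin (n+1))))) :
    Nonempty (T₁ ≃g T₂) := by
  rcases lt_or_ge n 2 with hn | hn
  · -- small cases : T₁ = T₂
    have hEq : T₁ = T₂ := by
      interval_cases n
      · ext v w
        have h0 := v.2
        have h1 := w.2
        have : v = w := Fin.ext (by omega)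
        subst this
        simp
      · ext v w
        constructor
        · intro h
          exact AnAux.two_vertex_adj h₂.isConnected h.ne
        · intro h
          exact AnAux.two_vertex_adj h₁.isConnected h.ne
    exact ⟨hEq ▸ (Iso.refl : T₁ ≃g T₁)⟩
  · obtain ⟨Ψ, hΨ⟩ := AnAux.exists_vertex_map hn T₁ T₂ h₁ h₂ φ hφ
    have hφ' : ∀ e f : T₂.edgeSet,
        (∃ v, v ∈ (e : Sym2 (Fin (n+1))) ∧ v ∈ (f : Sym2 (Fin (n+1)))) ↔
        (∃ v, v ∈ ((φ.symm e : T₁.edgeSet) : Sym2 (Fin (n+1))) ∧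
              v ∈ ((φ.symm f : T₁.edgeSet) : Sym2 (Fin (n+1)))) := by
      intro e f
      have h5 := hφ (φ.symm e) (φ.symm f)
      rw [φ.apply_symm_apply, φ.apply_symm_apply] at h5
      exact h5.symm
    obtain ⟨Ψ', hΨ'⟩ := AnAux.exists_vertex_map hn T₂ T₁ h₂ h₁ φ.symm hφ'
    have hcomp : ∀ (f : T₁.edgeSet) (v w : Fin (n+1)),
        (f : Sym2 (Fin (n+1))) = s(v, w) →
        (f : Sym2 (Fin (n+1))) = s(Ψ' (Ψ v), Ψ' (Ψ w)) := by
      intro f v w hf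
      have h5 := hΨ' (φ f) (Ψ v) (Ψ w) (hΨ f v w hf)
      rwa [φ.symm_apply_apply] at h5
    have hcomp' : ∀ (f : T₂.edgeSet) (v w : Fin (n+1)),
        (f : Sym2 (Fin (n+1))) = s(v, w) →
        (f : Sym2 (Fin (n+1))) = s(Ψ (Ψ' v), Ψ (Ψ' w)) := by
      intro f v w hf
      have h5 := hΨ (φ.symm f) (Ψ' v) (Ψ' w) (hΨ' f v w hf)
      rwa [φ.apply_symm_apply] at h5
    have hli : ∀ v, Ψ' (Ψ v) = v := AnAux.fixpt hn T₁ h₁ _ hcomp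
    have hri : ∀ v, Ψ (Ψ' v) = v := AnAux.fixpt hn T₂ h₂ _ hcomp'
    have hadj₁ : ∀ a b, T₁.Adj a b → T₂.Adj (Ψ a) (Ψ b) := by
      intro a b hab
      have h5 := hΨ ⟨s(a, b), T₁.mem_edgeSet.mpr hab⟩ a b rfl
      have h6 := (φ ⟨s(a, b), T₁.mem_edgeSet.mpr hab⟩).2
      rw [h5] at h6
      exact T₂.mem_edgeSet.mp h6
    have hadj₂ : ∀ a b, T₂.Adj a b → T₁.Adj (Ψ' a) (Ψ' b) := by
      intro a b hab
      have h5 := hΨ' ⟨s(a, b), T₂.mem_edgeSet.mpr hab⟩ a b rfl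
      have h6 := (φ.symm ⟨s(a, b), T₂.mem_edgeSet.mpr hab⟩).2
      rw [h5] at h6
      exact T₁.mem_edgeSet.mp h6
    refine ⟨⟨⟨Ψ, Ψ', hli, hri⟩, ?_⟩⟩
    intro a b
    show T₂.Adj (Ψ a) (Ψ b) ↔ T₁.Adj a b
    constructor
    · intro h
      have h5 := hadj₂ _ _ h
      rwa [hli, hli] at h5
    · exact hadj₁ a b

lemma AnAux.inner_sub_single {m : ℕ} {i j k l : Fin m} (hij : i ≠ j) (hkl : k ≠ l) :
    ((inner ℝ (EuclideanSpace.single i (1:ℝ) - EuclideanSpace.single j 1)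
      (EuclideanSpace.single k (1:ℝ) - EuclideanSpace.single l 1) : ℝ) = 0) ↔
    (i ≠ k ∧ i ≠ l ∧ j ≠ k ∧ j ≠ l) := by
  have hval : (inner ℝ (EuclideanSpace.single i (1:ℝ) - EuclideanSpace.single j 1)
      (EuclideanSpace.single k (1:ℝ) - EuclideanSpace.single l 1) : ℝ) =
      ((if i = k then (1:ℝ) else 0) - (if i = l then 1 else 0)) -
      ((if j = k then 1 else 0) - (if j = l then 1 else 0)) := by
    simp only [inner_sub_left, inner_sub_right, EuclideanSpace.inner_single_left,
      map_one, one_mul, EuclideanSpace.single_apply]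
    ring
  rw [hval]
  constructor
  · intro h0
    refine ⟨?_, ?_, ?_, ?_⟩ <;> intro heq <;> subst heq <;> revert h0
    · simp only [if_pos rfl, if_neg hkl, if_neg (Ne.symm hij)]
      by_cases h : j = l <;> simp [h] <;> norm_num
    · simp only [if_pos rfl, if_neg (Ne.symm hkl), if_neg (Ne.symm hij)]
      by_cases h : j = k <;> simp [h] <;> norm_num
    · simp only [if_pos rfl, if_neg hkl, if_neg hij]
      by_cases h : i = l <;> simp [h] <;> norm_num
    · simp only [if_pos rfl, if_neg (Ne.symm hkl), if_neg hij]
      by_cases h : i = k <;> simp [h] <;> norm_num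
  · rintro ⟨a, b, c, d⟩
    simp [a, b, c, d]

/-- The families of simplices generating `Aₙ` are in one-to-one correspondence with
the trees with `n+1` vertices: two trees on `Fin (n+1)` are isomorphic if and only if
their associated root families (one vector `eᵢ - eⱼ` per edge) agree up to a linear
isometry, a bijection of the index sets, and signs. -/
theorem An_families_iff_trees {n : ℕ}
    (T₁ T₂ : SimpleGraph (Fin (n + 1)))
    (h₁ : T₁.IsTree) (h₂ : T₂.IsTree)
    (vec₁ : T₁.edgeSet → EuclideanSpace ℝ (Fin (n + 1)))
    (vec₂ : T₂.edgeSet → EuclideanSpace ℝ (Fin (n + 1)))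
    (hvec₁ : ∀ e : T₁.edgeSet, ∃ i j : Fin (n + 1),
      (e : Sym2 (Fin (n + 1))) = s(i, j) ∧
      vec₁ e = EuclideanSpace.single i 1 - EuclideanSpace.single j 1)
    (hvec₂ : ∀ e : T₂.edgeSet, ∃ i j : Fin (n + 1),
      (e : Sym2 (Fin (n + 1))) = s(i, j) ∧
      vec₂ e = EuclideanSpace.single i 1 - EuclideanSpace.single j 1) :
    Nonempty (T₁ ≃g T₂) ↔
      ∃ (T : EuclideanSpace ℝ (Fin (n + 1)) ≃ₗᵢ[ℝ] EuclideanSpace ℝ (Fin (n + 1)))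
        (φ : T₁.edgeSet ≃ T₂.edgeSet) (ε : T₁.edgeSet → ℝ),
        (∀ e, ε e = 1 ∨ ε e = -1) ∧
        ∀ e, vec₂ (φ e) = ε e • T (vec₁ e) := by
  classical
  constructor
  · rintro ⟨g⟩
    set T : EuclideanSpace ℝ (Fin (n + 1)) ≃ₗᵢ[ℝ] EuclideanSpace ℝ (Fin (n + 1)) :=
      LinearIsometryEquiv.piLpCongrLeft 2 ℝ ℝ g.toEquiv with hTdef
    have hT : ∀ a : Fin (n + 1),
        T (EuclideanSpace.single a 1) = EuclideanSpace.single (g a) 1 := by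
      intro a
      have h9 := LinearIsometryEquiv.piLpCongrLeft_single (p := 2) (𝕜 := ℝ) (E := ℝ)
        g.toEquiv a (1 : ℝ)
      rw [hTdef]
      simpa using h9
    refine ⟨T, g.mapEdgeSet,
      fun e => if vec₂ (g.mapEdgeSet e) = T (vec₁ e) then 1 else -1, ?_, ?_⟩
    · intro e
      dsimp only
      split_ifs <;> simp
    · intro e
      obtain ⟨i, j, he, hv⟩ := hvec₁ e
      obtain ⟨k, l, he', hv'⟩ := hvec₂ (g.mapEdgeSet e)
      have hmap : ((g.mapEdgeSet e : T₂.edgeSet) : Sym2 (Fin (n + 1))) = s(g i, g j) := by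
        show Sym2.map g (e : Sym2 (Fin (n + 1))) = s(g i, g j)
        rw [he, Sym2.map_pair_eq]
      have hor : vec₂ (g.mapEdgeSet e) = T (vec₁ e) ∨
          vec₂ (g.mapEdgeSet e) = -(T (vec₁ e)) := by
        rcases Sym2.eq_iff.mp (hmap.symm.trans he') with ⟨h5, h6⟩ | ⟨h5, h6⟩
        · left
          rw [hv', ← h5, ← h6, hv, map_sub, hT, hT]
        · right
          rw [hv', ← h5, ← h6, hv, map_sub, hT, hT]
          abel
      dsimp only
      by_cases hc : vec₂ (g.mapEdgeSet e) = T (vec₁ e)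
      · rw [if_pos hc, one_smul]
        exact hc
      · rw [if_neg hc, neg_one_smul]
        rcases hor with h | h
        · exact absurd h hc
        · exact h
  · rintro ⟨T, φ, ε, hε, hvv⟩
    have key : ∀ e f : T₁.edgeSet,
        (∃ v, v ∈ (e : Sym2 (Fin (n+1))) ∧ v ∈ (f : Sym2 (Fin (n+1)))) ↔
        (∃ v, v ∈ ((φ e : T₂.edgeSet) : Sym2 (Fin (n+1))) ∧
              v ∈ ((φ f : T₂.edgeSet) : Sym2 (Fin (n+1)))) := by
      intro e f
      obtain ⟨i, j, he, hv⟩ := hvec₁ e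
      obtain ⟨k, l, hf, hw⟩ := hvec₁ f
      obtain ⟨i', j', he', hv'⟩ := hvec₂ (φ e)
      obtain ⟨k', l', hf', hw'⟩ := hvec₂ (φ f)
      have hij : i ≠ j := fun h =>
        T₁.not_isDiag_of_mem_edgeSet e.2 (by rw [he, Sym2.mk_isDiag_iff]; exact h)
      have hkl : k ≠ l := fun h =>
        T₁.not_isDiag_of_mem_edgeSet f.2 (by rw [hf, Sym2.mk_isDiag_iff]; exact h)
      have hij' : i' ≠ j' := fun h =>
        T₂.not_isDiag_of_mem_edgeSet (φ e).2 (by rw [he', Sym2.mk_isDiag_iff]; exact h)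
      have hkl' : k' ≠ l' := fun h =>
        T₂.not_isDiag_of_mem_edgeSet (φ f).2 (by rw [hf', Sym2.mk_isDiag_iff]; exact h)
      have hεe : ε e ≠ 0 := by rcases hε e with h | h <;> rw [h] <;> norm_num
      have hεf : ε f ≠ 0 := by rcases hε f with h | h <;> rw [h] <;> norm_num
      have hinner : (inner ℝ (vec₂ (φ e)) (vec₂ (φ f)) : ℝ) =
          ε e * (ε f * (inner ℝ (vec₁ e) (vec₁ f) : ℝ)) := by
        rw [hvv e, hvv f, real_inner_smul_left, real_inner_smul_right,
          LinearIsometryEquiv.inner_map_map]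
      have h0 : ((inner ℝ (vec₂ (φ e)) (vec₂ (φ f)) : ℝ) = 0) ↔
          ((inner ℝ (vec₁ e) (vec₁ f) : ℝ) = 0) := by
        rw [hinner, mul_eq_zero, mul_eq_zero]
        simp [hεe, hεf]
      rw [hv, hw] at h0
      rw [hv', hw'] at h0
      rw [AnAux.inner_sub_single hij' hkl', AnAux.inner_sub_single hij hkl] at h0
      rw [he, hf, he', hf']
      simp only [Sym2.mem_iff]
      have mem_of : ∀ a b c d : Fin (n+1), ¬(a ≠ c ∧ a ≠ d ∧ b ≠ c ∧ b ≠ d) →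
          ∃ v, (v = a ∨ v = b) ∧ (v = c ∨ v = d) := by
        intro a b c d h
        by_cases h1 : a = c
        · exact ⟨a, Or.inl rfl, Or.inl h1⟩
        by_cases h2 : a = d
        · exact ⟨a, Or.inl rfl, Or.inr h2⟩
        by_cases h3 : b = c
        · exact ⟨b, Or.inr rfl, Or.inl h3⟩
        by_cases h4 : b = d
        · exact ⟨b, Or.inr rfl, Or.inr h4⟩
        · exact absurd ⟨h1, h2, h3, h4⟩ h
      constructor
      · rintro ⟨v, hv1, hv2⟩
        refine mem_of i' j' k' l' (fun hp => ?_)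
        have hq := h0.mp hp
        rcases hv1 with rfl | rfl <;> rcases hv2 with h9 | h9 <;> tauto
      · rintro ⟨v, hv1, hv2⟩
        refine mem_of i j k l (fun hp => ?_)
        have hq := h0.mpr hp
        rcases hv1 with rfl | rfl <;> rcases hv2 with h9 | h9 <;> tauto
    exact AnAux.tree_iso T₁ T₂ h₁ h₂ φ key
end

section
/- Let f_1, …, f_n be linearly independent vectors in EuclideanSpace ℝ (Fin n), each belonging to the set {±e_i : i} ∪ {±e_i ± e_j : i ≠ j} (where e_1, …, e_n is the standard orthonormal basis), and suppose the family f_1, …, f_n is indecomposable. Then the subgroup of linear isometries of EuclideanSpace ℝ (Fin n) generated by the reflections in f_1, …, f_n equals the subgroup generated by all reflections in the vectors e_i (1 ≤ i ≤ n) and e_i ± e_j (i < j) — namely the full group of signed coordinate permutations, the Weyl group of B_n — if and only if f_k = e_i or f_k = −e_i for some k and some i. -/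
open scoped RealInnerProductSpace

/-- `v` is a root of the root system `Bₙ`: `v = ±eᵢ` or `v = ±eᵢ ± eⱼ` with `i ≠ j`. -/
def IsBRoot {m : ℕ} (v : EuclideanSpace ℝ (Fin m)) : Prop :=
  (∃ i, v = EuclideanSpace.single i 1 ∨ v = -EuclideanSpace.single i 1) ∨
  (∃ i j, i ≠ j ∧
    (v = EuclideanSpace.single i 1 + EuclideanSpace.single j 1 ∨
     v = EuclideanSpace.single i 1 - EuclideanSpace.single j 1 ∨
     v = -(EuclideanSpace.single i 1 + EuclideanSpace.single j 1)))

lemma reflIn_apply {m : ℕ} (v x : EuclideanSpace ℝ (Fin m)) :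
    reflIn v x = x - (2 * ⟪v, x⟫ / ⟪v, v⟫) • v := by
  rw [reflIn, Submodule.reflection_orthogonal_apply, Submodule.reflection_apply, Submodule.starProjection_singleton,
    real_inner_self_eq_norm_sq]
  rw [two_smul]
  simp only [RCLike.ofReal_real_eq_id, id_eq]
  match_scalars <;> ring

lemma reflIn_smul {m : ℕ} {c : ℝ} (hc : c ≠ 0) (v : EuclideanSpace ℝ (Fin m)) :
    reflIn (c • v) = reflIn v := by
  rcases eq_or_ne v 0 with rfl | hv
  · simp
  · have hvv : ⟪v, v⟫ ≠ (0:ℝ) := inner_self_ne_zero.mpr hv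
    ext x : 1
    rw [reflIn_apply, reflIn_apply, real_inner_smul_left, real_inner_smul_left,
      real_inner_smul_right, smul_smul]
    congr 1
    set D : ℝ := ⟪v, v⟫ with hD
    set I : ℝ := ⟪v, x⟫ with hI
    field_simp

lemma reflIn_neg {m : ℕ} (v : EuclideanSpace ℝ (Fin m)) : reflIn (-v) = reflIn v := by
  rw [← neg_one_smul ℝ v, reflIn_smul (by norm_num)]

lemma reflIn_mul {m : ℕ} (g : EuclideanSpace ℝ (Fin m) ≃ₗᵢ[ℝ] EuclideanSpace ℝ (Fin m))
    (v : EuclideanSpace ℝ (Fin m)) :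
    reflIn (g v) = g * reflIn v * g⁻¹ := by
  ext x
  have h1 : (g * reflIn v * g⁻¹) x = g (reflIn v (g.symm x)) := rfl
  have h2 : ⟪g v, x⟫ = ⟪v, g.symm x⟫ := by
    rw [← g.inner_map_map v (g.symm x), g.apply_symm_apply]
  have h3 : ⟪g v, g v⟫ = ⟪v, v⟫ := g.inner_map_map _ _
  rw [h1, reflIn_apply, reflIn_apply, map_sub, map_smul, h2, h3, g.apply_symm_apply]

lemma reflIn_conj_mem {m : ℕ} {G : Subgroup (EuclideanSpace ℝ (Fin m) ≃ₗᵢ[ℝ] EuclideanSpace ℝ (Fin m))}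
    {v w : EuclideanSpace ℝ (Fin m)} (hv : reflIn v ∈ G) (hw : reflIn w ∈ G) :
    reflIn (reflIn v w) ∈ G := by
  rw [reflIn_mul]
  exact mul_mem (mul_mem hv hw) (inv_mem hv)

section comp
variable {m : ℕ}

local notation "ee" i => EuclideanSpace.single i (1:ℝ)

lemma inner_single_single (i j : Fin m) :
    ⟪(ee i), (ee j)⟫ = if i = j then (1:ℝ) else 0 := by
  rw [EuclideanSpace.inner_single_left]
  simp [EuclideanSpace.single_apply, eq_comm]

lemma reflIn_single_single_self (a : Fin m) : reflIn (ee a) (ee a) = -(ee a) := by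
  rw [reflIn_apply, inner_single_single]
  simp
  module

lemma reflIn_single_single_other {a c : Fin m} (h : c ≠ a) :
    reflIn (ee a) (ee c) = (ee c) := by
  rw [reflIn_apply, inner_single_single, if_neg (Ne.symm h)]
  simp

lemma inner_pm_self {η : ℝ} (hη : η * η = 1) {a b : Fin m} (hab : a ≠ b) : ⟪(ee a) + η • (ee b), (ee a) + η • (ee b)⟫ = (2:ℝ) := by
  rw [inner_add_add_self, real_inner_smul_left, real_inner_smul_right,
    real_inner_smul_left]
  simp [inner_single_single, hab, Ne.symm hab, real_inner_smul_right]
  nlinarith [hη]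

lemma inner_pm_single {η : ℝ} {a b : Fin m} (c : Fin m) :
    ⟪(ee a) + η • (ee b), (ee c)⟫ =
      (if a = c then (1:ℝ) else 0) + η * (if b = c then (1:ℝ) else 0) := by
  rw [inner_add_left, real_inner_smul_left, inner_single_single, inner_single_single]

lemma reflIn_pm_left {η : ℝ} (hη : η * η = 1) {a b : Fin m} (hab : a ≠ b) : reflIn ((ee a) + η • (ee b)) (ee a) = (-η) • (ee b) := by
  rw [reflIn_apply, inner_pm_self hη hab, inner_pm_single]
  rw [if_pos rfl, if_neg (Ne.symm hab)]
  have h2 : (2 * (1 + η * 0) / 2) = (1:ℝ) := by norm_num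
  rw [h2, one_smul]
  module

lemma reflIn_pm_right {η : ℝ} (hη : η * η = 1) {a b : Fin m} (hab : a ≠ b) : reflIn ((ee a) + η • (ee b)) (ee b) = (-η) • (ee a) := by
  rw [reflIn_apply, inner_pm_self hη hab, inner_pm_single]
  rw [if_neg hab, if_pos rfl]
  have h2 : (2 * (0 + η * 1) / 2) = η := by norm_num
  have hsmul : η • ((ee a) + η • (ee b)) = η • (ee a) + (ee b) := by
    rw [smul_add, smul_smul, hη, one_smul]
  rw [h2, hsmul]
  module

lemma reflIn_pm_other {η : ℝ} (hη : η * η = 1) {a b : Fin m} (hab : a ≠ b) {c : Fin m} (hc : c ≠ a) (hc' : c ≠ b) :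
    reflIn ((ee a) + η • (ee b)) (ee c) = (ee c) := by
  rw [reflIn_apply, inner_pm_self hη hab, inner_pm_single]
  rw [if_neg (Ne.symm hc), if_neg (Ne.symm hc')]
  norm_num

end comp

section more
variable {m : ℕ}
local notation "ee" i => EuclideanSpace.single i (1:ℝ)

lemma eta_cases {η : ℝ} (hη : η * η = 1) : η = 1 ∨ η = -1 :=
  mul_self_eq_one_iff.mp hη

lemma eta_ne_zero {η : ℝ} (hη : η * η = 1) : η ≠ 0 := by
  rintro rfl; norm_num at hη

lemma reflIn_pm_comm {η : ℝ} (hη : η * η = 1) (a b : Fin m) :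
    reflIn ((ee a) + η • (ee b)) = reflIn ((ee b) + η • (ee a)) := by
  rcases eta_cases hη with rfl | rfl
  · rw [one_smul, one_smul, add_comm]
  · have : (EuclideanSpace.single b (1:ℝ)) + (-1:ℝ) • (ee a)
        = -((ee a) + (-1:ℝ) • (ee b)) := by module
    rw [this, reflIn_neg]

lemma exists_coord_inner_ne {x y : EuclideanSpace ℝ (Fin m)} (h : ⟪x, y⟫ ≠ 0) :
    ∃ i, x i ≠ 0 ∧ y i ≠ 0 := by
  by_contra hc
  push_neg at hc
  apply h
  rw [PiLp.inner_apply]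
  apply Finset.sum_eq_zero
  intro i _
  rcases eq_or_ne (x i) 0 with hx | hx
  · simp [hx]
  · simp [hc i hx]

lemma reflIn_pm_coords {η : ℝ} (hη : η * η = 1) {a b : Fin m} (hab : a ≠ b)
    (x : EuclideanSpace ℝ (Fin m)) (j : Fin m) :
    reflIn ((ee a) + η • (ee b)) x j
      = x j - (x a + η * x b) *
          ((if j = a then (1:ℝ) else 0) + η * (if j = b then (1:ℝ) else 0)) := by
  have hin : ⟪(ee a) + η • (ee b), x⟫ = x a + η * x b := by
    rw [inner_add_left, real_inner_smul_left, EuclideanSpace.inner_single_left,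
      EuclideanSpace.inner_single_left]
    simp
  rw [reflIn_apply, inner_pm_self hη hab, hin]
  have h2 : 2 * (x a + η * x b) / 2 = x a + η * x b := by ring
  rw [h2, PiLp.sub_apply, PiLp.smul_apply, PiLp.add_apply, PiLp.smul_apply,
    EuclideanSpace.single_apply, EuclideanSpace.single_apply]
  simp [smul_eq_mul]

lemma prod_reflIn_pm {η : ℝ} (hη : η * η = 1) {a b : Fin m} (hab : a ≠ b)
    (x : EuclideanSpace ℝ (Fin m)) :
    ∏ j, reflIn ((ee a) + η • (ee b)) x j = ∏ j, x j := by
  have hb : b ∈ Finset.univ.erase a :=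
    Finset.mem_erase.mpr ⟨Ne.symm hab, Finset.mem_univ b⟩
  have key : ∀ y : Fin m → ℝ,
      ∏ j, y j = y a * (y b * ∏ j ∈ (Finset.univ.erase a).erase b, y j) := by
    intro y
    rw [← Finset.mul_prod_erase Finset.univ y (Finset.mem_univ a),
      ← Finset.mul_prod_erase _ y hb]
  rw [key (fun j => reflIn ((ee a) + η • (ee b)) x j), key (fun j => x j)]
  have ha' : reflIn ((ee a) + η • (ee b)) x a = -(η * x b) := by
    rw [reflIn_pm_coords hη hab, if_pos rfl, if_neg hab]; ring
  have hb' : reflIn ((ee a) + η • (ee b)) x b = -(η * x a) := by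
    rw [reflIn_pm_coords hη hab, if_neg (Ne.symm hab), if_pos rfl]
    linear_combination (-(x b)) * hη
  have hrest : ∏ j ∈ (Finset.univ.erase a).erase b,
      reflIn ((ee a) + η • (ee b)) x j = ∏ j ∈ (Finset.univ.erase a).erase b, x j := by
    apply Finset.prod_congr rfl
    intro j hj
    have hj1 : j ≠ b := (Finset.mem_erase.mp hj).1
    have hj2 : j ≠ a := (Finset.mem_erase.mp (Finset.mem_erase.mp hj).2).1
    rw [reflIn_pm_coords hη hab, if_neg hj2, if_neg hj1]; ring
  rw [ha', hb', hrest]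
  ring_nf
  linear_combination (x a * x b * ∏ j ∈ (Finset.univ.erase a).erase b, x j) * hη

noncomputable def prodPres (m : ℕ) :
    Subgroup (EuclideanSpace ℝ (Fin m) ≃ₗᵢ[ℝ] EuclideanSpace ℝ (Fin m)) where
  carrier := {g | ∀ x, ∏ i, g x i = ∏ i, x i}
  one_mem' := by intro x; rfl
  mul_mem' := by
    intro g h hg hh x
    have : (g * h) x = g (h x) := rfl
    rw [this, hg, hh]
  inv_mem' := by
    intro g hg x
    have h1 : g (g⁻¹ x) = x := g.apply_symm_apply x
    have := hg (g⁻¹ x)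
    rw [h1] at this
    exact this.symm

lemma mem_prodPres {m : ℕ} (g : EuclideanSpace ℝ (Fin m) ≃ₗᵢ[ℝ] EuclideanSpace ℝ (Fin m)) :
    g ∈ prodPres m ↔ ∀ x, ∏ i, g x i = ∏ i, x i := Iff.rfl

end more

section steps
variable {m : ℕ}
  {G : Subgroup (EuclideanSpace ℝ (Fin m) ≃ₗᵢ[ℝ] EuclideanSpace ℝ (Fin m))}
local notation "ee" i => EuclideanSpace.single i (1:ℝ)

lemma long_trans {a b c : Fin m} (hab : a ≠ b) (hbc : b ≠ c) (hac : a ≠ c)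
    {η θ : ℝ} (hη : η * η = 1) (hθ : θ * θ = 1)
    (h1 : reflIn ((ee a) + η • (ee b)) ∈ G)
    (h2 : reflIn ((ee b) + θ • (ee c)) ∈ G) :
    reflIn ((ee a) + (-(η * θ)) • (ee c)) ∈ G := by
  have hw := reflIn_conj_mem h2 h1
  have hcomp : reflIn ((ee b) + θ • (ee c)) ((ee a) + η • (ee b))
      = (ee a) + (-(η * θ)) • (ee c) := by
    rw [map_add, map_smul, reflIn_pm_other hθ hbc hab hac,
      reflIn_pm_left hθ hbc]
    module
  rwa [hcomp] at hw

lemma short_step {a b : Fin m} (hab : a ≠ b) {η : ℝ} (hη : η * η = 1)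
    (h1 : reflIn ((ee a) + η • (ee b)) ∈ G) (h2 : reflIn (ee a) ∈ G) :
    reflIn (ee b) ∈ G := by
  have hw := reflIn_conj_mem h1 h2
  rw [reflIn_pm_left hη hab] at hw
  rwa [reflIn_smul (neg_ne_zero.mpr (eta_ne_zero hη))] at hw

lemma flip_step {a b : Fin m} (hab : a ≠ b) {η : ℝ} (hη : η * η = 1)
    (h1 : reflIn ((ee a) + η • (ee b)) ∈ G) (h2 : reflIn (ee b) ∈ G) :
    reflIn ((ee a) + (-η) • (ee b)) ∈ G := by
  have hw := reflIn_conj_mem h2 h1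
  have hcomp : reflIn (ee b) ((ee a) + η • (ee b)) = (ee a) + (-η) • (ee b) := by
    rw [map_add, map_smul, reflIn_single_single_other hab, reflIn_single_single_self]
    module
  rwa [hcomp] at hw

def TT (G : Subgroup (EuclideanSpace ℝ (Fin m) ≃ₗᵢ[ℝ] EuclideanSpace ℝ (Fin m)))
    (a b : Fin m) : Prop :=
  a = b ∨ (a ≠ b ∧ ∃ η : ℝ, η * η = 1 ∧ reflIn ((ee a) + η • (ee b)) ∈ G)

lemma TT_trans {a b c : Fin m} (h1 : TT G a b) (h2 : TT G b c) : TT G a c := by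
  rcases h1 with rfl | ⟨hab, η, hη, hm1⟩
  · exact h2
  rcases h2 with rfl | ⟨hbc, θ, hθ, hm2⟩
  · exact Or.inr ⟨hab, η, hη, hm1⟩
  rcases eq_or_ne a c with rfl | hac
  · exact Or.inl rfl
  · exact Or.inr ⟨hac, -(η * θ), by linear_combination (θ * θ) * hη + hθ,
      long_trans hab hbc hac hη hθ hm1 hm2⟩

lemma TT_short {a b : Fin m} (h1 : TT G a b) (h2 : reflIn (ee a) ∈ G) :
    reflIn (ee b) ∈ G := by
  rcases h1 with rfl | ⟨hab, η, hη, hm⟩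
  · exact h2
  · exact short_step hab hη hm h2

end steps

section mainsec
local notation "ee" i => EuclideanSpace.single i (1:ℝ)

lemma single_coord_ne {m : ℕ} {i a : Fin m} {c : ℝ}
    (h : (EuclideanSpace.single i c : EuclideanSpace ℝ (Fin m)) a ≠ 0) : a = i := by
  by_contra h'
  rw [EuclideanSpace.single_apply, if_neg h'] at h
  exact h rfl

lemma sub_eq_pm {m : ℕ} (i j : Fin m) :
    (EuclideanSpace.single i (1:ℝ)) - (ee j) = (ee i) + (-1:ℝ) • (ee j) := by module

lemma add_eq_pm {m : ℕ} (i j : Fin m) :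
    (EuclideanSpace.single i (1:ℝ)) + (ee j) = (ee i) + (1:ℝ) • (ee j) := by module

/-- An indecomposable linearly independent system of `n` roots of `Bₙ` generates the
full Weyl group of `Bₙ` (the group generated by all reflections in the roots `eᵢ` and
`eᵢ ± eⱼ`, i.e. the group of signed coordinate permutations) if and only if the system
contains a root `±eᵢ`. -/
theorem Bn_generation_iff_short_root {n : ℕ}
    (f : Fin n → EuclideanSpace ℝ (Fin n))
    (hli : LinearIndependent ℝ f)
    (hroot : ∀ k, IsBRoot (f k))
    (hindec : (gramGraph f).Connected) :
    Subgroup.closure (Set.range fun k => reflIn (f k)) =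
      Subgroup.closure {r | (∃ i, r = reflIn (EuclideanSpace.single i (1 : ℝ))) ∨
        (∃ i j, i ≠ j ∧
          (r = reflIn (EuclideanSpace.single i (1 : ℝ) + EuclideanSpace.single j 1) ∨
           r = reflIn (EuclideanSpace.single i (1 : ℝ) - EuclideanSpace.single j 1)))}
    ↔ ∃ k i, f k = EuclideanSpace.single i 1 ∨ f k = -EuclideanSpace.single i 1 := by
  have hnonempty : Nonempty (Fin n) := hindec.nonempty
  constructor
  · -- forward direction
    intro heq
    by_contra hno
    push_neg at hno
    obtain ⟨i0⟩ := hnonempty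
    have hP : Subgroup.closure (Set.range fun k => reflIn (f k)) ≤ prodPres n := by
      rw [Subgroup.closure_le]
      rintro r ⟨k, rfl⟩
      beta_reduce
      rw [SetLike.mem_coe, mem_prodPres]
      rcases hroot k with ⟨i, h | h⟩ | ⟨i, j, hij, h | h | h⟩
      · exact absurd h (hno k i).1
      · exact absurd h (hno k i).2
      · intro x
        rw [h, add_eq_pm]
        exact prod_reflIn_pm (by norm_num) hij x
      · intro x
        rw [h, sub_eq_pm]
        exact prod_reflIn_pm (by norm_num) hij x
      · intro x
        rw [h, reflIn_neg, add_eq_pm]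
        exact prod_reflIn_pm (by norm_num) hij x
    have h0 : reflIn (ee i0) ∈ prodPres n := by
      apply hP
      rw [heq]
      exact Subgroup.subset_closure (Or.inl ⟨i0, rfl⟩)
    set x1 : EuclideanSpace ℝ (Fin n) := WithLp.toLp 2 (fun _ => (1:ℝ)) with hx1
    have hcoords : ∀ j, reflIn (ee i0) x1 j = if j = i0 then (-1:ℝ) else 1 := by
      intro j
      rw [reflIn_apply]
      have h1 : ⟪(ee i0), x1⟫ = 1 := by
        rw [EuclideanSpace.inner_single_left]
        simp [hx1]
      rw [h1, inner_single_single, if_pos rfl]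
      rw [PiLp.sub_apply, PiLp.smul_apply, EuclideanSpace.single_apply]
      by_cases hj : j = i0 <;> norm_num [hj, hx1]
    have hprod := (mem_prodPres _).mp h0 x1
    rw [Finset.prod_congr rfl (fun j _ => hcoords j),
      Finset.prod_ite_eq' Finset.univ i0 (fun _ => (-1:ℝ))] at hprod
    norm_num at hprod
  · -- reverse direction
    rintro ⟨k0, i0, hk0⟩
    apply le_antisymm
    · rw [Subgroup.closure_le]
      rintro r ⟨k, rfl⟩
      beta_reduce
      apply Subgroup.subset_closure
      rcases hroot k with ⟨i, h | h⟩ | ⟨i, j, hij, h | h | h⟩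
      · exact Or.inl ⟨i, by rw [h]⟩
      · exact Or.inl ⟨i, by rw [h, reflIn_neg]⟩
      · exact Or.inr ⟨i, j, hij, Or.inl (by rw [h])⟩
      · exact Or.inr ⟨i, j, hij, Or.inr (by rw [h])⟩
      · exact Or.inr ⟨i, j, hij, Or.inl (by rw [h, reflIn_neg])⟩
    · set G := Subgroup.closure (Set.range fun k => reflIn (f k)) with hGdef
      have hgen : ∀ k, reflIn (f k) ∈ G := fun k => Subgroup.subset_closure ⟨k, rfl⟩
      -- support analysis
      have hsupp : ∀ k a b, f k a ≠ 0 → f k b ≠ 0 → a ≠ b →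
          ∃ η : ℝ, η * η = 1 ∧ reflIn (f k) = reflIn ((ee a) + η • (ee b)) := by
        intro k a b ha hb hab
        rcases hroot k with ⟨i, h | h⟩ | ⟨i, j, hij, h | h | h⟩
        · rw [h] at ha hb
          exact absurd ((single_coord_ne ha).trans (single_coord_ne hb).symm) hab
        · rw [h] at ha hb
          rw [PiLp.neg_apply, neg_ne_zero] at ha hb
          exact absurd ((single_coord_ne ha).trans (single_coord_ne hb).symm) hab
        · have ha' : a = i ∨ a = j := by
            by_contra h'
            push_neg at h'
            rw [h, PiLp.add_apply, EuclideanSpace.single_apply,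
              EuclideanSpace.single_apply, if_neg h'.1, if_neg h'.2] at ha
            norm_num at ha
          have hb' : b = i ∨ b = j := by
            by_contra h'
            push_neg at h'
            rw [h, PiLp.add_apply, EuclideanSpace.single_apply,
              EuclideanSpace.single_apply, if_neg h'.1, if_neg h'.2] at hb
            norm_num at hb
          refine ⟨1, by norm_num, ?_⟩
          rcases ha' with rfl | rfl <;> rcases hb' with rfl | rfl
          · exact absurd rfl hab
          · rw [h, add_eq_pm]
          · rw [h, add_eq_pm]; exact reflIn_pm_comm (by norm_num) _ _
          · exact absurd rfl hab
        · have ha' : a = i ∨ a = j := by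
            by_contra h'
            push_neg at h'
            rw [h, PiLp.sub_apply, EuclideanSpace.single_apply,
              EuclideanSpace.single_apply, if_neg h'.1, if_neg h'.2] at ha
            norm_num at ha
          have hb' : b = i ∨ b = j := by
            by_contra h'
            push_neg at h'
            rw [h, PiLp.sub_apply, EuclideanSpace.single_apply,
              EuclideanSpace.single_apply, if_neg h'.1, if_neg h'.2] at hb
            norm_num at hb
          refine ⟨-1, by norm_num, ?_⟩
          rcases ha' with rfl | rfl <;> rcases hb' with rfl | rfl
          · exact absurd rfl hab
          · rw [h, sub_eq_pm]
          · rw [h, sub_eq_pm]; exact reflIn_pm_comm (by norm_num) _ _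
          · exact absurd rfl hab
        · have ha' : a = i ∨ a = j := by
            by_contra h'
            push_neg at h'
            rw [h, PiLp.neg_apply, PiLp.add_apply, EuclideanSpace.single_apply,
              EuclideanSpace.single_apply, if_neg h'.1, if_neg h'.2] at ha
            norm_num at ha
          have hb' : b = i ∨ b = j := by
            by_contra h'
            push_neg at h'
            rw [h, PiLp.neg_apply, PiLp.add_apply, EuclideanSpace.single_apply,
              EuclideanSpace.single_apply, if_neg h'.1, if_neg h'.2] at hb
            norm_num at hb
          refine ⟨1, by norm_num, ?_⟩
          rcases ha' with rfl | rfl <;> rcases hb' with rfl | rfl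
          · exact absurd rfl hab
          · rw [h, reflIn_neg, add_eq_pm]
          · rw [h, reflIn_neg, add_eq_pm]; exact reflIn_pm_comm (by norm_num) _ _
          · exact absurd rfl hab
      have hTmem : ∀ k a b, f k a ≠ 0 → f k b ≠ 0 → TT G a b := by
        intro k a b ha hb
        rcases eq_or_ne a b with rfl | hab
        · exact Or.inl rfl
        · obtain ⟨η, hη, hrefl⟩ := hsupp k a b ha hb hab
          have := hgen k
          rw [hrefl] at this
          exact Or.inr ⟨hab, η, hη, this⟩
      have hwalk : ∀ (k l : Fin n), (gramGraph f).Walk k l → ∀ a b,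
          f k a ≠ 0 → f l b ≠ 0 → TT G a b := by
        intro k l w
        induction w with
        | nil => exact fun a b ha hb => hTmem _ a b ha hb
        | cons hadj p ih =>
          intro a b ha hb
          obtain ⟨c, hc1, hc2⟩ := exists_coord_inner_ne (show _ ∧ _ from hadj).2
          exact TT_trans (hTmem _ a c ha hc1) (ih c b hc2 hb)
      have hcoord : ∀ i : Fin n, ∃ k, f k i ≠ 0 := by
        intro i
        by_contra hc
        push_neg at hc
        have hsp : Submodule.span ℝ (Set.range f) = ⊤ :=
          hli.span_eq_top_of_card_eq_finrank
            (by simp [finrank_euclideanSpace_fin])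
        have hmem : (ee i) ∈ Submodule.span ℝ (Set.range f) := by
          rw [hsp]; trivial
        obtain ⟨c, hc'⟩ := (Submodule.mem_span_range_iff_exists_fun ℝ).mp hmem
        have h1 : ⟪(ee i), ∑ k, c k • f k⟫ = (0:ℝ) := by
          rw [inner_sum]
          apply Finset.sum_eq_zero
          intro k _
          rw [real_inner_smul_right, EuclideanSpace.inner_single_left]
          simp [hc k]
        rw [hc', EuclideanSpace.inner_single_left] at h1
        simp [EuclideanSpace.single_apply] at h1
      have hshort0 : reflIn (ee i0) ∈ G := by
        rcases hk0 with h | h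
        · have := hgen k0; rwa [h] at this
        · have := hgen k0; rwa [h, reflIn_neg] at this
      have hne0 : f k0 i0 ≠ 0 := by
        rcases hk0 with h | h <;>
          simp [h, EuclideanSpace.single_apply]
      have hshort : ∀ b, reflIn (EuclideanSpace.single b (1:ℝ)) ∈ G := by
        intro b
        obtain ⟨k, hk⟩ := hcoord b
        obtain ⟨w⟩ := hindec.preconnected k0 k
        exact TT_short (hwalk k0 k w i0 b hne0 hk) hshort0
      have hlong : ∀ (a b : Fin n), a ≠ b → ∀ η : ℝ, η * η = 1 →
          reflIn ((ee a) + η • (ee b)) ∈ G := by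
        intro a b hab η hη
        obtain ⟨ka, hka⟩ := hcoord a
        obtain ⟨kb, hkb⟩ := hcoord b
        obtain ⟨w⟩ := hindec.preconnected ka kb
        have hT := hwalk ka kb w a b hka hkb
        rcases hT with rfl | ⟨-, θ, hθ, hm⟩
        · exact absurd rfl hab
        · rcases eq_or_ne θ η with rfl | hne
          · exact hm
          · have hth : -θ = η := by
              rcases eta_cases hη with rfl | rfl <;> rcases eta_cases hθ with rfl | rfl <;>
                first | rfl | (exact absurd rfl hne) | norm_num
            have := flip_step hab hθ hm (hshort b)
            rwa [hth] at this
      rw [Subgroup.closure_le]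
      rintro r (⟨i, rfl⟩ | ⟨i, j, hij, rfl | rfl⟩)
      · exact hshort i
      · rw [add_eq_pm]
        exact hlong i j hij 1 (by norm_num)
      · rw [sub_eq_pm]
        exact hlong i j hij (-1) (by norm_num)
end mainsec
end

section
/- Let f_1, …, f_n be linearly independent vectors in EuclideanSpace ℝ (Fin n), each belonging to the set {±e_i : i} ∪ {±e_i ± e_j : i ≠ j} (where e_1, …, e_n is the standard orthonormal basis), such that the family is indecomposable and at least one f_k equals ±e_i for some i. Then: exactly one index k satisfies f_k ∈ {±e_i : i}; the remaining n−1 vectors are of the form ±e_i ± e_j with the n−1 unordered pairs {i, j} pairwise distinct; and the simple graph on Fin n whose edges are these n−1 pairs is a tree. (Every family generating B_n corresponds to a tree with n vertices exactly one of which is marked.) -/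
open scoped RealInnerProductSpace

/-- `v` is of the form `±eᵢ ± eⱼ` for the (unordered) pair `{i, j}`. -/
def HasBDPair {m : ℕ} (v : EuclideanSpace ℝ (Fin m)) (i j : Fin m) : Prop :=
  v = EuclideanSpace.single i 1 + EuclideanSpace.single j 1 ∨
  v = EuclideanSpace.single i 1 - EuclideanSpace.single j 1 ∨
  v = EuclideanSpace.single j 1 - EuclideanSpace.single i 1 ∨
  v = -(EuclideanSpace.single i 1 + EuclideanSpace.single j 1)

theorem HasBDPair.swap {m : ℕ} {v : EuclideanSpace ℝ (Fin m)} {i j : Fin m}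
    (h : HasBDPair v i j) : HasBDPair v j i := by
  rcases h with h | h | h | h
  · exact Or.inl (by rw [h, add_comm])
  · exact Or.inr (Or.inr (Or.inl h))
  · exact Or.inr (Or.inl h)
  · exact Or.inr (Or.inr (Or.inr (by rw [h, add_comm])))

/-- The graph on `Fin n` whose edges are the unordered pairs `{i, j}` such that some
member of the family is of the form `±eᵢ ± eⱼ`. -/
def pairGraph {n : ℕ} (f : Fin n → EuclideanSpace ℝ (Fin n)) : SimpleGraph (Fin n) where
  Adj i j := i ≠ j ∧ ∃ k, HasBDPair (f k) i j
  symm := ⟨fun i j h => ⟨h.1.symm, h.2.elim fun k hk => ⟨k, hk.swap⟩⟩⟩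
  loopless := ⟨fun i h => h.1 rfl⟩

open SimpleGraph

section GraphLemmas
variable {V : Type*} [Fintype V] [DecidableEq V] {G : SimpleGraph V}

lemma my_connected_card_vert_le [Fintype G.edgeSet] (hc : G.Connected) :
    Fintype.card V ≤ G.edgeFinset.card + 1 := by
  classical
  obtain ⟨r⟩ := hc.nonempty
  have key : ∀ v : V, v ≠ r → ∃ u, G.Adj v u ∧ G.dist u r < G.dist v r := by
    intro v hv
    obtain ⟨p, hp⟩ := (hc v r).exists_walk_length_eq_dist
    cases p with
    | nil => exact absurd rfl hv
    | @cons _ c _ h q =>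
      refine ⟨c, h, ?_⟩
      have h1 : G.dist c r ≤ q.length := SimpleGraph.dist_le q
      simp only [Walk.length_cons] at hp
      omega
  choose nb hnb hlt using key
  have hinj : Set.InjOn (fun v : V => if h : v ≠ r then s(v, nb v h) else s(r, r))
      ↑(Finset.univ.filter (· ≠ r)) := by
    intro a ha b hb hab
    simp only [Finset.coe_filter, Set.mem_setOf_eq] at ha hb
    simp only at hab
    rw [dif_pos ha.2, dif_pos hb.2, Sym2.eq_iff] at hab
    rcases hab with ⟨h1, _⟩ | ⟨h1, h2⟩
    · exact h1
    · exfalso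
      have l1 := hlt a ha.2
      have l2 := hlt b hb.2
      rw [h2] at l1; rw [← h1] at l2
      omega
  have hsub : ∀ v ∈ Finset.univ.filter (· ≠ r),
      (if h : v ≠ r then s(v, nb v h) else s(r, r)) ∈ G.edgeFinset := by
    intro v hv
    rw [Finset.mem_filter] at hv
    rw [dif_pos hv.2, mem_edgeFinset, mem_edgeSet]
    exact hnb v hv.2
  have hcard := Finset.card_le_card_of_injOn _ hsub hinj
  rw [Finset.filter_ne' Finset.univ r, Finset.card_erase_of_mem (Finset.mem_univ r),
    Finset.card_univ] at hcard
  omega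

lemma my_acyclic_of_card [Fintype G.edgeSet] (hc : G.Connected)
    (hcard : G.edgeFinset.card + 1 ≤ Fintype.card V) : G.IsAcyclic := by
  classical
  rw [isAcyclic_iff_forall_adj_isBridge]
  intro v w hvw
  by_contra hbr
  rw [isBridge_iff] at hbr
  have hre : (G \ fromEdgeSet {s(v, w)}).Reachable v w := by tauto
  set G' := G \ fromEdgeSet {s(v, w)} with hG'
  have hG'le : G' ≤ G := sdiff_le
  have hpre : ∀ a b : V, G.Walk a b → G'.Reachable a b := by
    intro a b p
    induction p with
    | nil => exact Reachable.refl _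
    | @cons a c b h p ih =>
      refine Reachable.trans ?_ ih
      by_cases he : s(a, c) = s(v, w)
      · rw [Sym2.eq_iff] at he
        rcases he with ⟨rfl, rfl⟩ | ⟨rfl, rfl⟩
        · exact hre
        · exact hre.symm
      · refine Adj.reachable ?_
        rw [hG', sdiff_adj, fromEdgeSet_adj]
        exact ⟨h, fun hx => he hx.1⟩
  haveI : Nonempty V := hc.nonempty
  have hconn' : G'.Connected := Connected.mk (fun a b => hpre a b (hc a b).some)
  haveI : Fintype G'.edgeSet := Set.Finite.fintype (Set.toFinite _)
  have hlt : G'.edgeFinset.card < G.edgeFinset.card := by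
    apply Finset.card_lt_card
    rw [Finset.ssubset_iff_of_subset (edgeFinset_subset_edgeFinset.2 hG'le)]
    refine ⟨s(v, w), ?_, ?_⟩
    · rw [mem_edgeFinset, mem_edgeSet]; exact hvw
    · rw [mem_edgeFinset, mem_edgeSet, hG', sdiff_adj, fromEdgeSet_adj]
      intro hx
      exact hx.2 ⟨rfl, hvw.ne⟩
  have := my_connected_card_vert_le hconn'
  omega

end GraphLemmas

section RootLemmas
variable {m : ℕ} {v : EuclideanSpace ℝ (Fin m)}

lemma my_short_coord {a : Fin m}
    (h : v = EuclideanSpace.single a 1 ∨ v = -EuclideanSpace.single a 1) :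
    (v a = 1 ∨ v a = -1) ∧ ∀ x, x ≠ a → v x = 0 := by
  rcases h with h | h <;> subst h <;>
    exact ⟨by simp [EuclideanSpace.single_apply], fun x hx => by
      simp [EuclideanSpace.single_apply, hx]⟩

lemma my_pair_coord {i j : Fin m} (hij : i ≠ j) (h : HasBDPair v i j) :
    v i ≠ 0 ∧ v j ≠ 0 ∧ ∀ x, x ≠ i → x ≠ j → v x = 0 := by
  rcases h with h | h | h | h <;> subst h <;>
    refine ⟨by simp [EuclideanSpace.single_apply, hij, hij.symm], by
        simp [EuclideanSpace.single_apply, hij, hij.symm], fun x hxi hxj => by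
        simp [EuclideanSpace.single_apply, hxi, hxj]⟩

lemma my_root_coord (h : IsBRoot v) (x : Fin m) : v x = 0 ∨ v x = 1 ∨ v x = -1 := by
  rcases h with ⟨i, h | h⟩ | ⟨i, j, hij, h | h | h⟩ <;> subst h <;>
    simp only [PiLp.add_apply, PiLp.sub_apply, PiLp.neg_apply,
      EuclideanSpace.single_apply] <;>
    split_ifs with h1 h2 <;>
      first
      | exact absurd (h1.symm.trans h2) hij
      | norm_num

lemma my_root_nonzero (h : IsBRoot v) : ∃ x, v x ≠ 0 := by
  rcases h with ⟨i, h⟩ | ⟨i, j, hij, h⟩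
  · obtain ⟨h1, -⟩ := my_short_coord h
    exact ⟨i, by rcases h1 with h1 | h1 <;> rw [h1] <;> norm_num⟩
  · have hp : HasBDPair v i j := by
      rcases h with h | h | h
      · exact Or.inl h
      · exact Or.inr (Or.inl h)
      · exact Or.inr (Or.inr (Or.inr h))
    exact ⟨i, (my_pair_coord hij hp).1⟩

lemma my_root_long (h : IsBRoot v)
    (hns : ¬ ∃ i, v = EuclideanSpace.single i 1 ∨ v = -EuclideanSpace.single i 1) :
    ∃ i j, i ≠ j ∧ HasBDPair v i j := by
  rcases h with ⟨i, h⟩ | ⟨i, j, hij, h⟩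
  · exact absurd ⟨i, h⟩ hns
  · refine ⟨i, j, hij, ?_⟩
    rcases h with h | h | h
    · exact Or.inl h
    · exact Or.inr (Or.inl h)
    · exact Or.inr (Or.inr (Or.inr h))

lemma my_root_not_pair_diag (hr : IsBRoot v) {i : Fin m} (h : HasBDPair v i i) : False := by
  have hz : ∀ x, v x = 0 := by
    intro x
    have h2 : v x = 0 ∨ v x = 2 ∨ v x = -2 := by
      rcases h with h | h | h | h <;> subst h <;>
        simp only [PiLp.add_apply, PiLp.sub_apply, PiLp.neg_apply,
          EuclideanSpace.single_apply] <;> split_ifs <;> norm_num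
    rcases my_root_coord hr x with h1 | h1 | h1 <;> rcases h2 with h2 | h2 | h2 <;>
      first | exact h1 | (rw [h1] at h2; norm_num at h2)
  obtain ⟨x, hx⟩ := my_root_nonzero hr
  exact hx (hz x)

lemma my_root_not_short_long (hr : IsBRoot v) {a : Fin m}
    (hs : v = EuclideanSpace.single a 1 ∨ v = -EuclideanSpace.single a 1)
    {i j : Fin m} (h : HasBDPair v i j) : False := by
  by_cases hij : i = j
  · exact my_root_not_pair_diag hr (hij ▸ h)
  · obtain ⟨hi, hj, -⟩ := my_pair_coord hij h
    obtain ⟨-, hz⟩ := my_short_coord hs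
    have h1 : i = a := by by_contra hc; exact hi (hz i hc)
    have h2 : j = a := by by_contra hc; exact hj (hz j hc)
    exact hij (h1.trans h2.symm)

lemma my_pair_unique {i j a b : Fin m} (hij : i ≠ j) (hab : a ≠ b)
    (h1 : HasBDPair v i j) (h2 : HasBDPair v a b) : s(i, j) = s(a, b) := by
  obtain ⟨hi, hj, -⟩ := my_pair_coord hij h1
  obtain ⟨-, -, hz⟩ := my_pair_coord hab h2
  have hi' : i = a ∨ i = b := by
    by_contra hc; push_neg at hc; exact hi (hz i hc.1 hc.2)
  have hj' : j = a ∨ j = b := by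
    by_contra hc; push_neg at hc; exact hj (hz j hc.1 hc.2)
  rw [Sym2.eq_iff]
  rcases hi' with rfl | rfl <;> rcases hj' with rfl | rfl <;> tauto

lemma my_inner_ne_zero_common {u w : EuclideanSpace ℝ (Fin m)} (h : ⟪u, w⟫ ≠ 0) :
    ∃ x, u x ≠ 0 ∧ w x ≠ 0 := by
  by_contra hc
  push_neg at hc
  apply h
  rw [PiLp.inner_apply]
  refine Finset.sum_eq_zero fun x _ => ?_
  by_cases hu : u x = 0
  · simp [hu]
  · simp [hc x hu]

end RootLemmas

section MainAux
variable {n : ℕ} {f : Fin n → EuclideanSpace ℝ (Fin n)}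

lemma my_vertex_cover (hli : LinearIndependent ℝ f) (a : Fin n) : ∃ k, f k a ≠ 0 := by
  by_contra hc
  push_neg at hc
  haveI : Nonempty (Fin n) := ⟨a⟩
  have hsp : Submodule.span ℝ (Set.range f) = ⊤ :=
    hli.span_eq_top_of_card_eq_finrank (by simp)
  let U : Submodule ℝ (EuclideanSpace ℝ (Fin n)) :=
    { carrier := {v | v a = 0}
      add_mem' := fun {x y} hx hy => by
        simp only [Set.mem_setOf_eq] at *
        rw [PiLp.add_apply, hx, hy, add_zero]
      zero_mem' := by simp only [Set.mem_setOf_eq]; rfl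
      smul_mem' := fun c x hx => by
        simp only [Set.mem_setOf_eq] at *
        rw [PiLp.smul_apply, hx, smul_zero] }
  have hle : Submodule.span ℝ (Set.range f) ≤ U :=
    Submodule.span_le.2 (by rintro v ⟨k, rfl⟩; exact hc k)
  rw [hsp] at hle
  have h1 : (EuclideanSpace.single a (1:ℝ)) a = 0 := hle Submodule.mem_top
  simp [EuclideanSpace.single_apply] at h1

lemma my_supp_reach (hroot : ∀ k, IsBRoot (f k)) (k : Fin n) {a b : Fin n}
    (ha : f k a ≠ 0) (hb : f k b ≠ 0) : (pairGraph f).Reachable a b := by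
  rcases hroot k with ⟨i, h⟩ | ⟨i, j, hij, h⟩
  · obtain ⟨-, hz⟩ := my_short_coord h
    have h1 : a = i := by by_contra hc; exact ha (hz a hc)
    have h2 : b = i := by by_contra hc; exact hb (hz b hc)
    rw [h1, h2]
  · have hp : HasBDPair (f k) i j := by
      rcases h with h | h | h
      · exact Or.inl h
      · exact Or.inr (Or.inl h)
      · exact Or.inr (Or.inr (Or.inr h))
    obtain ⟨-, -, hz⟩ := my_pair_coord hij hp
    have hadj : (pairGraph f).Adj i j := ⟨hij, k, hp⟩
    have h1 : a = i ∨ a = j := by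
      by_contra hc; push_neg at hc; exact ha (hz a hc.1 hc.2)
    have h2 : b = i ∨ b = j := by
      by_contra hc; push_neg at hc; exact hb (hz b hc.1 hc.2)
    rcases h1 with rfl | rfl <;> rcases h2 with h2 | h2 <;> rw [h2]
    · exact hadj.reachable
    · exact hadj.symm.reachable

lemma my_pair_connected (hli : LinearIndependent ℝ f) (hroot : ∀ k, IsBRoot (f k))
    (hindec : (gramGraph f).Connected) : (pairGraph f).Connected := by
  haveI : Nonempty (Fin n) := hindec.nonempty
  refine SimpleGraph.Connected.mk ?_
  intro a b
  obtain ⟨k, hk⟩ := my_vertex_cover hli a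
  obtain ⟨l, hl⟩ := my_vertex_cover hli b
  have key : ∀ {k l : Fin n}, (gramGraph f).Walk k l →
      ∀ {a b : Fin n}, f k a ≠ 0 → f l b ≠ 0 → (pairGraph f).Reachable a b := by
    intro k l p
    induction p with
    | nil => intro a b ha hb; exact my_supp_reach hroot _ ha hb
    | @cons k c l h p ih =>
      intro a b ha hb
      obtain ⟨x, hx1, hx2⟩ := my_inner_ne_zero_common h.2
      exact (my_supp_reach hroot k ha hx1).trans (ih hx2 hb)
  exact key ((hindec k l).some) hk hl

end MainAux

/-- Every family generating `Bₙ` corresponds to a tree with `n` vertices exactly one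
of which is marked: in an indecomposable linearly independent system of `n` roots of
`Bₙ` containing a root `±eᵢ`, exactly one member is of the form `±eᵢ`, the remaining
`n - 1` members are of the form `±eᵢ ± eⱼ` with pairwise distinct unordered pairs
`{i, j}`, and these pairs are the edges of a tree on `Fin n`. -/
theorem Bn_family_is_marked_tree {n : ℕ}
    (f : Fin n → EuclideanSpace ℝ (Fin n))
    (hli : LinearIndependent ℝ f)
    (hroot : ∀ k, IsBRoot (f k))
    (hindec : (gramGraph f).Connected)
    (hshort : ∃ k i, f k = EuclideanSpace.single i 1 ∨
      f k = -EuclideanSpace.single i 1) :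
    (∃! k, ∃ i, f k = EuclideanSpace.single i 1 ∨
      f k = -EuclideanSpace.single i 1) ∧
    (∀ k, (¬ ∃ i, f k = EuclideanSpace.single i 1 ∨
        f k = -EuclideanSpace.single i 1) →
      ∃ i j, i ≠ j ∧ HasBDPair (f k) i j) ∧
    (∀ k l i j, k ≠ l → HasBDPair (f k) i j → ¬ HasBDPair (f l) i j) ∧
    (pairGraph f).IsTree := by
  classical
  let S : Finset (Fin n) := Finset.univ.filter
    (fun k => ∃ i, f k = EuclideanSpace.single i 1 ∨ f k = -EuclideanSpace.single i 1)
  let L : Finset (Fin n) := Finset.univ.filter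
    (fun k => ¬ ∃ i, f k = EuclideanSpace.single i 1 ∨ f k = -EuclideanSpace.single i 1)
  have hSL : S.card + L.card = n := by
    rw [Finset.card_filter_add_card_filter_not, Finset.card_univ, Fintype.card_fin]
  have hS1 : 1 ≤ S.card := by
    obtain ⟨k, i, h⟩ := hshort
    exact Finset.card_pos.2 ⟨k, Finset.mem_filter.2 ⟨Finset.mem_univ _, i, h⟩⟩
  have hnotshort : ∀ k {i j : Fin n}, HasBDPair (f k) i j →
      ¬ ∃ a, f k = EuclideanSpace.single a 1 ∨ f k = -EuclideanSpace.single a 1 := by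
    rintro k i j h ⟨a, ha⟩
    exact my_root_not_short_long (hroot k) ha h
  let E : Fin n → Sym2 (Fin n) := fun k =>
    if h : ∃ p : Fin n × Fin n, p.1 ≠ p.2 ∧ HasBDPair (f k) p.1 p.2
    then s(h.choose.1, h.choose.2) else s(k, k)
  have hE : ∀ k (i j : Fin n), i ≠ j → HasBDPair (f k) i j → E k = s(i, j) := by
    intro k i j hij h
    have hex : ∃ p : Fin n × Fin n, p.1 ≠ p.2 ∧ HasBDPair (f k) p.1 p.2 := ⟨(i, j), hij, h⟩
    show dite _ _ _ = _
    rw [dif_pos hex]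
    exact my_pair_unique hex.choose_spec.1 hij hex.choose_spec.2 h
  haveI instE : Fintype (pairGraph f).edgeSet := Set.Finite.fintype (Set.toFinite _)
  have hEdge : (pairGraph f).edgeFinset = L.image E := by
    ext e
    induction e using Sym2.ind with
    | _ a b =>
      rw [SimpleGraph.mem_edgeFinset, SimpleGraph.mem_edgeSet]
      constructor
      · rintro ⟨hab, k, hk⟩
        exact Finset.mem_image.2 ⟨k, Finset.mem_filter.2 ⟨Finset.mem_univ _, hnotshort k hk⟩,
          hE k a b hab hk⟩
      · intro hmem
        obtain ⟨k, hkL, hEk⟩ := Finset.mem_image.1 hmem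
        obtain ⟨i, j, hij, h⟩ := my_root_long (hroot k) (Finset.mem_filter.1 hkL).2
        have heq : s(i, j) = s(a, b) := (hE k i j hij h) ▸ hEk
        rw [Sym2.eq_iff] at heq
        rcases heq with ⟨rfl, rfl⟩ | ⟨rfl, rfl⟩
        · exact ⟨hij, k, h⟩
        · exact ⟨hij.symm, k, h.swap⟩
  have hcard_le : (pairGraph f).edgeFinset.card ≤ L.card := by
    rw [hEdge]; exact Finset.card_image_le
  have hconn := my_pair_connected hli hroot hindec
  have hge := my_connected_card_vert_le hconn
  rw [Fintype.card_fin] at hge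
  have hS : S.card = 1 := by omega
  have hEcard : (L.image E).card = L.card := by
    rw [← hEdge]; omega
  have hinj : Set.InjOn E ↑L := Finset.card_image_iff.1 hEcard
  refine ⟨?_, fun k hk => my_root_long (hroot k) hk, ?_, ?_⟩
  · obtain ⟨k0, hk0⟩ := Finset.card_eq_one.1 hS
    have hmem : k0 ∈ S := hk0 ▸ Finset.mem_singleton_self k0
    refine ⟨k0, (Finset.mem_filter.1 hmem).2, fun y hy => ?_⟩
    have : y ∈ S := Finset.mem_filter.2 ⟨Finset.mem_univ _, hy⟩
    rw [hk0, Finset.mem_singleton] at this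
    exact this
  · intro k l i j hkl h1 h2
    by_cases hij : i = j
    · exact my_root_not_pair_diag (hroot k) (hij ▸ h1)
    · have hkL : k ∈ (L : Set (Fin n)) :=
        Finset.mem_coe.2 (Finset.mem_filter.2 ⟨Finset.mem_univ _, hnotshort k h1⟩)
      have hlL : l ∈ (L : Set (Fin n)) :=
        Finset.mem_coe.2 (Finset.mem_filter.2 ⟨Finset.mem_univ _, hnotshort l h2⟩)
      exact hkl (hinj hkL hlL ((hE k i j hij h1).trans (hE l i j hij h2).symm))
  · refine ⟨hconn, ?_⟩
    apply my_acyclic_of_card hconn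
    rw [Fintype.card_fin]
    omega
end
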